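/- arXiv:math/0503442 — 4 statements merged into one kernel-verified Lean document; each statement's English description precedes it below -/
import Mathlib

section
/- Let A be an m×n real matrix with singular values σ₁ ≥ σ₂ ≥ …, let à be a d×n matrix, and let P_k be the orthogonal projection onto the span of the top k left singular vectors of Ãᵀ (equivalently, onto the top k right singular vectors of Ã, viewed as a projection on ℝⁿ). Then ‖A − A P_k‖₂² ≤ σ_{k+1}(A)² + 2‖AᵀA − ÃᵀÃ‖₂. -/
open scoped Classical
noncomputable section

open scoped RealInnerProductSpace

/-- Spectral (ℓ₂→ℓ₂ operator) norm of a real matrix. -/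
def spec {m n : ℕ} (A : Matrix (Fin m) (Fin n) ℝ) : ℝ :=
  ‖LinearMap.toContinuousLinearMap (Matrix.toEuclideanLin A)‖

/-- k-th largest value (0-indexed) of a finite family, 0 beyond range. -/
def kthVal {n : ℕ} (f : Fin n → ℝ) (k : ℕ) : ℝ :=
  ((List.ofFn f).insertionSort (fun a b => b ≤ a)).getD k 0

/-- (k+1)-st largest singular value (0-indexed k): square root of the
(k+1)-st largest eigenvalue of AᵀA. -/
def singVal {m n : ℕ} (A : Matrix (Fin m) (Fin n) ℝ) (k : ℕ) : ℝ :=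
  Real.sqrt (kthVal (Matrix.isHermitian_conjTranspose_mul_self A).eigenvalues k)

section helpers

lemma spec_nonneg {m n : ℕ} (A : Matrix (Fin m) (Fin n) ℝ) : 0 ≤ spec A := norm_nonneg _

lemma norm_apply_le {m n : ℕ} (A : Matrix (Fin m) (Fin n) ℝ) (x : EuclideanSpace ℝ (Fin n)) :
    ‖Matrix.toEuclideanLin A x‖ ≤ spec A * ‖x‖ := by
  simpa [spec] using (LinearMap.toContinuousLinearMap (Matrix.toEuclideanLin A)).le_opNorm x

lemma spec_le_bound {m n : ℕ} (A : Matrix (Fin m) (Fin n) ℝ) (C : ℝ) (hC : 0 ≤ C)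
    (h : ∀ x : EuclideanSpace ℝ (Fin n), ‖Matrix.toEuclideanLin A x‖ ≤ C * ‖x‖) :
    spec A ≤ C := by
  apply ContinuousLinearMap.opNorm_le_bound _ hC
  intro x; simpa using h x

lemma abs_quad_le_spec {n : ℕ} (M : Matrix (Fin n) (Fin n) ℝ) (x : EuclideanSpace ℝ (Fin n)) :
    |⟪x, Matrix.toEuclideanLin M x⟫| ≤ spec M * ‖x‖^2 := by
  calc |⟪x, Matrix.toEuclideanLin M x⟫| ≤ ‖x‖ * ‖Matrix.toEuclideanLin M x‖ :=
        abs_real_inner_le_norm _ _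
    _ ≤ ‖x‖ * (spec M * ‖x‖) := mul_le_mul_of_nonneg_left (norm_apply_le M x) (norm_nonneg _)
    _ = spec M * ‖x‖^2 := by ring

lemma quad_le_spec {n : ℕ} (M : Matrix (Fin n) (Fin n) ℝ) (x : EuclideanSpace ℝ (Fin n)) :
    ⟪x, Matrix.toEuclideanLin M x⟫ ≤ spec M * ‖x‖^2 :=
  (le_abs_self _).trans (abs_quad_le_spec M x)

lemma neg_quad_le_spec {n : ℕ} (M : Matrix (Fin n) (Fin n) ℝ) (x : EuclideanSpace ℝ (Fin n)) :
    -⟪x, Matrix.toEuclideanLin M x⟫ ≤ spec M * ‖x‖^2 :=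
  (neg_le_abs _).trans (abs_quad_le_spec M x)

lemma euc_lin_eigen {n : ℕ} {M : Matrix (Fin n) (Fin n) ℝ} (hM : M.IsHermitian) (j : Fin n) :
    Matrix.toEuclideanLin M (hM.eigenvectorBasis j) = hM.eigenvalues j • hM.eigenvectorBasis j := by
  ext i
  have := congrFun (hM.mulVec_eigenvectorBasis j) i
  simpa [Matrix.toEuclideanLin_apply] using this

lemma quad_repr {n : ℕ} {M : Matrix (Fin n) (Fin n) ℝ} (hM : M.IsHermitian)
    (z : EuclideanSpace ℝ (Fin n)) :
    ⟪z, Matrix.toEuclideanLin M z⟫ =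
      ∑ j, hM.eigenvalues j * (hM.eigenvectorBasis.repr z j)^2 := by
  conv_lhs => rw [← hM.eigenvectorBasis.sum_repr z]
  rw [map_sum]
  simp only [map_smul, euc_lin_eigen hM]
  rw [inner_sum]
  congr 1; ext j
  rw [smul_smul, real_inner_smul_right, real_inner_comm, ← OrthonormalBasis.repr_apply_apply,
    hM.eigenvectorBasis.sum_repr z]
  ring

lemma norm_sq_repr {n : ℕ} (b : OrthonormalBasis (Fin n) ℝ (EuclideanSpace ℝ (Fin n)))
    (z : EuclideanSpace ℝ (Fin n)) : ‖z‖^2 = ∑ j, (b.repr z j)^2 := by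
  have h1 : ‖z‖ = ‖b.repr z‖ := (b.repr.norm_map z).symm
  rw [h1, EuclideanSpace.norm_eq, Real.sq_sqrt (by positivity)]
  simp [sq_abs]

open Matrix in
lemma inner_eq_dot {m : ℕ} (x y : EuclideanSpace ℝ (Fin m)) :
    ⟪x, y⟫ = (WithLp.equiv 2 _ x) ⬝ᵥ (WithLp.equiv 2 _ y) := by
  simp [PiLp.inner_apply, dotProduct, mul_comm]

open Matrix in
lemma dot_conj {m n : ℕ} (A : Matrix (Fin m) (Fin n) ℝ) (v : Fin n → ℝ) :
    v ⬝ᵥ ((A.conjTranspose * A) *ᵥ v) = (A *ᵥ v) ⬝ᵥ (A *ᵥ v) := by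
  rw [← Matrix.mulVec_mulVec, Matrix.dotProduct_mulVec, Matrix.vecMul_conjTranspose]
  simp

lemma norm_sq_eq_quad {m n : ℕ} (A : Matrix (Fin m) (Fin n) ℝ) (x : EuclideanSpace ℝ (Fin n)) :
    ‖Matrix.toEuclideanLin A x‖^2 = ⟪x, Matrix.toEuclideanLin (A.conjTranspose * A) x⟫ := by
  rw [← real_inner_self_eq_norm_sq, inner_eq_dot, inner_eq_dot]
  simp only [WithLp.equiv_apply, Matrix.ofLp_toEuclideanLin_apply]
  rw [dot_conj]

lemma quad_sub_split {n : ℕ} (M N : Matrix (Fin n) (Fin n) ℝ) (z : EuclideanSpace ℝ (Fin n)) :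
    ⟪z, Matrix.toEuclideanLin (M - N) z⟫ =
      ⟪z, Matrix.toEuclideanLin M z⟫ - ⟪z, Matrix.toEuclideanLin N z⟫ := by
  have h : Matrix.toEuclideanLin (M - N) = Matrix.toEuclideanLin M - Matrix.toEuclideanLin N :=
    map_sub _ _ _
  rw [h, LinearMap.sub_apply, inner_sub_right]

lemma lin_sub_mul {m n : ℕ} (A : Matrix (Fin m) (Fin n) ℝ) (P : Matrix (Fin n) (Fin n) ℝ)
    (x : EuclideanSpace ℝ (Fin n)) :
    Matrix.toEuclideanLin (A - A * P) x =
      Matrix.toEuclideanLin A (x - Matrix.toEuclideanLin P x) := by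
  rw [map_sub, map_sub, LinearMap.sub_apply]
  congr 1
  rw [Matrix.toEuclideanLin_eq_toLin, Matrix.toLin_mul _ (PiLp.basisFun 2 ℝ (Fin n)) _]
  rfl

lemma card_filter_eq_countP {n : ℕ} (f : Fin n → ℝ) (p : ℝ → Prop) :
    (Finset.univ.filter fun j => p (f j)).card = (List.ofFn f).countP (fun a => decide (p a)) := by
  rw [List.ofFn_eq_map, List.countP_map, List.countP_eq_length_filter, Fin.univ_def]
  simp [Finset.filter, Finset.card, Multiset.filter_coe, Function.comp]
  rfl

lemma kthVal_nonneg {n k : ℕ} {f : Fin n → ℝ} (hf : ∀ j, 0 ≤ f j) : 0 ≤ kthVal f k := by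
  unfold kthVal
  set l := (List.ofFn f).insertionSort (fun a b => b ≤ a) with hl
  rcases lt_or_ge k l.length with h|h
  · rw [List.getD_eq_getElem _ _ h]
    have : l[k] ∈ l := List.getElem_mem _
    rw [List.mem_insertionSort] at this
    obtain ⟨j, hj⟩ := List.mem_ofFn.1 this
    exact hj ▸ hf j
  · rw [List.getD_eq_default _ _ h]

lemma kthVal_top {n k : ℕ} (f : Fin n → ℝ) (hk : k ≤ n) :
    ∃ T : Finset (Fin n), T.card = k ∧ ∀ j ∉ T, f j ≤ kthVal f k := by
  set l := (List.ofFn f).insertionSort (fun a b => b ≤ a) with hl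
  have hlen : l.length = n := by rw [hl, List.length_insertionSort, List.length_ofFn]
  rcases eq_or_lt_of_le hk with rfl|hkn
  · refine ⟨Finset.univ, by simp, fun j hj => absurd (Finset.mem_univ j) hj⟩
  · have hkl : k < l.length := hlen ▸ hkn
    have ht : kthVal f k = l[k] := List.getD_eq_getElem _ _ hkl
    set t := kthVal f k with htdef
    have hsorted : l.Pairwise (fun a b => b ≤ a) := List.pairwise_insertionSort _ _
    have hdrop : ∀ a ∈ l.drop k, a ≤ t := by
      intro a ha
      have hsd : (l.drop k).Pairwise (fun a b => b ≤ a) :=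
        hsorted.sublist (List.drop_sublist k l)
      rw [List.drop_eq_getElem_cons hkl] at ha hsd
      rcases List.mem_cons.1 ha with rfl|ha
      · exact ht.ge
      · exact ht ▸ List.rel_of_pairwise_cons hsd ha
    have hcount : (Finset.univ.filter (fun j => t < f j)).card ≤ k := by
      rw [card_filter_eq_countP]
      have hpc : (List.ofFn f).countP (fun a => decide (t < a)) =
          l.countP (fun a => decide (t < a)) :=
        ((List.perm_insertionSort _ _).countP_eq _).symm
      rw [hpc, ← List.take_append_drop k l, List.countP_append]
      have h1 : (l.take k).countP (fun a => decide (t < a)) ≤ k := by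
        calc (l.take k).countP (fun a => decide (t < a)) ≤ (l.take k).length :=
              List.countP_le_length
          _ ≤ k := by rw [List.length_take]; exact min_le_left _ _
      have h2 : (l.drop k).countP (fun a => decide (t < a)) = 0 := by
        rw [List.countP_eq_zero]
        intro a ha
        simpa using not_lt.2 (hdrop a ha)
      omega
    obtain ⟨T, hsub, hcard⟩ := Finset.exists_superset_card_eq hcount
      (by simpa using hkn.le)
    refine ⟨T, hcard, fun j hj => ?_⟩
    by_contra hc
    exact hj (hsub (Finset.mem_filter.2 ⟨Finset.mem_univ j, not_le.1 hc⟩))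

open Matrix in
lemma lin_vecMulVec {n : ℕ} (u x : EuclideanSpace ℝ (Fin n)) :
    Matrix.toEuclideanLin (Matrix.vecMulVec (fun a => u a) (fun a => u a)) x = ⟪u, x⟫ • u := by
  ext a
  simp only [Matrix.toEuclideanLin_apply, PiLp.smul_apply, smul_eq_mul, PiLp.inner_apply,
    RCLike.inner_apply, conj_trivial]
  show (Matrix.vecMulVec (fun a => u a) (fun a => u a) *ᵥ (WithLp.equiv 2 _ x)) a = _
  simp only [Matrix.mulVec, dotProduct, Matrix.vecMulVec_apply]
  show ∑ j : Fin n, u a * u j * x j = (∑ j : Fin n, x j * u j) * u a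
  rw [Finset.sum_mul]
  exact Finset.sum_congr rfl fun j _ => by ring

lemma repr_sub_proj {n k : ℕ} (b : OrthonormalBasis (Fin n) ℝ (EuclideanSpace ℝ (Fin n)))
    (e : Fin k → Fin n) (he : Function.Injective e) (x : EuclideanSpace ℝ (Fin n)) (j : Fin n) :
    b.repr (x - ∑ i : Fin k, ⟪b (e i), x⟫ • b (e i)) j
      = if j ∈ Set.range e then 0 else b.repr x j := by
  rw [OrthonormalBasis.repr_apply_apply, inner_sub_right, inner_sum]
  simp only [real_inner_smul_right]
  have hib : ∀ i : Fin k, ⟪b j, b (e i)⟫ = if j = e i then (1:ℝ) else 0 := fun i => by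
    have := orthonormal_iff_ite.1 b.orthonormal j (e i)
    simpa using this
  by_cases hjr : j ∈ Set.range e
  · obtain ⟨i0, rfl⟩ := hjr
    rw [if_pos ⟨i0, rfl⟩]
    have hsum : ∑ i, ⟪b (e i), x⟫ * ⟪b (e i0), b (e i)⟫ = ⟪b (e i0), x⟫ := by
      rw [Finset.sum_eq_single i0]
      · rw [hib i0, if_pos rfl, mul_one]
      · intro i _ hne
        rw [hib i, if_neg (fun hh => hne (he hh).symm), mul_zero]
      · intro h; exact absurd (Finset.mem_univ i0) h
    rw [hsum, sub_self]
  · rw [if_neg hjr]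
    have hsum : ∑ i, ⟪b (e i), x⟫ * ⟪b j, b (e i)⟫ = 0 :=
      Finset.sum_eq_zero fun i _ => by
        rw [hib i, if_neg (fun h => hjr ⟨i, h.symm⟩), mul_zero]
    rw [hsum, sub_zero, OrthonormalBasis.repr_apply_apply]

end helpers

set_option maxHeartbeats 2000000 in
/-- Drineas–Kannan lemma: if `P` is the orthogonal projection onto the span of
the top `k` right singular vectors of `Ã` (i.e. eigenvectors of `ÃᵀÃ`
corresponding to its `k` largest eigenvalues, selected by the injection `e`),
then `‖A − A P‖₂² ≤ σ_{k+1}(A)² + 2‖AᵀA − ÃᵀÃ‖₂`. -/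
theorem low_rank_comparison {m n d k : ℕ}
    (A : Matrix (Fin m) (Fin n) ℝ) (At : Matrix (Fin d) (Fin n) ℝ)
    (hB : (At.conjTranspose * At).IsHermitian)
    (e : Fin k → Fin n) (he : Function.Injective e)
    (htop : ∀ (i : Fin k) (j : Fin n), j ∉ Set.range e →
      hB.eigenvalues j ≤ hB.eigenvalues (e i))
    (P : Matrix (Fin n) (Fin n) ℝ)
    (hP : P = ∑ i : Fin k,
      Matrix.vecMulVec (fun a => hB.eigenvectorBasis (e i) a)
        (fun a => hB.eigenvectorBasis (e i) a)) :
    spec (A - A * P) ^ 2 ≤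
      singVal A k ^ 2 + 2 * spec (A.conjTranspose * A - At.conjTranspose * At) := by
  classical
  have hA : (A.conjTranspose * A).IsHermitian := Matrix.isHermitian_conjTranspose_mul_self A
  set E := A.conjTranspose * A - At.conjTranspose * At with hE
  set t := kthVal hA.eigenvalues k with htdef
  have hk : k ≤ n := by simpa using Fintype.card_le_of_injective e he
  have hν0 : ∀ j, 0 ≤ hA.eigenvalues j := fun j =>
    Matrix.eigenvalues_conjTranspose_mul_self_nonneg A j
  have hμ0 : ∀ j, 0 ≤ hB.eigenvalues j := fun j =>
    (Matrix.posSemidef_conjTranspose_mul_self At).eigenvalues_nonneg j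
  have ht0 : 0 ≤ t := kthVal_nonneg hν0
  have hsing : singVal A k ^ 2 = t := Real.sq_sqrt ht0
  obtain ⟨T, hTcard, hTtop⟩ := kthVal_top hA.eigenvalues hk
  -- step 1: the "Weyl" bound on the largest excluded eigenvalue of B
  obtain ⟨c, hc0, hcle, hcbound⟩ :
      ∃ c : ℝ, 0 ≤ c ∧ c ≤ t + spec E ∧ ∀ j, j ∉ Set.range e → hB.eigenvalues j ≤ c := by
    rcases eq_or_lt_of_le hk with rfl|hkn
    · refine ⟨t + spec E, add_nonneg ht0 (spec_nonneg _), le_rfl, fun j hj => absurd ?_ hj⟩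
      have hbij : Function.Bijective e :=
        (Fintype.bijective_iff_injective_and_card e).2 ⟨he, by simp⟩
      exact hbij.2 j
    · have hSne : (Finset.univ.filter (fun j => j ∉ Set.range e)).Nonempty := by
        by_contra h
        rw [Finset.not_nonempty_iff_eq_empty, Finset.filter_eq_empty_iff] at h
        have hsub : (Finset.univ : Finset (Fin n)) ⊆ Finset.image e Finset.univ := by
          intro j _
          obtain ⟨i, hi⟩ := not_not.1 (h (Finset.mem_univ j))
          exact Finset.mem_image.2 ⟨i, Finset.mem_univ i, hi⟩
        have := Finset.card_le_card hsub
        rw [Finset.card_univ, Fintype.card_fin] at this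
        have h2 := Finset.card_image_le (f := e) (s := Finset.univ)
        rw [Finset.card_univ, Fintype.card_fin] at h2
        omega
      obtain ⟨js, hjsmem, hjsmax⟩ := Finset.exists_max_image _ hB.eigenvalues hSne
      have hjs : js ∉ Set.range e := (Finset.mem_filter.1 hjsmem).2
      refine ⟨hB.eigenvalues js, hμ0 js, ?_,
        fun j hj => hjsmax j (Finset.mem_filter.2 ⟨Finset.mem_univ j, hj⟩)⟩
      -- construct z in the intersection using a dimension count
      set b := hB.eigenvectorBasis with hb
      set w := hA.eigenvectorBasis with hw
      set S1 : Finset (Fin n) := insert js (Finset.image e Finset.univ) with hS1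
      have hjs_not : js ∉ Finset.image e Finset.univ := by
        intro hmem
        obtain ⟨i, _, hi⟩ := Finset.mem_image.1 hmem
        exact hjs ⟨i, hi⟩
      have hS1card : S1.card = k + 1 := by
        rw [hS1, Finset.card_insert_of_notMem hjs_not,
          Finset.card_image_of_injective _ he, Finset.card_univ, Fintype.card_fin]
      set L : EuclideanSpace ℝ (Fin n) →ₗ[ℝ] ((↥(S1ᶜ) → ℝ) × (↥T → ℝ)) :=
        LinearMap.prod
          (LinearMap.pi fun j : ↥(S1ᶜ) => (innerSL ℝ (b j.1)).toLinearMap)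
          (LinearMap.pi fun l : ↥T => (innerSL ℝ (w l.1)).toLinearMap) with hL
      have hker : LinearMap.ker L ≠ ⊥ := by
        apply LinearMap.ker_ne_bot_of_finrank_lt
        rw [Module.finrank_prod, Module.finrank_fintype_fun_eq_card,
          Module.finrank_fintype_fun_eq_card, finrank_euclideanSpace_fin,
          Fintype.card_coe, Fintype.card_coe, Finset.card_compl, hS1card, hTcard,
          Fintype.card_fin]
        omega
      obtain ⟨z, hzker, hz0⟩ := (Submodule.ne_bot_iff _).1 hker
      have hLz := LinearMap.mem_ker.1 hzker
      rw [hL] at hLz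
      have hz1 : ∀ j : Fin n, j ∉ S1 → ⟪b j, z⟫ = 0 := by
        intro j hj
        have := congrArg Prod.fst hLz
        simpa using congrFun this ⟨j, Finset.mem_compl.2 hj⟩
      have hz2 : ∀ l : Fin n, l ∈ T → ⟪w l, z⟫ = 0 := by
        intro l hl
        have := congrArg Prod.snd hLz
        simpa using congrFun this ⟨l, hl⟩
      -- quadratic form inequalities
      have hq1 : hB.eigenvalues js * ‖z‖^2 ≤
          ⟪z, Matrix.toEuclideanLin (At.conjTranspose * At) z⟫ := by
        rw [quad_repr hB, norm_sq_repr hB.eigenvectorBasis z, Finset.mul_sum]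
        apply Finset.sum_le_sum
        intro j _
        by_cases hjS : j ∈ S1
        · have hjge : hB.eigenvalues js ≤ hB.eigenvalues j := by
            rcases Finset.mem_insert.1 hjS with rfl|hjI
            · exact le_rfl
            · obtain ⟨i, _, rfl⟩ := Finset.mem_image.1 hjI
              exact htop i js hjs
          exact mul_le_mul_of_nonneg_right hjge (sq_nonneg _)
        · have h0 : hB.eigenvectorBasis.repr z j = 0 := by
            rw [OrthonormalBasis.repr_apply_apply]
            exact hz1 j hjS
          rw [h0]
          simp
      have hq2 : ⟪z, Matrix.toEuclideanLin (A.conjTranspose * A) z⟫ ≤ t * ‖z‖^2 := by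
        rw [quad_repr hA, norm_sq_repr hA.eigenvectorBasis z, Finset.mul_sum]
        apply Finset.sum_le_sum
        intro l _
        by_cases hlT : l ∈ T
        · have h0 : hA.eigenvectorBasis.repr z l = 0 := by
            rw [OrthonormalBasis.repr_apply_apply]
            exact hz2 l hlT
          rw [h0]
          simp
        · exact mul_le_mul_of_nonneg_right (hTtop l hlT) (sq_nonneg _)
      have hq3 : ⟪z, Matrix.toEuclideanLin E z⟫ =
          ⟪z, Matrix.toEuclideanLin (A.conjTranspose * A) z⟫ -
            ⟪z, Matrix.toEuclideanLin (At.conjTranspose * At) z⟫ := by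
        rw [hE]; exact quad_sub_split _ _ z
      have hq4 : -⟪z, Matrix.toEuclideanLin E z⟫ ≤ spec E * ‖z‖^2 := neg_quad_le_spec E z
      have hzpos : 0 < ‖z‖^2 := pow_pos (norm_pos_iff.2 hz0) 2
      nlinarith [hq1, hq2, hq3, hq4, hzpos]
  -- step 2: pointwise bound
  rw [hsing]
  have hC0 : 0 ≤ t + 2 * spec E :=
    add_nonneg ht0 (mul_nonneg (by norm_num) (spec_nonneg _))
  have key : ∀ x : EuclideanSpace ℝ (Fin n),
      ‖Matrix.toEuclideanLin (A - A * P) x‖ ≤ Real.sqrt (t + 2 * spec E) * ‖x‖ := by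
    intro x
    set y := x - Matrix.toEuclideanLin P x with hy
    have hyx : Matrix.toEuclideanLin (A - A * P) x = Matrix.toEuclideanLin A y :=
      lin_sub_mul A P x
    -- coordinates of y in the eigenbasis of B
    have hPx : Matrix.toEuclideanLin P x =
        ∑ i : Fin k, ⟪hB.eigenvectorBasis (e i), x⟫ • hB.eigenvectorBasis (e i) := by
      rw [hP, map_sum, LinearMap.sum_apply]
      exact Finset.sum_congr rfl fun i _ => lin_vecMulVec _ x
    have hrepr : ∀ j, hB.eigenvectorBasis.repr y j =
        if j ∈ Set.range e then 0 else hB.eigenvectorBasis.repr x j := by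
      intro j
      rw [hy, hPx]
      exact repr_sub_proj hB.eigenvectorBasis e he x j
    have hA2 : ‖Matrix.toEuclideanLin A y‖^2 =
        ⟪y, Matrix.toEuclideanLin (A.conjTranspose * A) y⟫ := norm_sq_eq_quad A y
    have hsplit : ⟪y, Matrix.toEuclideanLin E y⟫ =
        ⟪y, Matrix.toEuclideanLin (A.conjTranspose * A) y⟫ -
          ⟪y, Matrix.toEuclideanLin (At.conjTranspose * At) y⟫ := by
      rw [hE]; exact quad_sub_split _ _ y
    have hBy : ⟪y, Matrix.toEuclideanLin (At.conjTranspose * At) y⟫ ≤ c * ‖y‖^2 := by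
      rw [quad_repr hB, norm_sq_repr hB.eigenvectorBasis y, Finset.mul_sum]
      apply Finset.sum_le_sum
      intro j _
      by_cases hjr : j ∈ Set.range e
      · rw [hrepr j, if_pos hjr]
        simp
      · rw [hrepr j, if_neg hjr]
        exact mul_le_mul_of_nonneg_right (hcbound j hjr) (sq_nonneg _)
    have hEy : ⟪y, Matrix.toEuclideanLin E y⟫ ≤ spec E * ‖y‖^2 := quad_le_spec E y
    have hyx2 : ‖y‖^2 ≤ ‖x‖^2 := by
      rw [norm_sq_repr hB.eigenvectorBasis y, norm_sq_repr hB.eigenvectorBasis x]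
      apply Finset.sum_le_sum
      intro j _
      by_cases hjr : j ∈ Set.range e
      · rw [hrepr j, if_pos hjr]
        simpa using sq_nonneg (hB.eigenvectorBasis.repr x j)
      · rw [hrepr j, if_neg hjr]
    have hbound : ‖Matrix.toEuclideanLin A y‖^2 ≤ (t + 2 * spec E) * ‖x‖^2 := by
      have hEnn := spec_nonneg (m := n) E
      nlinarith [hA2, hsplit, hBy, hEy, hyx2, sq_nonneg ‖y‖, hcle, hc0, ht0,
        sq_nonneg ‖x‖]
    calc ‖Matrix.toEuclideanLin (A - A * P) x‖
        = Real.sqrt (‖Matrix.toEuclideanLin A y‖^2) := by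
          rw [hyx, Real.sqrt_sq (norm_nonneg _)]
      _ ≤ Real.sqrt ((t + 2 * spec E) * ‖x‖^2) := Real.sqrt_le_sqrt hbound
      _ = Real.sqrt (t + 2 * spec E) * ‖x‖ := by
          rw [Real.sqrt_mul hC0, Real.sqrt_sq (norm_nonneg _)]
  have h5 : spec (A - A * P) ≤ Real.sqrt (t + 2 * spec E) :=
    spec_le_bound _ _ (Real.sqrt_nonneg _) key
  calc spec (A - A * P) ^ 2 ≤ Real.sqrt (t + 2 * spec E) ^ 2 :=
        pow_le_pow_left₀ (spec_nonneg _) h5 2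
    _ = t + 2 * spec E := Real.sq_sqrt hC0
end
end

section
/- Decoupling lemma (Bourgain–Tzafriri): Let ξ₁,…,ξ_n be bounded i.i.d. real random variables and ξ'₁,…,ξ'_n an independent copy of the sequence. Then for any vectors x_{ij} in a Banach space with x_{ii} = 0 for all i, E‖∑_{i,j} ξ_i ξ_j x_{ij}‖ ≤ 20 E‖∑_{i,j} ξ_i ξ'_j x_{ij}‖. -/
open MeasureTheory ProbabilityTheory
noncomputable section

open Finset

namespace BTDec

variable {n : ℕ} {F : Type*} [NormedAddCommGroup F] [NormedSpace ℝ F]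

/-- bilinear sum -/
def bsum (y : Fin n → Fin n → F) (I J : Finset (Fin n)) (u v : Fin n → ℝ) : F :=
  ∑ i ∈ I, ∑ j ∈ J, (u i * v j) • y i j

lemma continuous_bsum {α : Type*} [TopologicalSpace α] (y : Fin n → Fin n → F)
    (I J : Finset (Fin n)) {u v : α → Fin n → ℝ} (hu : Continuous u) (hv : Continuous v) :
    Continuous fun p => bsum y I J (u p) (v p) :=
  continuous_finset_sum _ fun i _ => continuous_finset_sum _ fun j _ =>
    (((continuous_apply i).comp hu).mul ((continuous_apply j).comp hv)).smul continuous_const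

lemma norm_bsum_le (y : Fin n → Fin n → F) (I J : Finset (Fin n)) (u v : Fin n → ℝ)
    (c : ℝ) (hc : 0 ≤ c) (hu : ∀ i, |u i| ≤ c) (hv : ∀ j, |v j| ≤ c) :
    ‖bsum y I J u v‖ ≤ c ^ 2 * ∑ i, ∑ j, ‖y i j‖ := by
  have h1 : ‖bsum y I J u v‖ ≤ ∑ i ∈ I, ∑ j ∈ J, c ^ 2 * ‖y i j‖ := by
    refine (norm_sum_le _ _).trans (Finset.sum_le_sum fun i _ => ?_)
    refine (norm_sum_le _ _).trans (Finset.sum_le_sum fun j _ => ?_)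
    rw [norm_smul, Real.norm_eq_abs, abs_mul, pow_two]
    exact mul_le_mul_of_nonneg_right
      (mul_le_mul (hu i) (hv j) (abs_nonneg _) hc) (norm_nonneg _)
  refine h1.trans ?_
  have h2 : ∑ i ∈ I, ∑ j ∈ J, c ^ 2 * ‖y i j‖ ≤ ∑ i : Fin n, ∑ j : Fin n, c ^ 2 * ‖y i j‖ := by
    refine (Finset.sum_le_sum_of_subset_of_nonneg (Finset.subset_univ I)
      fun i _ _ => by positivity).trans (Finset.sum_le_sum fun i _ => ?_)
    exact Finset.sum_le_sum_of_subset_of_nonneg (Finset.subset_univ J) fun j _ _ => by positivity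
  refine h2.trans (le_of_eq ?_)
  simp_rw [← Finset.mul_sum]

lemma integral_bsum [CompleteSpace F] {α : Type*} [MeasurableSpace α] (μ : Measure α)
    (y : Fin n → Fin n → F) (I J : Finset (Fin n)) (u v : Fin n → α → ℝ)
    (h : ∀ i j, Integrable (fun p => u i p * v j p) μ) :
    ∫ p, bsum y I J (fun i => u i p) (fun j => v j p) ∂μ
      = ∑ i ∈ I, ∑ j ∈ J, (∫ p, u i p * v j p ∂μ) • y i j := by
  unfold bsum
  rw [integral_finset_sum _ fun i _ =>
    integrable_finset_sum _ fun j _ => (h i j).smul_const (y i j)]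
  refine Finset.sum_congr rfl fun i _ => ?_
  rw [integral_finset_sum _ fun j _ => (h i j).smul_const (y i j)]
  exact Finset.sum_congr rfl fun j _ => integral_smul_const _ _

lemma card_filter_pair (hn : 2 ≤ n) (i j : Fin n) (hij : i ≠ j) :
    (Finset.univ.filter fun S : Finset (Fin n) => i ∈ S ∧ j ∉ S).card = 2 ^ (n - 2) := by
  classical
  have hcard : ((Finset.univ.erase i).erase j).card = n - 2 := by
    rw [Finset.card_erase_of_mem (Finset.mem_erase.2 ⟨hij.symm, Finset.mem_univ j⟩),
      Finset.card_erase_of_mem (Finset.mem_univ i), Finset.card_univ, Fintype.card_fin]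
    omega
  rw [show (2:ℕ) ^ (n-2) = ((Finset.univ.erase i).erase j).powerset.card by
    rw [Finset.card_powerset, hcard]]
  refine Finset.card_bij' (fun S _ => S.erase i) (fun T _ => insert i T) ?_ ?_ ?_ ?_
  · intro S hS
    rw [Finset.mem_filter] at hS
    rw [Finset.mem_powerset]
    intro x hx
    rw [Finset.mem_erase] at hx
    exact Finset.mem_erase.2 ⟨fun h => hS.2.2 (h ▸ hx.2), Finset.mem_erase.2 ⟨hx.1, Finset.mem_univ x⟩⟩
  · intro T hT
    rw [Finset.mem_powerset] at hT
    refine Finset.mem_filter.2 ⟨Finset.mem_univ _, Finset.mem_insert_self i T, fun hj => ?_⟩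
    rcases Finset.mem_insert.1 hj with h | h
    · exact hij h.symm
    · exact absurd (hT h) (by simp)
  · intro S hS
    rw [Finset.mem_filter] at hS
    exact Finset.insert_erase hS.2.1
  · intro T hT
    rw [Finset.mem_powerset] at hT
    refine Finset.erase_insert fun hi => ?_
    have := hT hi
    simp at this

lemma sum_bsum_compl (hn : 2 ≤ n) (y : Fin n → Fin n → F) (hy : ∀ i, y i i = 0)
    (u : Fin n → ℝ) :
    ∑ S : Finset (Fin n), bsum y S Sᶜ u u
      = (2 ^ (n - 2) : ℕ) • bsum y Finset.univ Finset.univ u u := by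
  classical
  have hre : ∀ S : Finset (Fin n), bsum y S Sᶜ u u
      = ∑ i, ∑ j, if i ∈ S ∧ j ∉ S then (u i * u j) • y i j else 0 := by
    intro S
    have hinner : ∀ i, (if i ∈ S then ∑ j ∈ Sᶜ, (u i * u j) • y i j else 0)
        = ∑ j, if i ∈ S ∧ j ∉ S then (u i * u j) • y i j else 0 := by
      intro i
      by_cases h : i ∈ S
      · simp only [h, if_true, true_and]
        rw [← Finset.sum_filter]
        congr 1
        ext j; simp [Finset.mem_compl]
      · simp [h]
    have h0 : ∑ i ∈ S, ∑ j ∈ Sᶜ, (u i * u j) • y i j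
        = ∑ i ∈ Finset.univ, if i ∈ S then ∑ j ∈ Sᶜ, (u i * u j) • y i j else 0 := by
      rw [Finset.sum_ite_mem, Finset.univ_inter]
    unfold bsum
    rw [h0]
    exact Finset.sum_congr rfl fun i _ => hinner i
  calc ∑ S : Finset (Fin n), bsum y S Sᶜ u u
      = ∑ S : Finset (Fin n), ∑ i, ∑ j,
          (if i ∈ S ∧ j ∉ S then (u i * u j) • y i j else 0) :=
        Finset.sum_congr rfl fun S _ => hre S
    _ = ∑ i, ∑ j, ∑ S : Finset (Fin n),
          (if i ∈ S ∧ j ∉ S then (u i * u j) • y i j else 0) := by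
        rw [Finset.sum_comm]
        exact Finset.sum_congr rfl fun i _ => Finset.sum_comm
    _ = ∑ i, ∑ j, (2 ^ (n - 2) : ℕ) • ((u i * u j) • y i j) := by
        refine Finset.sum_congr rfl fun i _ => Finset.sum_congr rfl fun j _ => ?_
        rw [← Finset.sum_filter, Finset.sum_const]
        rcases eq_or_ne i j with rfl | hij
        · simp [hy i]
        · rw [card_filter_pair hn i j hij]
    _ = (2 ^ (n - 2) : ℕ) • bsum y Finset.univ Finset.univ u u := by
        unfold bsum
        rw [Finset.smul_sum]
        exact Finset.sum_congr rfl fun i _ => (Finset.smul_sum).symm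

lemma integrable_norm_bsum {α : Type*} [MeasurableSpace α] [TopologicalSpace α]
    [OpensMeasurableSpace α] [SecondCountableTopology α] (μ : Measure α) [IsFiniteMeasure μ]
    (y : Fin n → Fin n → F) (I J : Finset (Fin n)) {u v : α → Fin n → ℝ}
    (hu : Continuous u) (hv : Continuous v)
    (c : ℝ) (hc : 0 ≤ c) (hb : ∀ᵐ p ∂μ, (∀ i, |u p i| ≤ c) ∧ (∀ j, |v p j| ≤ c)) :
    Integrable (fun p => ‖bsum y I J (u p) (v p)‖) μ := by
  refine Integrable.mono' (integrable_const (c ^ 2 * ∑ i, ∑ j, ‖y i j‖))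
    ((continuous_bsum y I J hu hv).norm.aestronglyMeasurable) ?_
  filter_upwards [hb] with p hp
  rw [norm_norm]
  exact norm_bsum_le y I J _ _ c hc hp.1 hp.2

section Meas
variable (ν : Measure ℝ) [IsProbabilityMeasure ν]

lemma measurable_mix (S : Finset (Fin n)) :
    Measurable (fun p : (Fin n → ℝ) × (Fin n → ℝ) => fun i => if i ∈ S then p.1 i else p.2 i) := by
  refine measurable_pi_lambda _ fun i => ?_
  by_cases h : i ∈ S
  · simp only [h, if_true]; exact (measurable_pi_apply i).comp measurable_fst
  · simp only [h, if_false]; exact (measurable_pi_apply i).comp measurable_snd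

lemma continuous_mix (S : Finset (Fin n)) :
    Continuous (fun p : (Fin n → ℝ) × (Fin n → ℝ) => fun i => if i ∈ S then p.1 i else p.2 i) := by
  refine continuous_pi fun i => ?_
  by_cases h : i ∈ S
  · simp only [h, if_true]; exact (continuous_apply i).comp continuous_fst
  · simp only [h, if_false]; exact (continuous_apply i).comp continuous_snd

lemma evalMP (j : Fin n) :
    MeasurePreserving (fun a : Fin n → ℝ => a j) (Measure.pi fun _ : Fin n => ν) ν := by
  refine ⟨measurable_pi_apply j, ?_⟩
  refine Measure.ext fun s hs => ?_
  rw [Measure.map_apply (measurable_pi_apply j) hs]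
  have hpre : (fun a : Fin n → ℝ => a j) ⁻¹' s
      = Set.pi Set.univ (Function.update (fun _ : Fin n => (Set.univ : Set ℝ)) j s) := by
    ext a
    simp only [Set.mem_preimage, Set.mem_pi, Set.mem_univ, forall_true_left]
    constructor
    · intro h i
      rcases eq_or_ne i j with rfl | hi
      · simpa using h
      · simp [Function.update_of_ne hi]
    · intro h
      have := h j
      simpa using this
  rw [hpre, Measure.pi_pi, ← Finset.mul_prod_erase _ _ (Finset.mem_univ j),
    Function.update_self,
    Finset.prod_eq_one fun i hi => by
      rw [Function.update_of_ne (Finset.mem_erase.1 hi).1, measure_univ], mul_one]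

lemma mixMP (S : Finset (Fin n)) :
    MeasurePreserving (fun p : (Fin n → ℝ) × (Fin n → ℝ) => fun i => if i ∈ S then p.1 i else p.2 i)
      ((Measure.pi fun _ : Fin n => ν).prod (Measure.pi fun _ : Fin n => ν))
      (Measure.pi fun _ : Fin n => ν) := by
  refine ⟨measurable_mix S, ?_⟩
  refine (Measure.pi_eq fun s hs => ?_).symm
  rw [Measure.map_apply (measurable_mix S) (MeasurableSet.univ_pi hs)]
  have hpre : ((fun p : (Fin n → ℝ) × (Fin n → ℝ) => fun i => if i ∈ S then p.1 i else p.2 i) ⁻¹'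
        Set.pi Set.univ s)
      = (Set.pi Set.univ fun i => if i ∈ S then s i else Set.univ)
        ×ˢ (Set.pi Set.univ fun i => if i ∈ S then Set.univ else s i) := by
    ext p
    simp only [Set.mem_preimage, Set.mem_pi, Set.mem_univ, forall_true_left, Set.mem_prod]
    constructor
    · intro h
      constructor
      · intro i
        by_cases hi : i ∈ S
        · have := h i; simp only [hi, if_true] at this ⊢; exact this
        · simp [hi]
      · intro i
        by_cases hi : i ∈ S
        · simp [hi]
        · have := h i; simp only [hi, if_false] at this ⊢; exact this
    · rintro ⟨h1, h2⟩ i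
      by_cases hi : i ∈ S
      · have := h1 i; simp only [hi, if_true] at this ⊢; exact this
      · have := h2 i; simp only [hi, if_false] at this ⊢; exact this
  rw [hpre, Measure.prod_prod, Measure.pi_pi, Measure.pi_pi, ← Finset.prod_mul_distrib]
  refine (Finset.prod_congr rfl fun i _ => ?_).symm
  by_cases hi : i ∈ S
  · simp [hi, measure_univ]
  · simp [hi, measure_univ]

end Meas

def cenf (m : ℝ) (a : Fin n → ℝ) : Fin n → ℝ := fun i => a i - m

def mixf (S : Finset (Fin n)) (p : (Fin n → ℝ) × (Fin n → ℝ)) : Fin n → ℝ :=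
  fun i => if i ∈ S then p.1 i else p.2 i

lemma continuous_cenf (m : ℝ) : Continuous (cenf (n := n) m) :=
  continuous_pi fun i => (continuous_apply i).sub continuous_const

lemma continuous_mixf (S : Finset (Fin n)) : Continuous (mixf S) := continuous_mix S

lemma mixfMP (ν : Measure ℝ) [IsProbabilityMeasure ν] (S : Finset (Fin n)) :
    MeasurePreserving (mixf S)
      ((Measure.pi fun _ : Fin n => ν).prod (Measure.pi fun _ : Fin n => ν))
      (Measure.pi fun _ : Fin n => ν) := mixMP ν S

section Core
variable (ν : Measure ℝ) [IsProbabilityMeasure ν] {B : ℝ}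

lemma ae_bound_pi (hB : ∀ᵐ t ∂ν, |t| ≤ B) :
    ∀ᵐ a ∂(Measure.pi fun _ : Fin n => ν), ∀ i, |a i| ≤ B := by
  rw [ae_all_iff]
  intro i
  refine ae_of_ae_map (f := fun a : Fin n → ℝ => a i) (p := fun t : ℝ => |t| ≤ B)
    (measurable_pi_apply i).aemeasurable ?_
  rw [(evalMP ν i).map_eq]
  exact hB

lemma ae_bound_pp (hB : ∀ᵐ t ∂ν, |t| ≤ B) :
    ∀ᵐ p ∂((Measure.pi fun _ : Fin n => ν).prod (Measure.pi fun _ : Fin n => ν)),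
      (∀ i, |p.1 i| ≤ B) ∧ (∀ i, |p.2 i| ≤ B) := by
  have h1 : ∀ᵐ p ∂((Measure.pi fun _ : Fin n => ν).prod (Measure.pi fun _ : Fin n => ν)),
      ∀ i, |p.1 i| ≤ B := by
    refine ae_of_ae_map (p := fun a : Fin n → ℝ => ∀ i, |a i| ≤ B)
      measurable_fst.aemeasurable ?_
    rw [Measure.map_fst_prod]
    simpa [measure_univ] using ae_bound_pi (n := n) ν hB
  have h2 : ∀ᵐ p ∂((Measure.pi fun _ : Fin n => ν).prod (Measure.pi fun _ : Fin n => ν)),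
      ∀ i, |p.2 i| ≤ B := by
    refine ae_of_ae_map (p := fun a : Fin n → ℝ => ∀ i, |a i| ≤ B)
      measurable_snd.aemeasurable ?_
    rw [Measure.map_snd_prod]
    simpa [measure_univ] using ae_bound_pi (n := n) ν hB
  exact h1.and h2

lemma integrable_eval (hB : ∀ᵐ t ∂ν, |t| ≤ B) (j : Fin n) :
    Integrable (fun a : Fin n → ℝ => a j) (Measure.pi fun _ : Fin n => ν) := by
  refine Integrable.mono' (integrable_const B) (measurable_pi_apply j).aestronglyMeasurable ?_
  filter_upwards [ae_bound_pi ν hB] with a ha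
  simpa using ha j

lemma integral_eval (hB : ∀ᵐ t ∂ν, |t| ≤ B) (j : Fin n) :
    ∫ a, a j ∂(Measure.pi fun _ : Fin n => ν) = ∫ t, t ∂ν := by
  have h := integral_map (μ := Measure.pi fun _ : Fin n => ν)
    (φ := fun a : Fin n → ℝ => a j) (f := fun t : ℝ => t)
    (measurable_pi_apply j).aemeasurable
    (by rw [(evalMP ν j).map_eq]; exact measurable_id.aestronglyMeasurable)
  rw [(evalMP ν j).map_eq] at h
  exact h.symm

lemma integral_cen (hB : ∀ᵐ t ∂ν, |t| ≤ B) (j : Fin n) :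
    ∫ a, (a j - ∫ t, t ∂ν) ∂(Measure.pi fun _ : Fin n => ν) = 0 := by
  rw [integral_sub (integrable_eval ν hB j) (integrable_const _), integral_eval ν hB,
    integral_const, probReal_univ, one_smul, sub_self]

end Core

section Ids
variable (ν : Measure ℝ) [IsProbabilityMeasure ν] {B : ℝ} {F : Type*}
  [NormedAddCommGroup F] [NormedSpace ℝ F] [CompleteSpace F]

lemma bsum_decomp (y : Fin n → Fin n → F) (m : ℝ) (a b : Fin n → ℝ) :
    bsum y Finset.univ Finset.univ a b
      = bsum y Finset.univ Finset.univ (cenf m a) (cenf m b)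
        + bsum y Finset.univ Finset.univ a (fun _ => m)
        + bsum y Finset.univ Finset.univ (fun _ => m) b
        - bsum y Finset.univ Finset.univ (fun _ => m) (fun _ => m) := by
  unfold bsum cenf
  simp only [← Finset.sum_add_distrib, ← Finset.sum_sub_distrib]
  refine Finset.sum_congr rfl fun i _ => Finset.sum_congr rfl fun j _ => ?_
  rw [← add_smul, ← add_smul, ← sub_smul]
  congr 1
  ring

lemma bsum_mix_diag (y : Fin n → Fin n → F) (m : ℝ) (S : Finset (Fin n))
    (p : (Fin n → ℝ) × (Fin n → ℝ)) :
    bsum y S Sᶜ (cenf m (mixf S p)) (cenf m (mixf S p))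
      = bsum y S Sᶜ (cenf m p.1) (cenf m p.2) := by
  unfold bsum cenf mixf
  refine Finset.sum_congr rfl fun i hi => Finset.sum_congr rfl fun j hj => ?_
  rw [if_pos hi, if_neg (Finset.mem_compl.1 hj)]

lemma Pid (y : Fin n → Fin n → F) (hB : ∀ᵐ t ∂ν, |t| ≤ B) (a : Fin n → ℝ) :
    ∫ b, bsum y Finset.univ Finset.univ a b ∂(Measure.pi fun _ : Fin n => ν)
      = bsum y Finset.univ Finset.univ a (fun _ => ∫ t, t ∂ν) := by
  refine (integral_bsum (Measure.pi fun _ : Fin n => ν) y Finset.univ Finset.univ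
      (fun i _ => a i) (fun j b => b j)
      (fun i j => (integrable_eval ν hB j).const_mul (a i))).trans ?_
  unfold bsum
  refine Finset.sum_congr rfl fun i _ => Finset.sum_congr rfl fun j _ => ?_
  rw [integral_const_mul, integral_eval ν hB]

lemma Qid (y : Fin n → Fin n → F) (hB : ∀ᵐ t ∂ν, |t| ≤ B) (b : Fin n → ℝ) :
    ∫ a, bsum y Finset.univ Finset.univ a b ∂(Measure.pi fun _ : Fin n => ν)
      = bsum y Finset.univ Finset.univ (fun _ => ∫ t, t ∂ν) b := by
  refine (integral_bsum (Measure.pi fun _ : Fin n => ν) y Finset.univ Finset.univ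
      (fun i a => a i) (fun j _ => b j)
      (fun i j => (integrable_eval ν hB i).mul_const (b j))).trans ?_
  unfold bsum
  refine Finset.sum_congr rfl fun i _ => Finset.sum_congr rfl fun j _ => ?_
  rw [integral_mul_const, integral_eval ν hB]

lemma Kid (y : Fin n → Fin n → F) (hB : ∀ᵐ t ∂ν, |t| ≤ B) :
    ∫ p, bsum y Finset.univ Finset.univ p.1 p.2
        ∂((Measure.pi fun _ : Fin n => ν).prod (Measure.pi fun _ : Fin n => ν))
      = bsum y Finset.univ Finset.univ (fun _ => ∫ t, t ∂ν) (fun _ => ∫ t, t ∂ν) := by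
  have hB0 : 0 ≤ B := by
    obtain ⟨t, ht⟩ := hB.exists
    exact (abs_nonneg t).trans ht
  have hint : ∀ i j : Fin n, Integrable
      (fun p : (Fin n → ℝ) × (Fin n → ℝ) => p.1 i * p.2 j)
      ((Measure.pi fun _ : Fin n => ν).prod (Measure.pi fun _ : Fin n => ν)) := by
    intro i j
    refine Integrable.mono' (integrable_const (B * B))
      (((measurable_pi_apply i).comp measurable_fst).mul
        ((measurable_pi_apply j).comp measurable_snd)).aestronglyMeasurable ?_
    filter_upwards [ae_bound_pp ν hB] with p hp
    rw [Real.norm_eq_abs, abs_mul]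
    exact mul_le_mul (hp.1 i) (hp.2 j) (abs_nonneg _) hB0
  refine (integral_bsum ((Measure.pi fun _ : Fin n => ν).prod (Measure.pi fun _ : Fin n => ν))
      y Finset.univ Finset.univ
      (fun i p => p.1 i) (fun j p => p.2 j) hint).trans ?_
  unfold bsum
  refine Finset.sum_congr rfl fun i _ => Finset.sum_congr rfl fun j _ => ?_
  rw [integral_prod_mul (f := fun a : Fin n → ℝ => a i) (g := fun b : Fin n → ℝ => b j),
    integral_eval ν hB, integral_eval ν hB]

lemma stage1 (y : Fin n → Fin n → F) (hB : ∀ᵐ t ∂ν, |t| ≤ B) (S : Finset (Fin n))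
    (a b : Fin n → ℝ) :
    ∫ c, bsum y Finset.univ Sᶜ (cenf (∫ t, t ∂ν) (mixf S (a, c))) (cenf (∫ t, t ∂ν) b)
        ∂(Measure.pi fun _ : Fin n => ν)
      = bsum y S Sᶜ (cenf (∫ t, t ∂ν) a) (cenf (∫ t, t ∂ν) b) := by
  classical
  have hint : ∀ i j : Fin n, Integrable
      (fun c : Fin n → ℝ => cenf (∫ t, t ∂ν) (mixf S (a, c)) i * cenf (∫ t, t ∂ν) b j)
      (Measure.pi fun _ : Fin n => ν) := by
    intro i j
    by_cases hi : i ∈ S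
    · simpa [cenf, mixf, hi] using
        integrable_const ((a i - ∫ t, t ∂ν) * (b j - ∫ t, t ∂ν))
    · simpa [cenf, mixf, hi] using
        ((integrable_eval ν hB i).sub (integrable_const (∫ t, t ∂ν))).mul_const
          (b j - ∫ t, t ∂ν)
  refine (integral_bsum (Measure.pi fun _ : Fin n => ν) y Finset.univ Sᶜ
      (fun i c => cenf (∫ t, t ∂ν) (mixf S (a, c)) i)
      (fun j _ => cenf (∫ t, t ∂ν) b j) hint).trans ?_
  have hterm : ∀ i : Fin n,
      (∑ j ∈ Sᶜ, (∫ c, cenf (∫ t, t ∂ν) (mixf S (a, c)) i * cenf (∫ t, t ∂ν) b j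
          ∂(Measure.pi fun _ : Fin n => ν)) • y i j)
        = if i ∈ S then
            ∑ j ∈ Sᶜ, (cenf (∫ t, t ∂ν) a i * cenf (∫ t, t ∂ν) b j) • y i j
          else 0 := by
    intro i
    by_cases hi : i ∈ S
    · rw [if_pos hi]
      refine Finset.sum_congr rfl fun j _ => ?_
      congr 1
      simp only [cenf, mixf, hi, if_true]
      rw [integral_const]
      simp [measure_univ]
    · rw [if_neg hi]
      refine Finset.sum_eq_zero fun j _ => ?_
      have h0 : (∫ c, cenf (∫ t, t ∂ν) (mixf S (a, c)) i * cenf (∫ t, t ∂ν) b j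
          ∂(Measure.pi fun _ : Fin n => ν)) = 0 := by
        simp only [cenf, mixf, hi, if_false]
        rw [integral_mul_const, integral_cen ν hB, zero_mul]
      rw [h0, zero_smul]
  rw [Finset.sum_congr rfl fun i _ => hterm i, Finset.sum_ite_mem, Finset.univ_inter]
  rfl

lemma stage2 (y : Fin n → Fin n → F) (hB : ∀ᵐ t ∂ν, |t| ≤ B) (S : Finset (Fin n))
    (a b : Fin n → ℝ) :
    ∫ d, bsum y Finset.univ Finset.univ (cenf (∫ t, t ∂ν) a) (cenf (∫ t, t ∂ν) (mixf S (d, b)))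
        ∂(Measure.pi fun _ : Fin n => ν)
      = bsum y Finset.univ Sᶜ (cenf (∫ t, t ∂ν) a) (cenf (∫ t, t ∂ν) b) := by
  classical
  have hint : ∀ i j : Fin n, Integrable
      (fun d : Fin n → ℝ => cenf (∫ t, t ∂ν) a i * cenf (∫ t, t ∂ν) (mixf S (d, b)) j)
      (Measure.pi fun _ : Fin n => ν) := by
    intro i j
    by_cases hj : j ∈ S
    · simpa [cenf, mixf, hj] using
        (((integrable_eval ν hB j).sub (integrable_const (∫ t, t ∂ν))).const_mul
          (a i - ∫ t, t ∂ν))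
    · simpa [cenf, mixf, hj] using
        integrable_const ((a i - ∫ t, t ∂ν) * (b j - ∫ t, t ∂ν))
  refine (integral_bsum (Measure.pi fun _ : Fin n => ν) y Finset.univ Finset.univ
      (fun i _ => cenf (∫ t, t ∂ν) a i)
      (fun j d => cenf (∫ t, t ∂ν) (mixf S (d, b)) j) hint).trans ?_
  refine Finset.sum_congr rfl fun i _ => ?_
  have hterm : ∀ j : Fin n,
      (∫ d, cenf (∫ t, t ∂ν) a i * cenf (∫ t, t ∂ν) (mixf S (d, b)) j
          ∂(Measure.pi fun _ : Fin n => ν)) • y i j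
        = if j ∈ Sᶜ then (cenf (∫ t, t ∂ν) a i * cenf (∫ t, t ∂ν) b j) • y i j else 0 := by
    intro j
    by_cases hj : j ∈ S
    · rw [if_neg (by simpa using hj)]
      have h0 : (∫ d, cenf (∫ t, t ∂ν) a i * cenf (∫ t, t ∂ν) (mixf S (d, b)) j
          ∂(Measure.pi fun _ : Fin n => ν)) = 0 := by
        simp only [cenf, mixf, hj, if_true]
        rw [integral_const_mul, integral_cen ν hB, mul_zero]
      rw [h0, zero_smul]
    · rw [if_pos (by simpa using hj)]
      congr 1
      simp only [cenf, mixf, hj, if_false]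
      rw [integral_const]
      simp [measure_univ]
  rw [Finset.sum_congr rfl fun j _ => hterm j, Finset.sum_ite_mem, Finset.univ_inter]

end Ids

section CoreThm
variable (ν : Measure ℝ) [IsProbabilityMeasure ν] {B : ℝ} {F : Type*}
  [NormedAddCommGroup F] [NormedSpace ℝ F] [CompleteSpace F]

set_option maxHeartbeats 2000000 in
theorem core (hn2 : 2 ≤ n) (y : Fin n → Fin n → F) (hy : ∀ i, y i i = 0)
    (hB : ∀ᵐ t ∂ν, |t| ≤ B) :
    ∫ a, ‖bsum y Finset.univ Finset.univ a a‖ ∂(Measure.pi fun _ : Fin n => ν)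
      ≤ 20 * ∫ p, ‖bsum y Finset.univ Finset.univ p.1 p.2‖ ∂((Measure.pi fun _ : Fin n => ν).prod (Measure.pi fun _ : Fin n => ν)) := by
  classical
  have hB0 : 0 ≤ B := by
    obtain ⟨t, ht⟩ := hB.exists
    exact (abs_nonneg t).trans ht
  have hC0 : 0 ≤ B + |(∫ t, t ∂ν)| := add_nonneg hB0 (abs_nonneg _)
  have hGae := ae_bound_pi (n := n) ν hB
  have hGpp := ae_bound_pp (n := n) ν hB
  have hbnd : ∀ a : Fin n → ℝ, (∀ i, |a i| ≤ B) → ∀ i, |a i| ≤ B + |(∫ t, t ∂ν)| :=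
    fun a h i => (h i).trans (le_add_of_nonneg_right (abs_nonneg _))
  have hbndc : ∀ a : Fin n → ℝ, (∀ i, |a i| ≤ B) → ∀ i, |cenf (∫ t, t ∂ν) a i| ≤ B + |(∫ t, t ∂ν)| := by
    intro a h i
    have h1 : |a i - (∫ t, t ∂ν)| ≤ |a i| + |(∫ t, t ∂ν)| := by
      calc |a i - (∫ t, t ∂ν)| = |a i + -(∫ t, t ∂ν)| := by rw [sub_eq_add_neg]
        _ ≤ |a i| + |-(∫ t, t ∂ν)| := abs_add_le _ _
        _ = |a i| + |(∫ t, t ∂ν)| := by rw [abs_neg]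
    exact h1.trans (add_le_add_left (h i) _)
  have hbndm : ∀ i : Fin n, |(fun _ : Fin n => (∫ t, t ∂ν)) i| ≤ B + |(∫ t, t ∂ν)| :=
    fun _ => le_add_of_nonneg_left hB0
  have hcenC : Continuous (cenf (n := n) (∫ t, t ∂ν)) := continuous_cenf _
  -- integrability
  have hIntD_pp : Integrable
      (fun p : (Fin n → ℝ) × (Fin n → ℝ) => ‖bsum y Finset.univ Finset.univ p.1 p.2‖) ((Measure.pi fun _ : Fin n => ν).prod (Measure.pi fun _ : Fin n => ν)) :=
    integrable_norm_bsum _ y _ _ continuous_fst continuous_snd _ hC0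
      (by filter_upwards [hGpp] with p hp; exact ⟨hbnd _ hp.1, hbnd _ hp.2⟩)
  have hIntD_diag : Integrable
      (fun a : Fin n → ℝ => ‖bsum y Finset.univ Finset.univ a a‖) (Measure.pi fun _ : Fin n => ν) :=
    integrable_norm_bsum _ y _ _ continuous_id continuous_id _ hC0
      (by filter_upwards [hGae] with a ha; exact ⟨hbnd _ ha, hbnd _ ha⟩)
  have hIntP : Integrable
      (fun a : Fin n → ℝ => ‖bsum y Finset.univ Finset.univ a (fun _ => (∫ t, t ∂ν))‖) (Measure.pi fun _ : Fin n => ν) :=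
    integrable_norm_bsum _ y _ _ continuous_id continuous_const _ hC0
      (by filter_upwards [hGae] with a ha; exact ⟨hbnd _ ha, hbndm⟩)
  have hIntQ : Integrable
      (fun a : Fin n → ℝ => ‖bsum y Finset.univ Finset.univ (fun _ => (∫ t, t ∂ν)) a‖) (Measure.pi fun _ : Fin n => ν) :=
    integrable_norm_bsum _ y _ _ continuous_const continuous_id _ hC0
      (by filter_upwards [hGae] with a ha; exact ⟨hbndm, hbnd _ ha⟩)
  have hIntP_pp : Integrable
      (fun p : (Fin n → ℝ) × (Fin n → ℝ) =>
        ‖bsum y Finset.univ Finset.univ p.1 (fun _ => (∫ t, t ∂ν))‖) ((Measure.pi fun _ : Fin n => ν).prod (Measure.pi fun _ : Fin n => ν)) :=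
    integrable_norm_bsum _ y _ _ continuous_fst continuous_const _ hC0
      (by filter_upwards [hGpp] with p hp; exact ⟨hbnd _ hp.1, hbndm⟩)
  have hIntQ_pp : Integrable
      (fun p : (Fin n → ℝ) × (Fin n → ℝ) =>
        ‖bsum y Finset.univ Finset.univ (fun _ => (∫ t, t ∂ν)) p.2‖) ((Measure.pi fun _ : Fin n => ν).prod (Measure.pi fun _ : Fin n => ν)) :=
    integrable_norm_bsum _ y _ _ continuous_const continuous_snd _ hC0
      (by filter_upwards [hGpp] with p hp; exact ⟨hbndm, hbnd _ hp.2⟩)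
  have hIntDc_pp : Integrable
      (fun p : (Fin n → ℝ) × (Fin n → ℝ) =>
        ‖bsum y Finset.univ Finset.univ (cenf (∫ t, t ∂ν) p.1) (cenf (∫ t, t ∂ν) p.2)‖) ((Measure.pi fun _ : Fin n => ν).prod (Measure.pi fun _ : Fin n => ν)) :=
    integrable_norm_bsum _ y _ _ (hcenC.comp continuous_fst) (hcenC.comp continuous_snd) _ hC0
      (by filter_upwards [hGpp] with p hp; exact ⟨hbndc _ hp.1, hbndc _ hp.2⟩)
  have hIntDc_diag : Integrable
      (fun a : Fin n → ℝ => ‖bsum y Finset.univ Finset.univ (cenf (∫ t, t ∂ν) a) (cenf (∫ t, t ∂ν) a)‖) (Measure.pi fun _ : Fin n => ν) :=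
    integrable_norm_bsum _ y _ _ hcenC hcenC _ hC0
      (by filter_upwards [hGae] with a ha; exact ⟨hbndc _ ha, hbndc _ ha⟩)
  have hIntT_diag : ∀ S : Finset (Fin n), Integrable
      (fun a : Fin n → ℝ => ‖bsum y S Sᶜ (cenf (∫ t, t ∂ν) a) (cenf (∫ t, t ∂ν) a)‖) (Measure.pi fun _ : Fin n => ν) := fun S =>
    integrable_norm_bsum _ y _ _ hcenC hcenC _ hC0
      (by filter_upwards [hGae] with a ha; exact ⟨hbndc _ ha, hbndc _ ha⟩)
  have hIntT_pp : ∀ S : Finset (Fin n), Integrable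
      (fun p : (Fin n → ℝ) × (Fin n → ℝ) =>
        ‖bsum y S Sᶜ (cenf (∫ t, t ∂ν) p.1) (cenf (∫ t, t ∂ν) p.2)‖) ((Measure.pi fun _ : Fin n => ν).prod (Measure.pi fun _ : Fin n => ν)) := fun S =>
    integrable_norm_bsum _ y _ _ (hcenC.comp continuous_fst) (hcenC.comp continuous_snd) _ hC0
      (by filter_upwards [hGpp] with p hp; exact ⟨hbndc _ hp.1, hbndc _ hp.2⟩)
  have hIntU_pp : ∀ S : Finset (Fin n), Integrable
      (fun p : (Fin n → ℝ) × (Fin n → ℝ) =>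
        ‖bsum y Finset.univ Sᶜ (cenf (∫ t, t ∂ν) p.1) (cenf (∫ t, t ∂ν) p.2)‖) ((Measure.pi fun _ : Fin n => ν).prod (Measure.pi fun _ : Fin n => ν)) := fun S =>
    integrable_norm_bsum _ y _ _ (hcenC.comp continuous_fst) (hcenC.comp continuous_snd) _ hC0
      (by filter_upwards [hGpp] with p hp; exact ⟨hbndc _ hp.1, hbndc _ hp.2⟩)
  -- bounds depending on a fixed vector w
  have hcw0 : ∀ w : Fin n → ℝ, (0:ℝ) ≤ (B + |(∫ t, t ∂ν)|) + ∑ j, |w j - (∫ t, t ∂ν)| :=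
    fun w => add_nonneg hC0 (Finset.sum_nonneg fun j _ => abs_nonneg _)
  have hcwC : ∀ (w : Fin n → ℝ) (j : Fin n),
      |cenf (∫ t, t ∂ν) w j| ≤ (B + |(∫ t, t ∂ν)|) + ∑ k, |w k - (∫ t, t ∂ν)| := by
    intro w j
    refine le_trans ?_ (le_add_of_nonneg_left hC0)
    exact Finset.single_le_sum (fun k _ => abs_nonneg (w k - (∫ t, t ∂ν))) (Finset.mem_univ j)
  have hbndcw : ∀ (w : Fin n → ℝ) (a : Fin n → ℝ), (∀ i, |a i| ≤ B) →
      ∀ i, |cenf (∫ t, t ∂ν) a i| ≤ (B + |(∫ t, t ∂ν)|) + ∑ k, |w k - (∫ t, t ∂ν)| := fun w a h i =>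
    (hbndc a h i).trans (le_add_of_nonneg_right (Finset.sum_nonneg fun j _ => abs_nonneg _))
  have hmixbnd : ∀ (S : Finset (Fin n)) (p : (Fin n → ℝ) × (Fin n → ℝ)),
      (∀ i, |p.1 i| ≤ B) → (∀ i, |p.2 i| ≤ B) → ∀ i, |mixf S p i| ≤ B := by
    intro S p h1 h2 i
    unfold mixf
    by_cases hi : i ∈ S
    · simpa [hi] using h1 i
    · simpa [hi] using h2 i
  have hIntS1 : ∀ (S : Finset (Fin n)) (b : Fin n → ℝ), Integrable
      (fun p : (Fin n → ℝ) × (Fin n → ℝ) =>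
        ‖bsum y Finset.univ Sᶜ (cenf (∫ t, t ∂ν) (mixf S p)) (cenf (∫ t, t ∂ν) b)‖) ((Measure.pi fun _ : Fin n => ν).prod (Measure.pi fun _ : Fin n => ν)) := fun S b =>
    integrable_norm_bsum _ y _ _ (hcenC.comp (continuous_mixf S)) continuous_const _ (hcw0 b)
      (by filter_upwards [hGpp] with p hp
          exact ⟨hbndcw b _ (hmixbnd S p hp.1 hp.2), fun j => hcwC b j⟩)
  have hIntS2 : ∀ (S : Finset (Fin n)) (a : Fin n → ℝ), Integrable
      (fun p : (Fin n → ℝ) × (Fin n → ℝ) =>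
        ‖bsum y Finset.univ Finset.univ (cenf (∫ t, t ∂ν) a) (cenf (∫ t, t ∂ν) (mixf S p))‖) ((Measure.pi fun _ : Fin n => ν).prod (Measure.pi fun _ : Fin n => ν)) := fun S a =>
    integrable_norm_bsum _ y _ _ continuous_const (hcenC.comp (continuous_mixf S)) _ (hcw0 a)
      (by filter_upwards [hGpp] with p hp
          exact ⟨fun j => hcwC a j, hbndcw a _ (hmixbnd S p hp.1 hp.2)⟩)
  have hIntT_b : ∀ (S : Finset (Fin n)) (b : Fin n → ℝ), Integrable
      (fun a : Fin n → ℝ => ‖bsum y S Sᶜ (cenf (∫ t, t ∂ν) a) (cenf (∫ t, t ∂ν) b)‖) (Measure.pi fun _ : Fin n => ν) := fun S b =>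
    integrable_norm_bsum _ y _ _ hcenC continuous_const _ (hcw0 b)
      (by filter_upwards [hGae] with a ha
          exact ⟨hbndcw b _ ha, fun j => hcwC b j⟩)
  have hIntU_b : ∀ (S : Finset (Fin n)) (b : Fin n → ℝ), Integrable
      (fun u : Fin n → ℝ => ‖bsum y Finset.univ Sᶜ (cenf (∫ t, t ∂ν) u) (cenf (∫ t, t ∂ν) b)‖) (Measure.pi fun _ : Fin n => ν) := fun S b =>
    integrable_norm_bsum _ y _ _ hcenC continuous_const _ (hcw0 b)
      (by filter_upwards [hGae] with a ha
          exact ⟨hbndcw b _ ha, fun j => hcwC b j⟩)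
  have hIntU_a : ∀ (S : Finset (Fin n)) (a : Fin n → ℝ), Integrable
      (fun b : Fin n → ℝ => ‖bsum y Finset.univ Sᶜ (cenf (∫ t, t ∂ν) a) (cenf (∫ t, t ∂ν) b)‖) (Measure.pi fun _ : Fin n => ν) := fun S a =>
    integrable_norm_bsum _ y _ _ continuous_const hcenC _ (hcw0 a)
      (by filter_upwards [hGae] with b hb
          exact ⟨fun j => hcwC a j, hbndcw a _ hb⟩)
  have hIntDc_a : ∀ a : Fin n → ℝ, Integrable
      (fun v : Fin n → ℝ =>
        ‖bsum y Finset.univ Finset.univ (cenf (∫ t, t ∂ν) a) (cenf (∫ t, t ∂ν) v)‖) (Measure.pi fun _ : Fin n => ν) := fun a =>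
    integrable_norm_bsum _ y _ _ continuous_const hcenC _ (hcw0 a)
      (by filter_upwards [hGae] with b hb
          exact ⟨fun j => hcwC a j, hbndcw a _ hb⟩)
  -- map along mixf
  have hmapmix : ∀ (S : Finset (Fin n)) (g : (Fin n → ℝ) → ℝ),
      AEStronglyMeasurable g (Measure.pi fun _ : Fin n => ν) →
      ∫ p, g (mixf S p) ∂((Measure.pi fun _ : Fin n => ν).prod (Measure.pi fun _ : Fin n => ν)) = ∫ u, g u ∂(Measure.pi fun _ : Fin n => ν) := by
    intro S g hg
    have h := integral_map (μ := ((Measure.pi fun _ : Fin n => ν).prod (Measure.pi fun _ : Fin n => ν))) (φ := mixf S) (f := g)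
      (mixfMP ν S).measurable.aemeasurable (by rw [(mixfMP ν S).map_eq]; exact hg)
    rw [(mixfMP ν S).map_eq] at h
    exact h.symm
  have hR0 : (0:ℝ) ≤ ∫ p, ‖bsum y Finset.univ Finset.univ p.1 p.2‖ ∂((Measure.pi fun _ : Fin n => ν).prod (Measure.pi fun _ : Fin n => ν)) :=
    integral_nonneg fun p => norm_nonneg _
  -- Jensen bounds for P, Q, K
  have hPle : ∫ a, ‖bsum y Finset.univ Finset.univ a (fun _ => (∫ t, t ∂ν))‖ ∂(Measure.pi fun _ : Fin n => ν)
      ≤ ∫ p, ‖bsum y Finset.univ Finset.univ p.1 p.2‖ ∂((Measure.pi fun _ : Fin n => ν).prod (Measure.pi fun _ : Fin n => ν)) := by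
    have hpt : ∀ a : Fin n → ℝ, ‖bsum y Finset.univ Finset.univ a (fun _ => (∫ t, t ∂ν))‖
        ≤ ∫ b, ‖bsum y Finset.univ Finset.univ a b‖ ∂(Measure.pi fun _ : Fin n => ν) := by
      intro a
      rw [← Pid ν y hB a]
      exact norm_integral_le_integral_norm _
    calc ∫ a, ‖bsum y Finset.univ Finset.univ a (fun _ => (∫ t, t ∂ν))‖ ∂(Measure.pi fun _ : Fin n => ν)
        ≤ ∫ a, ∫ b, ‖bsum y Finset.univ Finset.univ a b‖ ∂(Measure.pi fun _ : Fin n => ν) ∂(Measure.pi fun _ : Fin n => ν) :=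
          integral_mono hIntP hIntD_pp.integral_prod_left hpt
      _ = ∫ p, ‖bsum y Finset.univ Finset.univ p.1 p.2‖ ∂((Measure.pi fun _ : Fin n => ν).prod (Measure.pi fun _ : Fin n => ν)) :=
          integral_integral (f := fun a b => ‖bsum y Finset.univ Finset.univ a b‖) hIntD_pp
  have hQle : ∫ b, ‖bsum y Finset.univ Finset.univ (fun _ => (∫ t, t ∂ν)) b‖ ∂(Measure.pi fun _ : Fin n => ν)
      ≤ ∫ p, ‖bsum y Finset.univ Finset.univ p.1 p.2‖ ∂((Measure.pi fun _ : Fin n => ν).prod (Measure.pi fun _ : Fin n => ν)) := by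
    have hpt : ∀ b : Fin n → ℝ, ‖bsum y Finset.univ Finset.univ (fun _ => (∫ t, t ∂ν)) b‖
        ≤ ∫ a, ‖bsum y Finset.univ Finset.univ a b‖ ∂(Measure.pi fun _ : Fin n => ν) := by
      intro b
      rw [← Qid ν y hB b]
      exact norm_integral_le_integral_norm _
    calc ∫ b, ‖bsum y Finset.univ Finset.univ (fun _ => (∫ t, t ∂ν)) b‖ ∂(Measure.pi fun _ : Fin n => ν)
        ≤ ∫ b, ∫ a, ‖bsum y Finset.univ Finset.univ a b‖ ∂(Measure.pi fun _ : Fin n => ν) ∂(Measure.pi fun _ : Fin n => ν) :=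
          integral_mono hIntQ hIntD_pp.integral_prod_right hpt
      _ = ∫ p, ‖bsum y Finset.univ Finset.univ p.1 p.2‖ ∂((Measure.pi fun _ : Fin n => ν).prod (Measure.pi fun _ : Fin n => ν)) :=
          (integral_prod_symm (f := fun p => ‖bsum y Finset.univ Finset.univ p.1 p.2‖)
            hIntD_pp).symm
  have hKle : ‖bsum y Finset.univ Finset.univ (fun _ : Fin n => (∫ t, t ∂ν)) (fun _ : Fin n => (∫ t, t ∂ν))‖
      ≤ ∫ p, ‖bsum y Finset.univ Finset.univ p.1 p.2‖ ∂((Measure.pi fun _ : Fin n => ν).prod (Measure.pi fun _ : Fin n => ν)) := by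
    rw [← Kid ν y hB]
    exact norm_integral_le_integral_norm _
  -- pointwise decomposition bound
  have hptdec : ∀ a b : Fin n → ℝ,
      ‖bsum y Finset.univ Finset.univ (cenf (∫ t, t ∂ν) a) (cenf (∫ t, t ∂ν) b)‖
        ≤ ‖bsum y Finset.univ Finset.univ a b‖
          + ‖bsum y Finset.univ Finset.univ a (fun _ => (∫ t, t ∂ν))‖
          + ‖bsum y Finset.univ Finset.univ (fun _ => (∫ t, t ∂ν)) b‖
          + ‖bsum y Finset.univ Finset.univ (fun _ : Fin n => (∫ t, t ∂ν)) (fun _ : Fin n => (∫ t, t ∂ν))‖ := by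
    intro a b
    have h2 : bsum y Finset.univ Finset.univ (cenf (∫ t, t ∂ν) a) (cenf (∫ t, t ∂ν) b)
        = bsum y Finset.univ Finset.univ a b
          - bsum y Finset.univ Finset.univ a (fun _ => (∫ t, t ∂ν))
          - bsum y Finset.univ Finset.univ (fun _ => (∫ t, t ∂ν)) b
          + bsum y Finset.univ Finset.univ (fun _ : Fin n => (∫ t, t ∂ν)) (fun _ : Fin n => (∫ t, t ∂ν)) := by
      rw [bsum_decomp y (∫ t, t ∂ν) a b]
      abel
    rw [h2]
    calc ‖bsum y Finset.univ Finset.univ a b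
          - bsum y Finset.univ Finset.univ a (fun _ => (∫ t, t ∂ν))
          - bsum y Finset.univ Finset.univ (fun _ => (∫ t, t ∂ν)) b
          + bsum y Finset.univ Finset.univ (fun _ : Fin n => (∫ t, t ∂ν)) (fun _ : Fin n => (∫ t, t ∂ν))‖
        ≤ ‖bsum y Finset.univ Finset.univ a b
            - bsum y Finset.univ Finset.univ a (fun _ => (∫ t, t ∂ν))
            - bsum y Finset.univ Finset.univ (fun _ => (∫ t, t ∂ν)) b‖
          + ‖bsum y Finset.univ Finset.univ (fun _ : Fin n => (∫ t, t ∂ν)) (fun _ : Fin n => (∫ t, t ∂ν))‖ :=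
          norm_add_le _ _
      _ ≤ (‖bsum y Finset.univ Finset.univ a b
            - bsum y Finset.univ Finset.univ a (fun _ => (∫ t, t ∂ν))‖
          + ‖bsum y Finset.univ Finset.univ (fun _ => (∫ t, t ∂ν)) b‖)
          + ‖bsum y Finset.univ Finset.univ (fun _ : Fin n => (∫ t, t ∂ν)) (fun _ : Fin n => (∫ t, t ∂ν))‖ :=
          add_le_add_left (norm_sub_le _ _) _
      _ ≤ ((‖bsum y Finset.univ Finset.univ a b‖
            + ‖bsum y Finset.univ Finset.univ a (fun _ => (∫ t, t ∂ν))‖)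
          + ‖bsum y Finset.univ Finset.univ (fun _ => (∫ t, t ∂ν)) b‖)
          + ‖bsum y Finset.univ Finset.univ (fun _ : Fin n => (∫ t, t ∂ν)) (fun _ : Fin n => (∫ t, t ∂ν))‖ :=
          add_le_add_left (add_le_add_left (norm_sub_le _ _) _) _
  -- Fη ≤ 4 R
  have hFle : ∫ p, ‖bsum y Finset.univ Finset.univ (cenf (∫ t, t ∂ν) p.1) (cenf (∫ t, t ∂ν) p.2)‖ ∂((Measure.pi fun _ : Fin n => ν).prod (Measure.pi fun _ : Fin n => ν))
      ≤ 4 * ∫ p, ‖bsum y Finset.univ Finset.univ p.1 p.2‖ ∂((Measure.pi fun _ : Fin n => ν).prod (Measure.pi fun _ : Fin n => ν)) := by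
    have hmono : ∫ p, ‖bsum y Finset.univ Finset.univ (cenf (∫ t, t ∂ν) p.1) (cenf (∫ t, t ∂ν) p.2)‖ ∂((Measure.pi fun _ : Fin n => ν).prod (Measure.pi fun _ : Fin n => ν))
        ≤ ∫ p, (‖bsum y Finset.univ Finset.univ p.1 p.2‖
            + ‖bsum y Finset.univ Finset.univ p.1 (fun _ => (∫ t, t ∂ν))‖
            + ‖bsum y Finset.univ Finset.univ (fun _ => (∫ t, t ∂ν)) p.2‖
            + ‖bsum y Finset.univ Finset.univ (fun _ : Fin n => (∫ t, t ∂ν)) (fun _ : Fin n => (∫ t, t ∂ν))‖)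
            ∂((Measure.pi fun _ : Fin n => ν).prod (Measure.pi fun _ : Fin n => ν)) :=
      integral_mono hIntDc_pp
        (((hIntD_pp.add hIntP_pp).add hIntQ_pp).add (integrable_const _))
        (fun p => hptdec p.1 p.2)
    have hsplit : ∫ p, (‖bsum y Finset.univ Finset.univ p.1 p.2‖
            + ‖bsum y Finset.univ Finset.univ p.1 (fun _ => (∫ t, t ∂ν))‖
            + ‖bsum y Finset.univ Finset.univ (fun _ => (∫ t, t ∂ν)) p.2‖
            + ‖bsum y Finset.univ Finset.univ (fun _ : Fin n => (∫ t, t ∂ν)) (fun _ : Fin n => (∫ t, t ∂ν))‖)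
            ∂((Measure.pi fun _ : Fin n => ν).prod (Measure.pi fun _ : Fin n => ν))
        = (∫ p, ‖bsum y Finset.univ Finset.univ p.1 p.2‖ ∂((Measure.pi fun _ : Fin n => ν).prod (Measure.pi fun _ : Fin n => ν)))
          + (∫ p, ‖bsum y Finset.univ Finset.univ p.1 (fun _ => (∫ t, t ∂ν))‖ ∂((Measure.pi fun _ : Fin n => ν).prod (Measure.pi fun _ : Fin n => ν)))
          + (∫ p, ‖bsum y Finset.univ Finset.univ (fun _ => (∫ t, t ∂ν)) p.2‖ ∂((Measure.pi fun _ : Fin n => ν).prod (Measure.pi fun _ : Fin n => ν)))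
          + ‖bsum y Finset.univ Finset.univ (fun _ : Fin n => (∫ t, t ∂ν)) (fun _ : Fin n => (∫ t, t ∂ν))‖ := by
      have h12 : Integrable (fun p : (Fin n → ℝ) × (Fin n → ℝ) =>
          ‖bsum y Finset.univ Finset.univ p.1 p.2‖
            + ‖bsum y Finset.univ Finset.univ p.1 (fun _ => (∫ t, t ∂ν))‖) ((Measure.pi fun _ : Fin n => ν).prod (Measure.pi fun _ : Fin n => ν)) :=
        hIntD_pp.add hIntP_pp
      have h123 : Integrable (fun p : (Fin n → ℝ) × (Fin n → ℝ) =>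
          ‖bsum y Finset.univ Finset.univ p.1 p.2‖
            + ‖bsum y Finset.univ Finset.univ p.1 (fun _ => (∫ t, t ∂ν))‖
            + ‖bsum y Finset.univ Finset.univ (fun _ => (∫ t, t ∂ν)) p.2‖) ((Measure.pi fun _ : Fin n => ν).prod (Measure.pi fun _ : Fin n => ν)) :=
        h12.add hIntQ_pp
      rw [integral_add h123 (integrable_const _), integral_add h12 hIntQ_pp,
        integral_add hIntD_pp hIntP_pp, integral_const]
      simp [measure_univ]
    have hPm : ∫ p, ‖bsum y Finset.univ Finset.univ p.1 (fun _ => (∫ t, t ∂ν))‖ ∂((Measure.pi fun _ : Fin n => ν).prod (Measure.pi fun _ : Fin n => ν))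
        = ∫ a, ‖bsum y Finset.univ Finset.univ a (fun _ => (∫ t, t ∂ν))‖ ∂(Measure.pi fun _ : Fin n => ν) := by
      rw [integral_prod (f := fun p : (Fin n → ℝ) × (Fin n → ℝ) =>
        ‖bsum y Finset.univ Finset.univ p.1 (fun _ => (∫ t, t ∂ν))‖) hIntP_pp]
      simp [integral_const, measure_univ]
    have hQm : ∫ p, ‖bsum y Finset.univ Finset.univ (fun _ => (∫ t, t ∂ν)) p.2‖ ∂((Measure.pi fun _ : Fin n => ν).prod (Measure.pi fun _ : Fin n => ν))
        = ∫ b, ‖bsum y Finset.univ Finset.univ (fun _ => (∫ t, t ∂ν)) b‖ ∂(Measure.pi fun _ : Fin n => ν) := by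
      rw [integral_prod_symm (f := fun p : (Fin n → ℝ) × (Fin n → ℝ) =>
        ‖bsum y Finset.univ Finset.univ (fun _ => (∫ t, t ∂ν)) p.2‖) hIntQ_pp]
      simp [integral_const, measure_univ]
    rw [hsplit, hPm, hQm] at hmono
    linarith [hPle, hQle, hKle]
  -- per-S bound
  have hTS : ∀ S : Finset (Fin n),
      ∫ a, ‖bsum y S Sᶜ (cenf (∫ t, t ∂ν) a) (cenf (∫ t, t ∂ν) a)‖ ∂(Measure.pi fun _ : Fin n => ν)
        ≤ ∫ p, ‖bsum y Finset.univ Finset.univ (cenf (∫ t, t ∂ν) p.1) (cenf (∫ t, t ∂ν) p.2)‖ ∂((Measure.pi fun _ : Fin n => ν).prod (Measure.pi fun _ : Fin n => ν)) := by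
    intro S
    have ha : ∫ a, ‖bsum y S Sᶜ (cenf (∫ t, t ∂ν) a) (cenf (∫ t, t ∂ν) a)‖ ∂(Measure.pi fun _ : Fin n => ν)
        = ∫ p, ‖bsum y S Sᶜ (cenf (∫ t, t ∂ν) p.1) (cenf (∫ t, t ∂ν) p.2)‖ ∂((Measure.pi fun _ : Fin n => ν).prod (Measure.pi fun _ : Fin n => ν)) := by
      rw [← hmapmix S (fun u => ‖bsum y S Sᶜ (cenf (∫ t, t ∂ν) u) (cenf (∫ t, t ∂ν) u)‖)
        ((continuous_bsum y S Sᶜ hcenC hcenC).norm.aestronglyMeasurable)]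
      exact integral_congr_ae (Filter.Eventually.of_forall fun p =>
        congrArg (fun z => ‖z‖) (bsum_mix_diag y (∫ t, t ∂ν) S p))
    have hb : ∫ p, ‖bsum y S Sᶜ (cenf (∫ t, t ∂ν) p.1) (cenf (∫ t, t ∂ν) p.2)‖ ∂((Measure.pi fun _ : Fin n => ν).prod (Measure.pi fun _ : Fin n => ν))
        ≤ ∫ p, ‖bsum y Finset.univ Sᶜ (cenf (∫ t, t ∂ν) p.1) (cenf (∫ t, t ∂ν) p.2)‖ ∂((Measure.pi fun _ : Fin n => ν).prod (Measure.pi fun _ : Fin n => ν)) := by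
      have hbfix : ∀ b : Fin n → ℝ,
          ∫ a, ‖bsum y S Sᶜ (cenf (∫ t, t ∂ν) a) (cenf (∫ t, t ∂ν) b)‖ ∂(Measure.pi fun _ : Fin n => ν)
            ≤ ∫ u, ‖bsum y Finset.univ Sᶜ (cenf (∫ t, t ∂ν) u) (cenf (∫ t, t ∂ν) b)‖ ∂(Measure.pi fun _ : Fin n => ν) := by
        intro b
        have hpt : ∀ a : Fin n → ℝ, ‖bsum y S Sᶜ (cenf (∫ t, t ∂ν) a) (cenf (∫ t, t ∂ν) b)‖
            ≤ ∫ c, ‖bsum y Finset.univ Sᶜ (cenf (∫ t, t ∂ν) (mixf S (a, c))) (cenf (∫ t, t ∂ν) b)‖ ∂(Measure.pi fun _ : Fin n => ν) := by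
          intro a
          rw [← stage1 ν y hB S a b]
          exact norm_integral_le_integral_norm _
        calc ∫ a, ‖bsum y S Sᶜ (cenf (∫ t, t ∂ν) a) (cenf (∫ t, t ∂ν) b)‖ ∂(Measure.pi fun _ : Fin n => ν)
            ≤ ∫ a, ∫ c, ‖bsum y Finset.univ Sᶜ (cenf (∫ t, t ∂ν) (mixf S (a, c))) (cenf (∫ t, t ∂ν) b)‖
                ∂(Measure.pi fun _ : Fin n => ν) ∂(Measure.pi fun _ : Fin n => ν) :=
              integral_mono (hIntT_b S b) (hIntS1 S b).integral_prod_left hpt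
          _ = ∫ p, ‖bsum y Finset.univ Sᶜ (cenf (∫ t, t ∂ν) (mixf S p)) (cenf (∫ t, t ∂ν) b)‖ ∂((Measure.pi fun _ : Fin n => ν).prod (Measure.pi fun _ : Fin n => ν)) :=
              integral_integral (f := fun a c =>
                ‖bsum y Finset.univ Sᶜ (cenf (∫ t, t ∂ν) (mixf S (a, c))) (cenf (∫ t, t ∂ν) b)‖) (hIntS1 S b)
          _ = ∫ u, ‖bsum y Finset.univ Sᶜ (cenf (∫ t, t ∂ν) u) (cenf (∫ t, t ∂ν) b)‖ ∂(Measure.pi fun _ : Fin n => ν) :=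
              hmapmix S (fun u => ‖bsum y Finset.univ Sᶜ (cenf (∫ t, t ∂ν) u) (cenf (∫ t, t ∂ν) b)‖)
                ((continuous_bsum y Finset.univ Sᶜ hcenC continuous_const).norm.aestronglyMeasurable)
      calc ∫ p, ‖bsum y S Sᶜ (cenf (∫ t, t ∂ν) p.1) (cenf (∫ t, t ∂ν) p.2)‖ ∂((Measure.pi fun _ : Fin n => ν).prod (Measure.pi fun _ : Fin n => ν))
          = ∫ b, ∫ a, ‖bsum y S Sᶜ (cenf (∫ t, t ∂ν) a) (cenf (∫ t, t ∂ν) b)‖ ∂(Measure.pi fun _ : Fin n => ν) ∂(Measure.pi fun _ : Fin n => ν) :=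
            integral_prod_symm (f := fun p =>
              ‖bsum y S Sᶜ (cenf (∫ t, t ∂ν) p.1) (cenf (∫ t, t ∂ν) p.2)‖) (hIntT_pp S)
        _ ≤ ∫ b, ∫ u, ‖bsum y Finset.univ Sᶜ (cenf (∫ t, t ∂ν) u) (cenf (∫ t, t ∂ν) b)‖ ∂(Measure.pi fun _ : Fin n => ν) ∂(Measure.pi fun _ : Fin n => ν) :=
            integral_mono (hIntT_pp S).integral_prod_right (hIntU_pp S).integral_prod_right hbfix
        _ = ∫ p, ‖bsum y Finset.univ Sᶜ (cenf (∫ t, t ∂ν) p.1) (cenf (∫ t, t ∂ν) p.2)‖ ∂((Measure.pi fun _ : Fin n => ν).prod (Measure.pi fun _ : Fin n => ν)) :=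
            (integral_prod_symm (f := fun p =>
              ‖bsum y Finset.univ Sᶜ (cenf (∫ t, t ∂ν) p.1) (cenf (∫ t, t ∂ν) p.2)‖) (hIntU_pp S)).symm
    have hc : ∫ p, ‖bsum y Finset.univ Sᶜ (cenf (∫ t, t ∂ν) p.1) (cenf (∫ t, t ∂ν) p.2)‖ ∂((Measure.pi fun _ : Fin n => ν).prod (Measure.pi fun _ : Fin n => ν))
        ≤ ∫ p, ‖bsum y Finset.univ Finset.univ (cenf (∫ t, t ∂ν) p.1) (cenf (∫ t, t ∂ν) p.2)‖ ∂((Measure.pi fun _ : Fin n => ν).prod (Measure.pi fun _ : Fin n => ν)) := by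
      have hafix : ∀ a : Fin n → ℝ,
          ∫ b, ‖bsum y Finset.univ Sᶜ (cenf (∫ t, t ∂ν) a) (cenf (∫ t, t ∂ν) b)‖ ∂(Measure.pi fun _ : Fin n => ν)
            ≤ ∫ v, ‖bsum y Finset.univ Finset.univ (cenf (∫ t, t ∂ν) a) (cenf (∫ t, t ∂ν) v)‖ ∂(Measure.pi fun _ : Fin n => ν) := by
        intro a
        have hpt : ∀ b : Fin n → ℝ, ‖bsum y Finset.univ Sᶜ (cenf (∫ t, t ∂ν) a) (cenf (∫ t, t ∂ν) b)‖
            ≤ ∫ d, ‖bsum y Finset.univ Finset.univ (cenf (∫ t, t ∂ν) a) (cenf (∫ t, t ∂ν) (mixf S (d, b)))‖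
                ∂(Measure.pi fun _ : Fin n => ν) := by
          intro b
          rw [← stage2 ν y hB S a b]
          exact norm_integral_le_integral_norm _
        calc ∫ b, ‖bsum y Finset.univ Sᶜ (cenf (∫ t, t ∂ν) a) (cenf (∫ t, t ∂ν) b)‖ ∂(Measure.pi fun _ : Fin n => ν)
            ≤ ∫ b, ∫ d, ‖bsum y Finset.univ Finset.univ (cenf (∫ t, t ∂ν) a) (cenf (∫ t, t ∂ν) (mixf S (d, b)))‖
                ∂(Measure.pi fun _ : Fin n => ν) ∂(Measure.pi fun _ : Fin n => ν) :=
              integral_mono (hIntU_a S a) (hIntS2 S a).integral_prod_right hpt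
          _ = ∫ p, ‖bsum y Finset.univ Finset.univ (cenf (∫ t, t ∂ν) a) (cenf (∫ t, t ∂ν) (mixf S p))‖ ∂((Measure.pi fun _ : Fin n => ν).prod (Measure.pi fun _ : Fin n => ν)) :=
              (integral_prod_symm (f := fun p =>
                ‖bsum y Finset.univ Finset.univ (cenf (∫ t, t ∂ν) a) (cenf (∫ t, t ∂ν) (mixf S p))‖)
                (hIntS2 S a)).symm
          _ = ∫ v, ‖bsum y Finset.univ Finset.univ (cenf (∫ t, t ∂ν) a) (cenf (∫ t, t ∂ν) v)‖ ∂(Measure.pi fun _ : Fin n => ν) :=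
              hmapmix S (fun v => ‖bsum y Finset.univ Finset.univ (cenf (∫ t, t ∂ν) a) (cenf (∫ t, t ∂ν) v)‖)
                ((continuous_bsum y Finset.univ Finset.univ continuous_const
                  hcenC).norm.aestronglyMeasurable)
      calc ∫ p, ‖bsum y Finset.univ Sᶜ (cenf (∫ t, t ∂ν) p.1) (cenf (∫ t, t ∂ν) p.2)‖ ∂((Measure.pi fun _ : Fin n => ν).prod (Measure.pi fun _ : Fin n => ν))
          = ∫ a, ∫ b, ‖bsum y Finset.univ Sᶜ (cenf (∫ t, t ∂ν) a) (cenf (∫ t, t ∂ν) b)‖ ∂(Measure.pi fun _ : Fin n => ν) ∂(Measure.pi fun _ : Fin n => ν) :=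
            integral_prod (f := fun p =>
              ‖bsum y Finset.univ Sᶜ (cenf (∫ t, t ∂ν) p.1) (cenf (∫ t, t ∂ν) p.2)‖) (hIntU_pp S)
        _ ≤ ∫ a, ∫ v, ‖bsum y Finset.univ Finset.univ (cenf (∫ t, t ∂ν) a) (cenf (∫ t, t ∂ν) v)‖ ∂(Measure.pi fun _ : Fin n => ν) ∂(Measure.pi fun _ : Fin n => ν) :=
            integral_mono (hIntU_pp S).integral_prod_left hIntDc_pp.integral_prod_left hafix
        _ = ∫ p, ‖bsum y Finset.univ Finset.univ (cenf (∫ t, t ∂ν) p.1) (cenf (∫ t, t ∂ν) p.2)‖ ∂((Measure.pi fun _ : Fin n => ν).prod (Measure.pi fun _ : Fin n => ν)) :=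
            (integral_prod (f := fun p =>
              ‖bsum y Finset.univ Finset.univ (cenf (∫ t, t ∂ν) p.1) (cenf (∫ t, t ∂ν) p.2)‖) hIntDc_pp).symm
    rw [ha]
    exact hb.trans hc
  -- averaging over subsets
  have hDc_diag : ∫ a, ‖bsum y Finset.univ Finset.univ (cenf (∫ t, t ∂ν) a) (cenf (∫ t, t ∂ν) a)‖ ∂(Measure.pi fun _ : Fin n => ν)
      ≤ 16 * ∫ p, ‖bsum y Finset.univ Finset.univ p.1 p.2‖ ∂((Measure.pi fun _ : Fin n => ν).prod (Measure.pi fun _ : Fin n => ν)) := by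
    have hpow : (0:ℝ) < (2:ℝ) ^ (n - 2) := by positivity
    have hpt : ∀ a : Fin n → ℝ,
        ‖bsum y Finset.univ Finset.univ (cenf (∫ t, t ∂ν) a) (cenf (∫ t, t ∂ν) a)‖
          ≤ ((2:ℝ) ^ (n - 2))⁻¹
            * ∑ S : Finset (Fin n), ‖bsum y S Sᶜ (cenf (∫ t, t ∂ν) a) (cenf (∫ t, t ∂ν) a)‖ := by
      intro a
      have h3 : ((2:ℝ) ^ (n - 2)) • bsum y Finset.univ Finset.univ (cenf (∫ t, t ∂ν) a) (cenf (∫ t, t ∂ν) a)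
          = ∑ S : Finset (Fin n), bsum y S Sᶜ (cenf (∫ t, t ∂ν) a) (cenf (∫ t, t ∂ν) a) := by
        rw [sum_bsum_compl hn2 y hy (cenf (∫ t, t ∂ν) a), ← Nat.cast_smul_eq_nsmul ℝ]
        norm_num
      have h4 : ‖bsum y Finset.univ Finset.univ (cenf (∫ t, t ∂ν) a) (cenf (∫ t, t ∂ν) a)‖
          = ((2:ℝ) ^ (n - 2))⁻¹
            * ‖∑ S : Finset (Fin n), bsum y S Sᶜ (cenf (∫ t, t ∂ν) a) (cenf (∫ t, t ∂ν) a)‖ := by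
        rw [← h3, norm_smul, Real.norm_eq_abs, abs_of_pos hpow, ← mul_assoc,
          inv_mul_cancel₀ (ne_of_gt hpow), one_mul]
      rw [h4]
      exact mul_le_mul_of_nonneg_left (norm_sum_le _ _) (inv_nonneg.2 hpow.le)
    calc ∫ a, ‖bsum y Finset.univ Finset.univ (cenf (∫ t, t ∂ν) a) (cenf (∫ t, t ∂ν) a)‖ ∂(Measure.pi fun _ : Fin n => ν)
        ≤ ∫ a, ((2:ℝ) ^ (n - 2))⁻¹
            * ∑ S : Finset (Fin n), ‖bsum y S Sᶜ (cenf (∫ t, t ∂ν) a) (cenf (∫ t, t ∂ν) a)‖ ∂(Measure.pi fun _ : Fin n => ν) :=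
          integral_mono hIntDc_diag
            ((integrable_finset_sum _ fun S _ => hIntT_diag S).const_mul _) hpt
      _ = ((2:ℝ) ^ (n - 2))⁻¹
            * ∑ S : Finset (Fin n), ∫ a, ‖bsum y S Sᶜ (cenf (∫ t, t ∂ν) a) (cenf (∫ t, t ∂ν) a)‖ ∂(Measure.pi fun _ : Fin n => ν) := by
          rw [integral_const_mul, integral_finset_sum _ fun S _ => hIntT_diag S]
      _ ≤ ((2:ℝ) ^ (n - 2))⁻¹ * ∑ _S : Finset (Fin n),
            ∫ p, ‖bsum y Finset.univ Finset.univ (cenf (∫ t, t ∂ν) p.1) (cenf (∫ t, t ∂ν) p.2)‖ ∂((Measure.pi fun _ : Fin n => ν).prod (Measure.pi fun _ : Fin n => ν)) := by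
          refine mul_le_mul_of_nonneg_left (Finset.sum_le_sum fun S _ => hTS S)
            (inv_nonneg.2 hpow.le)
      _ = ((2:ℝ) ^ (n - 2))⁻¹ * ((2:ℝ) ^ n
            * ∫ p, ‖bsum y Finset.univ Finset.univ (cenf (∫ t, t ∂ν) p.1) (cenf (∫ t, t ∂ν) p.2)‖ ∂((Measure.pi fun _ : Fin n => ν).prod (Measure.pi fun _ : Fin n => ν))) := by
          rw [Finset.sum_const, Finset.card_univ, Fintype.card_finset, Fintype.card_fin,
            nsmul_eq_mul]
          norm_num
      _ = 4 * ∫ p, ‖bsum y Finset.univ Finset.univ (cenf (∫ t, t ∂ν) p.1) (cenf (∫ t, t ∂ν) p.2)‖ ∂((Measure.pi fun _ : Fin n => ν).prod (Measure.pi fun _ : Fin n => ν)) := by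
          rw [← mul_assoc]
          congr 1
          have hne : n - 2 + 2 = n := by omega
          rw [← hne, pow_add]
          field_simp
          simp only [Nat.add_sub_cancel, Nat.add_sub_cancel_left]
          ring
      _ ≤ 4 * (4 * ∫ p, ‖bsum y Finset.univ Finset.univ p.1 p.2‖ ∂((Measure.pi fun _ : Fin n => ν).prod (Measure.pi fun _ : Fin n => ν))) := by
          exact mul_le_mul_of_nonneg_left hFle (by norm_num)
      _ = 16 * ∫ p, ‖bsum y Finset.univ Finset.univ p.1 p.2‖ ∂((Measure.pi fun _ : Fin n => ν).prod (Measure.pi fun _ : Fin n => ν)) := by ring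
  -- final assembly
  have hfinal : ∀ a : Fin n → ℝ, ‖bsum y Finset.univ Finset.univ a a‖
      ≤ ‖bsum y Finset.univ Finset.univ (cenf (∫ t, t ∂ν) a) (cenf (∫ t, t ∂ν) a)‖
        + ‖bsum y Finset.univ Finset.univ a (fun _ => (∫ t, t ∂ν))‖
        + ‖bsum y Finset.univ Finset.univ (fun _ => (∫ t, t ∂ν)) a‖
        + ‖bsum y Finset.univ Finset.univ (fun _ : Fin n => (∫ t, t ∂ν)) (fun _ : Fin n => (∫ t, t ∂ν))‖ := by
    intro a
    rw [bsum_decomp y (∫ t, t ∂ν) a a]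
    calc ‖bsum y Finset.univ Finset.univ (cenf (∫ t, t ∂ν) a) (cenf (∫ t, t ∂ν) a)
          + bsum y Finset.univ Finset.univ a (fun _ => (∫ t, t ∂ν))
          + bsum y Finset.univ Finset.univ (fun _ => (∫ t, t ∂ν)) a
          - bsum y Finset.univ Finset.univ (fun _ : Fin n => (∫ t, t ∂ν)) (fun _ : Fin n => (∫ t, t ∂ν))‖
        ≤ ‖bsum y Finset.univ Finset.univ (cenf (∫ t, t ∂ν) a) (cenf (∫ t, t ∂ν) a)
            + bsum y Finset.univ Finset.univ a (fun _ => (∫ t, t ∂ν))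
            + bsum y Finset.univ Finset.univ (fun _ => (∫ t, t ∂ν)) a‖
          + ‖bsum y Finset.univ Finset.univ (fun _ : Fin n => (∫ t, t ∂ν)) (fun _ : Fin n => (∫ t, t ∂ν))‖ :=
          norm_sub_le _ _
      _ ≤ (‖bsum y Finset.univ Finset.univ (cenf (∫ t, t ∂ν) a) (cenf (∫ t, t ∂ν) a)
            + bsum y Finset.univ Finset.univ a (fun _ => (∫ t, t ∂ν))‖
          + ‖bsum y Finset.univ Finset.univ (fun _ => (∫ t, t ∂ν)) a‖)
          + ‖bsum y Finset.univ Finset.univ (fun _ : Fin n => (∫ t, t ∂ν)) (fun _ : Fin n => (∫ t, t ∂ν))‖ :=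
          add_le_add_left (norm_add_le _ _) _
      _ ≤ ((‖bsum y Finset.univ Finset.univ (cenf (∫ t, t ∂ν) a) (cenf (∫ t, t ∂ν) a)‖
            + ‖bsum y Finset.univ Finset.univ a (fun _ => (∫ t, t ∂ν))‖)
          + ‖bsum y Finset.univ Finset.univ (fun _ => (∫ t, t ∂ν)) a‖)
          + ‖bsum y Finset.univ Finset.univ (fun _ : Fin n => (∫ t, t ∂ν)) (fun _ : Fin n => (∫ t, t ∂ν))‖ :=
          add_le_add_left (add_le_add_left (norm_add_le _ _) _) _
  have hsplit2 : ∫ a, (‖bsum y Finset.univ Finset.univ (cenf (∫ t, t ∂ν) a) (cenf (∫ t, t ∂ν) a)‖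
        + ‖bsum y Finset.univ Finset.univ a (fun _ => (∫ t, t ∂ν))‖
        + ‖bsum y Finset.univ Finset.univ (fun _ => (∫ t, t ∂ν)) a‖
        + ‖bsum y Finset.univ Finset.univ (fun _ : Fin n => (∫ t, t ∂ν)) (fun _ : Fin n => (∫ t, t ∂ν))‖) ∂(Measure.pi fun _ : Fin n => ν)
      = (∫ a, ‖bsum y Finset.univ Finset.univ (cenf (∫ t, t ∂ν) a) (cenf (∫ t, t ∂ν) a)‖ ∂(Measure.pi fun _ : Fin n => ν))
        + (∫ a, ‖bsum y Finset.univ Finset.univ a (fun _ => (∫ t, t ∂ν))‖ ∂(Measure.pi fun _ : Fin n => ν))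
        + (∫ a, ‖bsum y Finset.univ Finset.univ (fun _ => (∫ t, t ∂ν)) a‖ ∂(Measure.pi fun _ : Fin n => ν))
        + ‖bsum y Finset.univ Finset.univ (fun _ : Fin n => (∫ t, t ∂ν)) (fun _ : Fin n => (∫ t, t ∂ν))‖ := by
    have h12 : Integrable (fun a : Fin n → ℝ =>
        ‖bsum y Finset.univ Finset.univ (cenf (∫ t, t ∂ν) a) (cenf (∫ t, t ∂ν) a)‖
          + ‖bsum y Finset.univ Finset.univ a (fun _ => (∫ t, t ∂ν))‖) (Measure.pi fun _ : Fin n => ν) :=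
      hIntDc_diag.add hIntP
    have h123 : Integrable (fun a : Fin n → ℝ =>
        ‖bsum y Finset.univ Finset.univ (cenf (∫ t, t ∂ν) a) (cenf (∫ t, t ∂ν) a)‖
          + ‖bsum y Finset.univ Finset.univ a (fun _ => (∫ t, t ∂ν))‖
          + ‖bsum y Finset.univ Finset.univ (fun _ => (∫ t, t ∂ν)) a‖) (Measure.pi fun _ : Fin n => ν) :=
      h12.add hIntQ
    rw [integral_add h123 (integrable_const _), integral_add h12 hIntQ,
      integral_add hIntDc_diag hIntP, integral_const]
    simp [measure_univ]
  calc ∫ a, ‖bsum y Finset.univ Finset.univ a a‖ ∂(Measure.pi fun _ : Fin n => ν)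
      ≤ ∫ a, (‖bsum y Finset.univ Finset.univ (cenf (∫ t, t ∂ν) a) (cenf (∫ t, t ∂ν) a)‖
          + ‖bsum y Finset.univ Finset.univ a (fun _ => (∫ t, t ∂ν))‖
          + ‖bsum y Finset.univ Finset.univ (fun _ => (∫ t, t ∂ν)) a‖
          + ‖bsum y Finset.univ Finset.univ (fun _ : Fin n => (∫ t, t ∂ν)) (fun _ : Fin n => (∫ t, t ∂ν))‖)
          ∂(Measure.pi fun _ : Fin n => ν) :=
        integral_mono hIntD_diag
          (((hIntDc_diag.add hIntP).add hIntQ).add (integrable_const _)) hfinal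
    _ ≤ 20 * ∫ p, ‖bsum y Finset.univ Finset.univ p.1 p.2‖ ∂((Measure.pi fun _ : Fin n => ν).prod (Measure.pi fun _ : Fin n => ν)) := by
        rw [hsplit2]
        linarith [hDc_diag, hPle, hQle, hKle, hR0]

end CoreThm

end BTDec

open BTDec UniformSpace

/-- Decoupling lemma of Bourgain–Tzafriri: for bounded i.i.d. real random
variables `ξ₁,…,ξ_n`, an independent copy `ξ'₁,…,ξ'_n` of the sequence, and
vectors `x_{ij}` in a Banach space with zero diagonal,
`E‖∑_{i,j} ξ_i ξ_j x_{ij}‖ ≤ 20 E‖∑_{i,j} ξ_i ξ'_j x_{ij}‖`. -/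
theorem decoupling {n : ℕ} (hn : 0 < n)
    (E : Type) [NormedAddCommGroup E] [NormedSpace ℝ E]
    (Ω : Type) [MeasureSpace Ω] [IsProbabilityMeasure (volume : Measure Ω)]
    (ξ ξ' : Fin n → Ω → ℝ)
    (hmeas : ∀ i, Measurable (ξ i)) (hmeas' : ∀ i, Measurable (ξ' i))
    (hbdd : ∃ B : ℝ, ∀ i ω, |ξ i ω| ≤ B)
    (hindep : iIndepFun (Sum.elim ξ ξ' : Fin n ⊕ Fin n → Ω → ℝ))
    (hid : ∀ s : Fin n ⊕ Fin n,
      IdentDistrib (Sum.elim ξ ξ' s) (ξ ⟨0, hn⟩))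
    (x : Fin n → Fin n → E) (hx : ∀ i, x i i = 0) :
    (∫ ω, ‖∑ i : Fin n, ∑ j : Fin n, (ξ i ω * ξ j ω) • x i j‖)
      ≤ 20 * ∫ ω, ‖∑ i : Fin n, ∑ j : Fin n, (ξ i ω * ξ' j ω) • x i j‖ := by
  classical
  rcases Nat.lt_or_ge n 2 with h1 | h2
  · -- n = 1
    have hn1 : n = 1 := by omega
    subst hn1
    have hz : ∀ ω : Ω, (∑ i : Fin 1, ∑ j : Fin 1, (ξ i ω * ξ j ω) • x i j) = 0 := by
      intro ω
      simp [Fin.sum_univ_one, hx]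
    simp only [hz, norm_zero, integral_zero]
    exact mul_nonneg (by norm_num) (integral_nonneg fun ω => norm_nonneg _)
  · -- main case
    obtain ⟨B, hBB⟩ := hbdd
    set L : E →ₗᵢ[ℝ] Completion E := Completion.toComplₗᵢ with hL
    set y : Fin n → Fin n → Completion E := fun i j => L (x i j) with hydef
    have hy : ∀ i, y i i = 0 := fun i => by rw [hydef]; simp [hx i]
    have hnorm : ∀ u v : Fin n → ℝ,
        ‖∑ i : Fin n, ∑ j : Fin n, (u i * v j) • x i j‖
          = ‖bsum y Finset.univ Finset.univ u v‖ := by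
      intro u v
      rw [← L.norm_map (∑ i : Fin n, ∑ j : Fin n, (u i * v j) • x i j)]
      congr 1
      rw [map_sum]
      refine Finset.sum_congr rfl fun i _ => ?_
      rw [map_sum]
      exact Finset.sum_congr rfl fun j _ => L.map_smul _ _
    set ν : Measure ℝ := Measure.map (ξ ⟨0, hn⟩) volume with hνdef
    haveI : IsProbabilityMeasure ν := Measure.isProbabilityMeasure_map (hmeas _).aemeasurable
    have hsetB : MeasurableSet {t : ℝ | |t| ≤ B} :=
      (isClosed_le continuous_abs continuous_const).measurableSet
    have hBae : ∀ᵐ t ∂ν, |t| ≤ B := by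
      rw [hνdef, ae_map_iff (hmeas _).aemeasurable hsetB]
      exact Filter.Eventually.of_forall fun ω => hBB _ ω
    have helim : ∀ s : Fin n ⊕ Fin n, Measurable (Sum.elim ξ ξ' s) := by
      intro s
      cases s with
      | inl i => exact hmeas i
      | inr j => exact hmeas' j
    set Φ : Ω → (Fin n ⊕ Fin n) → ℝ := fun ω z => Sum.elim ξ ξ' z ω with hΦdef
    have hΦmeas : Measurable Φ := measurable_pi_lambda _ fun z => helim z
    have hΦlaw : (volume : Measure Ω).map Φ = Measure.pi fun _ : Fin n ⊕ Fin n => ν := by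
      refine (Measure.pi_eq fun s hs => ?_).symm
      rw [Measure.map_apply hΦmeas (MeasurableSet.univ_pi hs)]
      have hpre : Φ ⁻¹' Set.pi Set.univ s
          = ⋂ z ∈ (Finset.univ : Finset (Fin n ⊕ Fin n)), Sum.elim ξ ξ' z ⁻¹' s z := by
        ext ω
        simp [hΦdef, Set.mem_pi]
      rw [hpre, hindep.measure_inter_preimage_eq_mul Finset.univ (fun z _ => hs z)]
      refine Finset.prod_congr rfl fun z _ => ?_
      rw [← Measure.map_apply (helim z) (hs z), (hid z).map_eq, hνdef]
    -- the two measurable equivalence steps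
    have mpE := measurePreserving_sumPiEquivProdPi_symm
      (X := fun _ : Fin n ⊕ Fin n => ℝ) (fun _ => ν)
    have hcont1 : Continuous fun f : (Fin n ⊕ Fin n) → ℝ =>
        ‖bsum y Finset.univ Finset.univ (fun i => f (Sum.inl i)) (fun i => f (Sum.inl i))‖ :=
      (continuous_bsum y _ _ (continuous_pi fun i => continuous_apply (Sum.inl i))
        (continuous_pi fun i => continuous_apply (Sum.inl i))).norm
    have hcont2 : Continuous fun f : (Fin n ⊕ Fin n) → ℝ =>
        ‖bsum y Finset.univ Finset.univ (fun i => f (Sum.inl i)) (fun j => f (Sum.inr j))‖ :=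
      (continuous_bsum y _ _ (continuous_pi fun i => continuous_apply (Sum.inl i))
        (continuous_pi fun j => continuous_apply (Sum.inr j))).norm
    have hcontD : Continuous fun q : (Fin n → ℝ) × (Fin n → ℝ) =>
        ‖bsum y Finset.univ Finset.univ q.1 q.1‖ :=
      (continuous_bsum y _ _ continuous_fst continuous_fst).norm
    have hLHS : (∫ ω, ‖∑ i : Fin n, ∑ j : Fin n, (ξ i ω * ξ j ω) • x i j‖)
        = ∫ a, ‖bsum y Finset.univ Finset.univ a a‖ ∂(Measure.pi fun _ : Fin n => ν) := by
      have e1 : (∫ ω, ‖∑ i : Fin n, ∑ j : Fin n, (ξ i ω * ξ j ω) • x i j‖)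
          = ∫ ω, ‖bsum y Finset.univ Finset.univ (fun i => Φ ω (Sum.inl i))
              (fun i => Φ ω (Sum.inl i))‖ := by
        refine integral_congr_ae (Filter.Eventually.of_forall fun ω => ?_)
        exact hnorm (fun i => ξ i ω) (fun j => ξ j ω)
      have e2 : ∫ ω, ‖bsum y Finset.univ Finset.univ (fun i => Φ ω (Sum.inl i))
              (fun i => Φ ω (Sum.inl i))‖
          = ∫ f, ‖bsum y Finset.univ Finset.univ (fun i => f (Sum.inl i))
              (fun i => f (Sum.inl i))‖ ∂((volume : Measure Ω).map Φ) :=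
        (integral_map hΦmeas.aemeasurable
          (by rw [hΦlaw]; exact hcont1.aestronglyMeasurable)).symm
      have e3 : ∫ f, ‖bsum y Finset.univ Finset.univ (fun i => f (Sum.inl i))
              (fun i => f (Sum.inl i))‖ ∂(Measure.pi fun _ : Fin n ⊕ Fin n => ν)
          = ∫ q, ‖bsum y Finset.univ Finset.univ q.1 q.1‖
              ∂((Measure.pi fun _ : Fin n => ν).prod (Measure.pi fun _ : Fin n => ν)) := by
        rw [← mpE.map_eq, integral_map mpE.measurable.aemeasurable
          (by rw [mpE.map_eq]; exact hcont1.aestronglyMeasurable)]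
        rfl
      have e4 : ∫ q, ‖bsum y Finset.univ Finset.univ q.1 q.1‖
              ∂((Measure.pi fun _ : Fin n => ν).prod (Measure.pi fun _ : Fin n => ν))
          = ∫ a, ‖bsum y Finset.univ Finset.univ a a‖ ∂(Measure.pi fun _ : Fin n => ν) := by
        have h := integral_map (φ := (Prod.fst : (Fin n → ℝ) × (Fin n → ℝ) → (Fin n → ℝ)))
          measurable_fst.aemeasurable
          (f := fun a => ‖bsum y Finset.univ Finset.univ a a‖)
          (μ := (Measure.pi fun _ : Fin n => ν).prod (Measure.pi fun _ : Fin n => ν))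
          (by rw [Measure.map_fst_prod, measure_univ, one_smul]
              exact (continuous_bsum y _ _ continuous_id continuous_id).norm.aestronglyMeasurable)
        rw [Measure.map_fst_prod, measure_univ, one_smul] at h
        exact h.symm
      rw [e1, e2, hΦlaw, e3, e4]
    have hRHS : (∫ ω, ‖∑ i : Fin n, ∑ j : Fin n, (ξ i ω * ξ' j ω) • x i j‖)
        = ∫ q, ‖bsum y Finset.univ Finset.univ q.1 q.2‖
            ∂((Measure.pi fun _ : Fin n => ν).prod (Measure.pi fun _ : Fin n => ν)) := by
      have e1 : (∫ ω, ‖∑ i : Fin n, ∑ j : Fin n, (ξ i ω * ξ' j ω) • x i j‖)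
          = ∫ ω, ‖bsum y Finset.univ Finset.univ (fun i => Φ ω (Sum.inl i))
              (fun j => Φ ω (Sum.inr j))‖ := by
        refine integral_congr_ae (Filter.Eventually.of_forall fun ω => ?_)
        exact hnorm (fun i => ξ i ω) (fun j => ξ' j ω)
      have e2 : ∫ ω, ‖bsum y Finset.univ Finset.univ (fun i => Φ ω (Sum.inl i))
              (fun j => Φ ω (Sum.inr j))‖
          = ∫ f, ‖bsum y Finset.univ Finset.univ (fun i => f (Sum.inl i))
              (fun j => f (Sum.inr j))‖ ∂((volume : Measure Ω).map Φ) :=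
        (integral_map hΦmeas.aemeasurable
          (by rw [hΦlaw]; exact hcont2.aestronglyMeasurable)).symm
      have e3 : ∫ f, ‖bsum y Finset.univ Finset.univ (fun i => f (Sum.inl i))
              (fun j => f (Sum.inr j))‖ ∂(Measure.pi fun _ : Fin n ⊕ Fin n => ν)
          = ∫ q, ‖bsum y Finset.univ Finset.univ q.1 q.2‖
              ∂((Measure.pi fun _ : Fin n => ν).prod (Measure.pi fun _ : Fin n => ν)) := by
        rw [← mpE.map_eq, integral_map mpE.measurable.aemeasurable
          (by rw [mpE.map_eq]; exact hcont2.aestronglyMeasurable)]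
        rfl
      rw [e1, e2, hΦlaw, e3]
    rw [hLHS, hRHS]
    exact core ν h2 y hy hBae
end
end

section
/- Cut-norm decay theorem: Let A be an n×n real matrix and let Q ⊆ {1,…,n} be a random subset obtained by including each element independently with probability q/n. Then E‖A|_{Q×Q}‖_C ≤ C[ (q/n)² ‖A − D(A)‖_C + (q/n)‖D(A)‖_C + (q/n)^{3/2} (‖A‖_Col + ‖Aᵀ‖_Col) ], where C is an absolute constant. -/
open scoped Classical
set_option linter.unusedSectionVars false
noncomputable section

/-- Cut norm. -/
def cutNorm {m n : ℕ} (A : Matrix (Fin m) (Fin n) ℝ) : ℝ :=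
  ⨆ p : Finset (Fin m) × Finset (Fin n), |∑ i ∈ p.1, ∑ j ∈ p.2, A i j|

/-- Sum of Euclidean lengths of the columns. -/
def colSum {m n : ℕ} (A : Matrix (Fin m) (Fin n) ℝ) : ℝ :=
  ∑ j, Real.sqrt (∑ i, (A i j) ^ 2)

/-- Restriction to a Q×Q block (entries outside set to 0); its cut norm equals
that of the submatrix `(A_{ij})_{i,j∈Q}`. -/
def restrict {n : ℕ} (Q : Finset (Fin n)) (A : Matrix (Fin n) (Fin n) ℝ) :
    Matrix (Fin n) (Fin n) ℝ :=
  Matrix.of fun i j => if i ∈ Q ∧ j ∈ Q then A i j else 0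

/-- Diagonal part of a square matrix. -/
def diagPart {n : ℕ} (A : Matrix (Fin n) (Fin n) ℝ) : Matrix (Fin n) (Fin n) ℝ :=
  Matrix.of fun i j => if i = j then A i j else 0

/-- Expectation over a random subset of `Fin n`, each element included
independently with probability `p`. -/
def ESub {n : ℕ} (p : ℝ) (f : Finset (Fin n) → ℝ) : ℝ :=
  ∑ Q : Finset (Fin n), p ^ Q.card * (1 - p) ^ (n - Q.card) * f Q

namespace CND

open Finset

/-! ### Sup helpers -/
section Sup
variable {τ : Type*} [Fintype τ] [Nonempty τ]

lemma bddf (f : τ → ℝ) : BddAbove (Set.range f) := (Set.finite_range f).bddAbove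

lemma le_csup (f : τ → ℝ) (t : τ) : f t ≤ ⨆ u, f u := le_ciSup (bddf f) t

lemma csup_le {f : τ → ℝ} {a : ℝ} (h : ∀ t, f t ≤ a) : (⨆ t, f t) ≤ a := ciSup_le h

lemma exists_csup (f : τ → ℝ) : ∃ t, (⨆ u, f u) = f t := by
  obtain ⟨t, ht⟩ := Finite.exists_max f
  exact ⟨t, le_antisymm (csup_le ht) (le_csup f t)⟩

lemma csup_add_le (f g : τ → ℝ) : (⨆ t, (f t + g t)) ≤ (⨆ t, f t) + ⨆ t, g t :=
  csup_le fun t => add_le_add (le_csup f t) (le_csup g t)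

lemma csup_nonneg {f : τ → ℝ} (t : τ) (h : 0 ≤ f t) : 0 ≤ ⨆ u, f u := h.trans (le_csup f t)
end Sup

/-! ### generic weighted Cauchy-Schwarz -/
lemma expect_le_sqrt {κ : Type*} {P : Finset κ} (w x : κ → ℝ)
    (hw : ∀ Q ∈ P, 0 ≤ w Q) (hmass : ∑ Q ∈ P, w Q = 1) (hx : ∀ Q ∈ P, 0 ≤ x Q) :
    ∑ Q ∈ P, w Q * x Q ≤ Real.sqrt (∑ Q ∈ P, w Q * (x Q) ^ 2) := by
  have h1 : (∑ Q ∈ P, w Q * x Q) ^ 2 ≤ ∑ Q ∈ P, w Q * (x Q) ^ 2 := by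
    have hcs := Finset.sum_mul_sq_le_sq_mul_sq P (fun Q => Real.sqrt (w Q))
      (fun Q => Real.sqrt (w Q) * x Q)
    calc (∑ Q ∈ P, w Q * x Q) ^ 2
        = (∑ Q ∈ P, Real.sqrt (w Q) * (Real.sqrt (w Q) * x Q)) ^ 2 := by
          congr 1; apply Finset.sum_congr rfl; intro Q hQ
          rw [← mul_assoc, Real.mul_self_sqrt (hw Q hQ)]
      _ ≤ (∑ Q ∈ P, Real.sqrt (w Q) ^ 2) * ∑ Q ∈ P, (Real.sqrt (w Q) * x Q) ^ 2 := hcs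
      _ = ∑ Q ∈ P, w Q * (x Q) ^ 2 := by
          rw [Finset.sum_congr rfl (fun Q hQ => Real.sq_sqrt (hw Q hQ)), hmass, one_mul]
          apply Finset.sum_congr rfl; intro Q hQ
          rw [mul_pow, Real.sq_sqrt (hw Q hQ)]
  have h0 : 0 ≤ ∑ Q ∈ P, w Q * x Q :=
    Finset.sum_nonneg fun Q hQ => mul_nonneg (hw Q hQ) (hx Q hQ)
  have h2 : 0 ≤ ∑ Q ∈ P, w Q * (x Q) ^ 2 :=
    Finset.sum_nonneg fun Q hQ => mul_nonneg (hw Q hQ) (sq_nonneg _)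
  exact (Real.le_sqrt h0 h2).2 h1

/-! ### Bernoulli subset expectation -/
variable {ι : Type*} [Fintype ι] [DecidableEq ι]

def wt (p : ℝ) (s : Finset ι) (Q : Finset ι) : ℝ := p ^ Q.card * (1 - p) ^ (s.card - Q.card)

def EQ (p : ℝ) (s : Finset ι) (f : Finset ι → ℝ) : ℝ := ∑ Q ∈ s.powerset, wt p s Q * f Q

variable {p : ℝ}

lemma EQ_congr {s : Finset ι} {f g : Finset ι → ℝ} (h : ∀ Q ∈ s.powerset, f Q = g Q) :
    EQ p s f = EQ p s g :=
  Finset.sum_congr rfl fun Q hQ => by rw [h Q hQ]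

lemma EQ_empty (f : Finset ι → ℝ) : EQ p ∅ f = f ∅ := by
  simp [EQ, wt]

lemma EQ_insert {a : ι} {s : Finset ι} (ha : a ∉ s) (f : Finset ι → ℝ) :
    EQ p (insert a s) f = p * EQ p s (fun Q => f (insert a Q)) + (1 - p) * EQ p s f := by
  unfold EQ
  have hdisj : Disjoint s.powerset (s.powerset.image (insert a)) := by
    rw [Finset.disjoint_right]
    intro Q hQ hQ'
    obtain ⟨R, hR, rfl⟩ := Finset.mem_image.1 hQ
    exact ha (Finset.mem_powerset.1 hQ' (Finset.mem_insert_self a R))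
  rw [Finset.powerset_insert, Finset.sum_union hdisj, Finset.sum_image ?inj]
  case inj =>
    intro Q hQ R hR hQR
    have haQ : a ∉ Q := fun h => ha (Finset.mem_powerset.1 hQ h)
    have haR : a ∉ R := fun h => ha (Finset.mem_powerset.1 hR h)
    have := congrArg (Finset.erase · a) hQR
    simpa [Finset.erase_insert haQ, Finset.erase_insert haR] using this
  rw [Finset.mul_sum, Finset.mul_sum, add_comm]
  congr 1
  · apply Finset.sum_congr rfl; intro Q hQ
    have hQs := Finset.mem_powerset.1 hQ
    have haQ : a ∉ Q := fun h => ha (hQs h)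
    have hcard : Q.card ≤ s.card := Finset.card_le_card hQs
    unfold wt
    rw [Finset.card_insert_of_notMem ha, Finset.card_insert_of_notMem haQ]
    have he : s.card + 1 - (Q.card + 1) = s.card - Q.card := by omega
    rw [he, pow_succ]
    ring
  · apply Finset.sum_congr rfl; intro Q hQ
    have hQs := Finset.mem_powerset.1 hQ
    have hcard : Q.card ≤ s.card := Finset.card_le_card hQs
    unfold wt
    rw [Finset.card_insert_of_notMem ha]
    have he : s.card + 1 - Q.card = (s.card - Q.card) + 1 := by omega
    rw [he, pow_succ]
    ring

lemma EQ_const (s : Finset ι) (c : ℝ) : EQ p s (fun _ => c) = c := by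
  induction s using Finset.induction with
  | empty => simp [EQ_empty]
  | insert _ _ ha ih => rw [EQ_insert ha]; rw [ih]; ring

lemma EQ_add (s : Finset ι) (f g : Finset ι → ℝ) :
    EQ p s (fun Q => f Q + g Q) = EQ p s f + EQ p s g := by
  unfold EQ; rw [← Finset.sum_add_distrib]; apply Finset.sum_congr rfl; intros; ring

lemma EQ_smul (s : Finset ι) (c : ℝ) (f : Finset ι → ℝ) :
    EQ p s (fun Q => c * f Q) = c * EQ p s f := by
  unfold EQ; rw [Finset.mul_sum]; apply Finset.sum_congr rfl; intros; ring

lemma EQ_sub (s : Finset ι) (f g : Finset ι → ℝ) :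
    EQ p s (fun Q => f Q - g Q) = EQ p s f - EQ p s g := by
  unfold EQ; rw [← Finset.sum_sub_distrib]; apply Finset.sum_congr rfl; intros; ring

lemma wt_nonneg (hp0 : 0 ≤ p) (hp1 : p ≤ 1) (s Q : Finset ι) : 0 ≤ wt p s Q := by
  have : (0:ℝ) ≤ 1 - p := by linarith
  unfold wt; positivity

lemma EQ_mono (hp0 : 0 ≤ p) (hp1 : p ≤ 1) {s : Finset ι} {f g : Finset ι → ℝ}
    (h : ∀ Q ∈ s.powerset, f Q ≤ g Q) : EQ p s f ≤ EQ p s g :=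
  Finset.sum_le_sum fun Q hQ =>
    mul_le_mul_of_nonneg_left (h Q hQ) (wt_nonneg hp0 hp1 s Q)

lemma EQ_le_const (hp0 : 0 ≤ p) (hp1 : p ≤ 1) {s : Finset ι} {f : Finset ι → ℝ} {c : ℝ}
    (h : ∀ Q ∈ s.powerset, f Q ≤ c) : EQ p s f ≤ c := by
  calc EQ p s f ≤ EQ p s (fun _ => c) := EQ_mono hp0 hp1 h
    _ = c := EQ_const s c

lemma EQ_nonneg (hp0 : 0 ≤ p) (hp1 : p ≤ 1) {s : Finset ι} {f : Finset ι → ℝ}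
    (h : ∀ Q ∈ s.powerset, 0 ≤ f Q) : 0 ≤ EQ p s f := by
  have h2 : EQ p s (fun _ => (0:ℝ)) ≤ EQ p s f := EQ_mono hp0 hp1 (by simpa using h)
  rwa [EQ_const] at h2

lemma EQ_finsum {κ : Type*} (s : Finset ι) (t : Finset κ) (F : κ → Finset ι → ℝ) :
    EQ p s (fun Q => ∑ j ∈ t, F j Q) = ∑ j ∈ t, EQ p s (F j) := by
  unfold EQ
  rw [Finset.sum_comm]
  apply Finset.sum_congr rfl; intros; rw [Finset.mul_sum]

lemma EQ_sum_mem (s : Finset ι) (c : ι → ℝ) :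
    EQ p s (fun Q => ∑ i ∈ Q, c i) = p * ∑ i ∈ s, c i := by
  induction s using Finset.induction with
  | empty => rw [EQ_empty]; simp
  | @insert a s ha ih =>
    rw [EQ_insert ha]
    have h1 : EQ p s (fun Q => ∑ i ∈ insert a Q, c i)
        = EQ p s (fun Q => c a + ∑ i ∈ Q, c i) := by
      apply EQ_congr; intro Q hQ
      rw [Finset.sum_insert (fun h => ha (Finset.mem_powerset.1 hQ h))]
    rw [h1, EQ_add, EQ_const, ih, Finset.sum_insert ha]
    ring

lemma EQ_union {s t : Finset ι} (hst : Disjoint s t) (f : Finset ι → ℝ) :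
    EQ p (s ∪ t) f = EQ p s (fun Q₁ => EQ p t (fun Q₂ => f (Q₁ ∪ Q₂))) := by
  induction t using Finset.induction generalizing f with
  | empty => simp [EQ_empty]
  | @insert a t ha ih =>
    have hat : a ∉ s ∪ t := by
      intro h
      rcases Finset.mem_union.1 h with h' | h'
      · exact (Finset.disjoint_right.1 hst (Finset.mem_insert_self a t)) h'
      · exact ha h'
    have hst' : Disjoint s t := hst.mono_right (Finset.subset_insert a t)
    have hun : s ∪ insert a t = insert a (s ∪ t) := Finset.union_insert a s t
    rw [hun, EQ_insert hat, ih hst' (f := fun Q => f (insert a Q)), ih hst' (f := f)]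
    have hrhs : ∀ Q₁ : Finset ι, EQ p (insert a t) (fun Q₂ => f (Q₁ ∪ Q₂))
        = p * EQ p t (fun Q₂ => f (insert a (Q₁ ∪ Q₂)))
          + (1 - p) * EQ p t (fun Q₂ => f (Q₁ ∪ Q₂)) := by
      intro Q₁
      rw [EQ_insert ha]
      congr 1
      congr 1
      apply EQ_congr
      intro Q₂ _
      rw [Finset.union_insert]
    rw [EQ_congr (fun Q₁ _ => hrhs Q₁)]
    rw [EQ_add, EQ_smul, EQ_smul]

lemma EQ_extend (hp0 : 0 ≤ p) (hp1 : p ≤ 1) {s : Finset ι} (h : Finset ι → ℝ)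
    (hmono : ∀ Q R : Finset ι, Q ⊆ R → h Q ≤ h R) :
    EQ p s h ≤ EQ p (univ : Finset ι) h := by
  have hu : s ∪ (univ \ s) = univ := Finset.union_sdiff_of_subset (Finset.subset_univ s)
  have hdisj : Disjoint s (univ \ s) := Finset.disjoint_sdiff
  rw [← hu, EQ_union hdisj]
  apply EQ_mono hp0 hp1
  intro Q₁ _
  have : h Q₁ = EQ p (univ \ s) (fun _ => h Q₁) := (EQ_const _ _).symm
  rw [this]
  apply EQ_mono hp0 hp1
  intro Q₂ _
  exact hmono _ _ (Finset.subset_union_left)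

lemma EQ_mass (s : Finset ι) : ∑ Q ∈ s.powerset, wt p s Q = 1 := by
  have := EQ_const (p := p) s 1
  unfold EQ at this
  simpa using this

lemma EQ_sqrt (hp0 : 0 ≤ p) (hp1 : p ≤ 1) {s : Finset ι} {f : Finset ι → ℝ}
    (hf : ∀ Q ∈ s.powerset, 0 ≤ f Q) :
    EQ p s (fun Q => Real.sqrt (f Q)) ≤ Real.sqrt (EQ p s f) := by
  unfold EQ
  have h1 := expect_le_sqrt (P := s.powerset) (wt p s) (fun Q => Real.sqrt (f Q))
    (fun Q hQ => wt_nonneg hp0 hp1 s Q) (EQ_mass s) (fun Q _ => Real.sqrt_nonneg _)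
  refine h1.trans (le_of_eq ?_)
  congr 1
  apply Finset.sum_congr rfl
  intro Q hQ
  rw [Real.sq_sqrt (hf Q hQ)]

lemma EQ_pair (s : Finset ι) (F : Finset ι → Finset ι → ℝ) :
    EQ p s (fun Q => EQ p s (fun R => F Q R))
      = ∑ x ∈ s.powerset ×ˢ s.powerset, (wt p s x.1 * wt p s x.2) * F x.1 x.2 := by
  have hsp := Finset.sum_product' (s := s.powerset) (t := s.powerset)
    (f := fun Q R => wt p s Q * wt p s R * F Q R)
  rw [hsp]
  unfold EQ
  apply Finset.sum_congr rfl; intro Q _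
  rw [Finset.mul_sum]
  apply Finset.sum_congr rfl; intro R _
  ring


def sgn (g : Finset ι) (i : ι) : ℝ := if i ∈ g then 1 else -1

def Eg (s : Finset ι) (f : Finset ι → ℝ) : ℝ := (∑ g ∈ s.powerset, f g) / 2 ^ s.card

lemma Eg_congr {s : Finset ι} {f g : Finset ι → ℝ} (h : ∀ Q ∈ s.powerset, f Q = g Q) :
    Eg s f = Eg s g := by
  unfold Eg; rw [Finset.sum_congr rfl h]

lemma Eg_empty (f : Finset ι → ℝ) : Eg ∅ f = f ∅ := by simp [Eg]

lemma Eg_insert {a : ι} {s : Finset ι} (ha : a ∉ s) (f : Finset ι → ℝ) :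
    Eg (insert a s) f = (Eg s (fun g => f (insert a g)) + Eg s f) / 2 := by
  unfold Eg
  have hdisj : Disjoint s.powerset (s.powerset.image (insert a)) := by
    rw [Finset.disjoint_right]
    intro Q hQ hQ'
    obtain ⟨R, hR, rfl⟩ := Finset.mem_image.1 hQ
    exact ha (Finset.mem_powerset.1 hQ' (Finset.mem_insert_self a R))
  rw [Finset.powerset_insert, Finset.sum_union hdisj, Finset.sum_image ?inj]
  case inj =>
    intro Q hQ R hR hQR
    have haQ : a ∉ Q := fun h => ha (Finset.mem_powerset.1 hQ h)
    have haR : a ∉ R := fun h => ha (Finset.mem_powerset.1 hR h)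
    have := congrArg (Finset.erase · a) hQR
    simpa [Finset.erase_insert haQ, Finset.erase_insert haR] using this
  rw [Finset.card_insert_of_notMem ha, pow_succ]
  field_simp
  ring

lemma Eg_const (s : Finset ι) (c : ℝ) : Eg s (fun _ => c) = c := by
  unfold Eg
  rw [Finset.sum_const, Finset.card_powerset, nsmul_eq_mul]
  field_simp
  push_cast
  ring

lemma Eg_add (s : Finset ι) (f g : Finset ι → ℝ) :
    Eg s (fun Q => f Q + g Q) = Eg s f + Eg s g := by
  unfold Eg
  rw [← add_div]
  congr 1
  simpa using Finset.sum_add_distrib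

lemma Eg_smul (s : Finset ι) (c : ℝ) (f : Finset ι → ℝ) :
    Eg s (fun Q => c * f Q) = c * Eg s f := by
  unfold Eg
  rw [← mul_div_assoc]
  congr 1
  exact (Finset.mul_sum _ _ _).symm

lemma Eg_mono {s : Finset ι} {f g : Finset ι → ℝ} (h : ∀ Q ∈ s.powerset, f Q ≤ g Q) :
    Eg s f ≤ Eg s g := by
  unfold Eg
  have h2 : (0:ℝ) < 2 ^ s.card := by positivity
  exact (div_le_div_iff_of_pos_right h2).2 (Finset.sum_le_sum h)

lemma Eg_le_const {s : Finset ι} {f : Finset ι → ℝ} {c : ℝ}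
    (h : ∀ Q ∈ s.powerset, f Q ≤ c) : Eg s f ≤ c := by
  calc Eg s f ≤ Eg s (fun _ => c) := Eg_mono h
    _ = c := Eg_const s c

lemma Eg_finsum {κ : Type*} (s : Finset ι) (t : Finset κ) (F : κ → Finset ι → ℝ) :
    Eg s (fun Q => ∑ j ∈ t, F j Q) = ∑ j ∈ t, Eg s (F j) := by
  unfold Eg
  rw [Finset.sum_comm, Finset.sum_div]

lemma abs_Eg_le (s : Finset ι) (f : Finset ι → ℝ) : |Eg s f| ≤ Eg s (fun Q => |f Q|) := by
  unfold Eg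
  rw [abs_div, abs_of_nonneg (a := (2:ℝ)^s.card) (by positivity)]
  apply div_le_div_of_nonneg_right ?_ (by positivity)
  exact Finset.abs_sum_le_sum_abs _ _

lemma Eg_mass (s : Finset ι) : ∑ g ∈ s.powerset, ((2:ℝ) ^ s.card)⁻¹ = 1 := by
  rw [Finset.sum_const, Finset.card_powerset, nsmul_eq_mul]
  field_simp
  push_cast
  rfl

/-- Orthogonality: second moment of a Rademacher sum. -/
lemma Eg_sq (s : Finset ι) (a : ι → ℝ) :
    Eg s (fun g => (∑ i ∈ s, sgn g i * a i) ^ 2) = ∑ i ∈ s, (a i) ^ 2 := by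
  induction s using Finset.induction with
  | empty => simp [Eg_empty]
  | @insert b s hb ih =>
    rw [Eg_insert hb]
    have key : ∀ g ∈ s.powerset,
        (∑ i ∈ insert b s, sgn (insert b g) i * a i) ^ 2
          + (∑ i ∈ insert b s, sgn g i * a i) ^ 2
        = 2 * ((a b) ^ 2 + (∑ i ∈ s, sgn g i * a i) ^ 2) := by
      intro g hg
      have hgs := Finset.mem_powerset.1 hg
      have hbg : b ∉ g := fun h => hb (hgs h)
      have h1 : ∀ i ∈ s, sgn (insert b g) i * a i = sgn g i * a i := by
        intro i hi
        have hib : i ≠ b := fun h => hb (h ▸ hi)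
        simp [sgn, Finset.mem_insert, hib]
      rw [Finset.sum_insert hb, Finset.sum_insert hb, Finset.sum_congr rfl h1]
      have hsb : sgn (insert b g) b = 1 := by unfold sgn; simp
      have hsb2 : sgn g b = -1 := by unfold sgn; simp [hbg]
      rw [hsb, hsb2]
      ring
    calc (Eg s (fun g => (∑ i ∈ insert b s, sgn (insert b g) i * a i) ^ 2)
            + Eg s (fun g => (∑ i ∈ insert b s, sgn g i * a i) ^ 2)) / 2
        = Eg s (fun g => ((∑ i ∈ insert b s, sgn (insert b g) i * a i) ^ 2
            + (∑ i ∈ insert b s, sgn g i * a i) ^ 2) / 2) := by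
          rw [show ∀ x y : ℝ, (x + y) / 2 = 1/2 * (x + y) by intros; ring]
          rw [← Eg_add, ← Eg_smul s (1/2)]
          apply Eg_congr
          intros; ring
      _ = Eg s (fun g => (a b) ^ 2 + (∑ i ∈ s, sgn g i * a i) ^ 2) := by
          apply Eg_congr
          intro g hg
          rw [key g hg]
          ring
      _ = ∑ i ∈ insert b s, (a i) ^ 2 := by
          rw [Eg_add, Eg_const, ih, Finset.sum_insert hb]

/-- Khintchine-type bound. -/
lemma Eg_abs_le (s : Finset ι) (a : ι → ℝ) :
    Eg s (fun g => |∑ i ∈ s, sgn g i * a i|) ≤ Real.sqrt (∑ i ∈ s, (a i) ^ 2) := by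
  have h1 : Eg s (fun g => |∑ i ∈ s, sgn g i * a i|)
      ≤ Real.sqrt (Eg s (fun g => (∑ i ∈ s, sgn g i * a i) ^ 2)) := by
    unfold Eg
    rw [Finset.sum_div]
    have := expect_le_sqrt (P := s.powerset) (fun _ => ((2:ℝ) ^ s.card)⁻¹)
      (fun g => |∑ i ∈ s, sgn g i * a i|) (fun _ _ => by positivity) (Eg_mass s)
      (fun _ _ => abs_nonneg _)
    refine le_of_eq_of_le ?_ (this.trans (le_of_eq ?_))
    · apply Finset.sum_congr rfl; intros; rw [div_eq_mul_inv, mul_comm]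
    · congr 1
      rw [Finset.sum_div]
      apply Finset.sum_congr rfl; intros
      rw [sq_abs, div_eq_mul_inv, mul_comm]
  rwa [Eg_sq] at h1

lemma Eg_compl (s : Finset ι) (f : Finset ι → ℝ) :
    Eg s (fun g => f (s \ g)) = Eg s f := by
  unfold Eg
  congr 1
  apply Finset.sum_nbij' (fun g => s \ g) (fun g => s \ g)
  · intro g hg; exact Finset.mem_powerset.2 (Finset.sdiff_subset)
  · intro g hg; exact Finset.mem_powerset.2 (Finset.sdiff_subset)
  · intro g hg; exact Finset.sdiff_sdiff_eq_self (Finset.mem_powerset.1 hg)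
  · intro g hg; exact Finset.sdiff_sdiff_eq_self (Finset.mem_powerset.1 hg)
  · intro g hg; rfl


/-! ### two-point inequality and contraction principle -/

lemma twoPoint {τ : Type*} [Fintype τ] [Nonempty τ] (u β : τ → ℝ) :
    (⨆ t, (max (u t) 0 + β t)) + (⨆ t, (-(max (u t) 0) + β t))
      ≤ (⨆ t, (u t + β t)) + (⨆ t, (-(u t) + β t)) := by
  obtain ⟨t₁, h₁⟩ := exists_csup (fun t => max (u t) 0 + β t)
  obtain ⟨t₂, h₂⟩ := exists_csup (fun t => -(max (u t) 0) + β t)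
  rw [h₁, h₂]
  have hd : max (u t₁) 0 - max (u t₂) 0 ≤ |u t₁ - u t₂| := by
    have h := abs_max_sub_max_le_abs (u t₁) (u t₂) 0
    calc max (u t₁) 0 - max (u t₂) 0 ≤ |max (u t₁) 0 - max (u t₂) 0| := le_abs_self _
      _ ≤ |u t₁ - u t₂| := h
  rcases le_total (u t₂) (u t₁) with hc | hc
  · have habs : |u t₁ - u t₂| = u t₁ - u t₂ := abs_of_nonneg (by linarith)
    have l1 : u t₁ + β t₁ ≤ ⨆ t, (u t + β t) := le_csup (fun t => u t + β t) t₁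
    have l2 : -(u t₂) + β t₂ ≤ ⨆ t, (-(u t) + β t) := le_csup (fun t => -(u t) + β t) t₂
    linarith
  · have habs : |u t₁ - u t₂| = u t₂ - u t₁ := by
      rw [abs_of_nonpos (by linarith)]; ring
    have l1 : u t₂ + β t₂ ≤ ⨆ t, (u t + β t) := le_csup (fun t => u t + β t) t₂
    have l2 : -(u t₁) + β t₁ ≤ ⨆ t, (-(u t) + β t) := le_csup (fun t => -(u t) + β t) t₁
    linarith

lemma contraction {τ : Type*} [Fintype τ] [Nonempty τ] (s : Finset ι) (c : τ → ℝ)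
    (v : τ → ι → ℝ) :
    Eg s (fun g => ⨆ t, (c t + ∑ i ∈ s, sgn g i * max (v t i) 0))
      ≤ Eg s (fun g => ⨆ t, (c t + ∑ i ∈ s, sgn g i * v t i)) := by
  induction s using Finset.induction generalizing c with
  | empty => simp [Eg_empty]
  | @insert a s ha ih =>
    rw [Eg_insert ha, Eg_insert ha]
    have hsgn : ∀ g ∈ s.powerset, ∀ i ∈ s, sgn (insert a g) i = sgn g i := by
      intro g hg i hi
      have hia : i ≠ a := fun h => ha (h ▸ hi)
      simp [sgn, Finset.mem_insert, hia]
    have hsgna : ∀ g ∈ s.powerset, sgn (insert a g) a = 1 := by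
      intro g hg; simp [sgn]
    have hsgna' : ∀ g ∈ s.powerset, sgn g a = -1 := by
      intro g hg
      have : a ∉ g := fun h => ha (Finset.mem_powerset.1 hg h)
      simp [sgn, this]
    -- rewrite the four integrands
    have e1 : Eg s (fun g => ⨆ t, (c t + ∑ i ∈ insert a s, sgn (insert a g) i * max (v t i) 0))
        = Eg s (fun g => ⨆ t, ((fun t => c t + max (v t a) 0) t
            + ∑ i ∈ s, sgn g i * max (v t i) 0)) := by
      apply Eg_congr; intro g hg
      congr 1; funext t
      rw [Finset.sum_insert ha, hsgna g hg,
        Finset.sum_congr rfl (fun i hi => by rw [hsgn g hg i hi])]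
      ring
    have e2 : Eg s (fun g => ⨆ t, (c t + ∑ i ∈ insert a s, sgn g i * max (v t i) 0))
        = Eg s (fun g => ⨆ t, ((fun t => c t - max (v t a) 0) t
            + ∑ i ∈ s, sgn g i * max (v t i) 0)) := by
      apply Eg_congr; intro g hg
      congr 1; funext t
      rw [Finset.sum_insert ha, hsgna' g hg]
      ring
    have e3 : Eg s (fun g => ⨆ t, (c t + ∑ i ∈ insert a s, sgn (insert a g) i * v t i))
        = Eg s (fun g => ⨆ t, ((c t + v t a) + ∑ i ∈ s, sgn g i * v t i)) := by
      apply Eg_congr; intro g hg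
      congr 1; funext t
      rw [Finset.sum_insert ha, hsgna g hg,
        Finset.sum_congr rfl (fun i hi => by rw [hsgn g hg i hi])]
      ring
    have e4 : Eg s (fun g => ⨆ t, (c t + ∑ i ∈ insert a s, sgn g i * v t i))
        = Eg s (fun g => ⨆ t, ((c t - v t a) + ∑ i ∈ s, sgn g i * v t i)) := by
      apply Eg_congr; intro g hg
      congr 1; funext t
      rw [Finset.sum_insert ha, hsgna' g hg]
      ring
    rw [e1, e2, e3, e4]
    apply (div_le_div_iff_of_pos_right (by norm_num : (0:ℝ) < 2)).2
    have i1 := ih (fun t => c t + max (v t a) 0)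
    have i2 := ih (fun t => c t - max (v t a) 0)
    refine (add_le_add i1 i2).trans ?_
    rw [← Eg_add, ← Eg_add]
    apply Eg_mono
    intro g hg
    have h2p := twoPoint (fun t => v t a) (fun t => c t + ∑ i ∈ s, sgn g i * v t i)
    calc (⨆ t, ((fun t => c t + max (v t a) 0) t + ∑ i ∈ s, sgn g i * v t i))
          + (⨆ t, ((fun t => c t - max (v t a) 0) t + ∑ i ∈ s, sgn g i * v t i))
        = (⨆ t, (max (v t a) 0 + (c t + ∑ i ∈ s, sgn g i * v t i)))
          + (⨆ t, (-(max (v t a) 0) + (c t + ∑ i ∈ s, sgn g i * v t i))) := by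
          congr 1
          · congr 1; funext t; ring
          · congr 1; funext t; ring
      _ ≤ (⨆ t, (v t a + (c t + ∑ i ∈ s, sgn g i * v t i)))
          + (⨆ t, (-(v t a) + (c t + ∑ i ∈ s, sgn g i * v t i))) := h2p
      _ = (⨆ t, ((c t + v t a) + ∑ i ∈ s, sgn g i * v t i))
          + (⨆ t, ((c t - v t a) + ∑ i ∈ s, sgn g i * v t i)) := by
          congr 1
          · congr 1; funext t; ring
          · congr 1; funext t; ring

lemma Eg_EQ_comm (s s' : Finset ι) {p : ℝ} (X : Finset ι → Finset ι → ℝ) :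
    Eg s (fun g => EQ p s' (fun Q => X g Q)) = EQ p s' (fun Q => Eg s (fun g => X g Q)) := by
  unfold Eg EQ
  calc (∑ g ∈ s.powerset, ∑ Q ∈ s'.powerset, wt p s' Q * X g Q) / 2 ^ s.card
      = (∑ Q ∈ s'.powerset, ∑ g ∈ s.powerset, wt p s' Q * X g Q) / 2 ^ s.card := by
        rw [Finset.sum_comm]
    _ = ∑ Q ∈ s'.powerset, (∑ g ∈ s.powerset, wt p s' Q * X g Q) / 2 ^ s.card := by
        rw [Finset.sum_div]
    _ = ∑ Q ∈ s'.powerset, wt p s' Q * ((∑ g ∈ s.powerset, X g Q) / 2 ^ s.card) := by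
        apply Finset.sum_congr rfl; intros
        rw [← Finset.mul_sum, mul_div_assoc]

/-! ### Matrix quantities -/
section MatrixPart
variable {n : ℕ}

def bsum (M : Matrix (Fin n) (Fin n) ℝ) (S T : Finset (Fin n)) : ℝ := ∑ i ∈ S, ∑ j ∈ T, M i j

def rsum (M : Matrix (Fin n) (Fin n) ℝ) (i : Fin n) (T : Finset (Fin n)) : ℝ := ∑ j ∈ T, M i j

def ind (Q : Finset (Fin n)) (i : Fin n) : ℝ := if i ∈ Q then 1 else 0

lemma maxz (x : ℝ) : max x 0 = if 0 ≤ x then x else 0 := by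
  rcases le_total 0 x with h | h
  · rw [max_eq_left h, if_pos h]
  · rcases eq_or_lt_of_le h with rfl | h'
    · simp
    · rw [max_eq_right h, if_neg (by linarith)]

lemma ind_mul_max (Q : Finset (Fin n)) (i : Fin n) (x : ℝ) :
    ind Q i * max x 0 = max (ind Q i * x) 0 := by
  unfold ind
  by_cases h : i ∈ Q <;> simp [h]

lemma sum_ind (Q : Finset (Fin n)) (x : Fin n → ℝ) :
    ∑ i, ind Q i * x i = ∑ i ∈ Q, x i := by
  unfold ind
  simp only [ite_mul, one_mul, zero_mul]
  rw [Finset.sum_ite_mem, Finset.univ_inter]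

lemma abs_bsum_le_cutNorm (M : Matrix (Fin n) (Fin n) ℝ) (S T : Finset (Fin n)) :
    |bsum M S T| ≤ cutNorm M :=
  le_csup (fun pr : Finset (Fin n) × Finset (Fin n) => |∑ i ∈ pr.1, ∑ j ∈ pr.2, M i j|) (S, T)

lemma cutNorm_le {M : Matrix (Fin n) (Fin n) ℝ} {a : ℝ}
    (h : ∀ S T : Finset (Fin n), |bsum M S T| ≤ a) : cutNorm M ≤ a :=
  csup_le fun pr => h pr.1 pr.2

lemma cutNorm_nonneg (M : Matrix (Fin n) (Fin n) ℝ) : 0 ≤ cutNorm M := by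
  have : |bsum M ∅ ∅| ≤ cutNorm M := abs_bsum_le_cutNorm M ∅ ∅
  have h0 : bsum M ∅ ∅ = 0 := by simp [bsum]
  rw [h0] at this
  simpa using this

lemma bsum_neg (M : Matrix (Fin n) (Fin n) ℝ) (S T : Finset (Fin n)) :
    bsum (-M) S T = -(bsum M S T) := by
  unfold bsum
  rw [← Finset.sum_neg_distrib]
  apply Finset.sum_congr rfl; intros
  rw [← Finset.sum_neg_distrib]
  apply Finset.sum_congr rfl; intros
  simp

lemma cutNorm_neg (M : Matrix (Fin n) (Fin n) ℝ) : cutNorm (-M) = cutNorm M := by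
  apply le_antisymm
  · apply cutNorm_le; intro S T
    rw [bsum_neg, abs_neg]; exact abs_bsum_le_cutNorm M S T
  · apply cutNorm_le; intro S T
    have := abs_bsum_le_cutNorm (-M) S T
    rwa [bsum_neg, abs_neg] at this

lemma bsum_transpose (M : Matrix (Fin n) (Fin n) ℝ) (S T : Finset (Fin n)) :
    bsum M.transpose S T = bsum M T S := by
  unfold bsum
  exact Finset.sum_comm

lemma cutNorm_transpose (M : Matrix (Fin n) (Fin n) ℝ) : cutNorm M.transpose = cutNorm M := by
  apply le_antisymm
  · apply cutNorm_le; intro S T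
    rw [bsum_transpose]; exact abs_bsum_le_cutNorm M T S
  · apply cutNorm_le; intro S T
    have := abs_bsum_le_cutNorm M.transpose T S
    rwa [bsum_transpose] at this

lemma colSum_nonneg (M : Matrix (Fin n) (Fin n) ℝ) : 0 ≤ colSum M :=
  Finset.sum_nonneg fun _ _ => Real.sqrt_nonneg _

lemma colSum_neg (M : Matrix (Fin n) (Fin n) ℝ) : colSum (-M) = colSum M := by
  unfold colSum
  apply Finset.sum_congr rfl; intros j _
  congr 1
  apply Finset.sum_congr rfl; intros i _
  simp

lemma sumPos_le_cutNorm (M : Matrix (Fin n) (Fin n) ℝ) (T : Finset (Fin n)) :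
    ∑ i, max (rsum M i T) 0 ≤ cutNorm M := by
  have h1 : ∑ i, max (rsum M i T) 0
      = bsum M (Finset.univ.filter fun i => 0 ≤ rsum M i T) T := by
    unfold bsum
    rw [Finset.sum_filter]
    apply Finset.sum_congr rfl; intro i _
    rw [maxz]
    rfl
  rw [h1]
  exact (le_abs_self _).trans (abs_bsum_le_cutNorm M _ T)

end MatrixPart

/-! ### The symmetrization chain -/
section Chain
variable {n : ℕ} {p : ℝ}
open Finset

lemma jensen_sym (hp0 : 0 ≤ p) (hp1 : p ≤ 1) (h : Fin n → Finset (Fin n) → ℝ) :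
    EQ p univ (fun Q => ⨆ T : Finset (Fin n), ∑ i, (ind Q i - p) * h i T)
      ≤ EQ p univ (fun Q => EQ p univ
          (fun R => ⨆ T : Finset (Fin n), ∑ i, (ind Q i - ind R i) * h i T)) := by
  apply EQ_mono hp0 hp1; intro Q _
  apply csup_le; intro T
  have hma : EQ p univ (fun R => ∑ i, (ind Q i - ind R i) * h i T)
      = ∑ i, (ind Q i - p) * h i T := by
    have hR : ∀ R : Finset (Fin n), ∑ i, (ind Q i - ind R i) * h i T
        = (∑ i, ind Q i * h i T) - ∑ i ∈ R, h i T := by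
      intro R
      rw [← sum_ind R (fun i => h i T), ← Finset.sum_sub_distrib]
      apply Finset.sum_congr rfl; intros; ring
    rw [EQ_congr (fun R _ => hR R), EQ_sub, EQ_const, EQ_sum_mem]
    rw [Finset.mul_sum, ← Finset.sum_sub_distrib]
    apply Finset.sum_congr rfl; intros; ring
  rw [← hma]
  apply EQ_mono hp0 hp1; intro R _
  exact le_csup (fun T => ∑ i, (ind Q i - ind R i) * h i T) T

lemma EQ_pair_swap (g : Finset (Fin n)) (F : Finset (Fin n) → Finset (Fin n) → ℝ) :
    EQ p univ (fun Q => EQ p univ (fun R => F Q R))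
      = EQ p univ (fun Q => EQ p univ (fun R => F (Q ∩ g ∪ R \ g) (R ∩ g ∪ Q \ g))) := by
  rw [EQ_pair, EQ_pair]
  have hinv : ∀ x : Finset (Fin n) × Finset (Fin n),
      (((x.1 ∩ g ∪ x.2 \ g) ∩ g ∪ (x.2 ∩ g ∪ x.1 \ g) \ g) = x.1)
      ∧ (((x.2 ∩ g ∪ x.1 \ g) ∩ g ∪ (x.1 ∩ g ∪ x.2 \ g) \ g) = x.2) := by
    intro x
    constructor <;>
      (ext y; by_cases hy : y ∈ g <;>
        simp [Finset.mem_union, Finset.mem_inter, Finset.mem_sdiff, hy])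
  have hw : ∀ x : Finset (Fin n) × Finset (Fin n),
      wt p (univ : Finset (Fin n)) (x.1 ∩ g ∪ x.2 \ g)
        * wt p (univ : Finset (Fin n)) (x.2 ∩ g ∪ x.1 \ g)
      = wt p univ x.1 * wt p univ x.2 := by
    intro x
    have hd1 : Disjoint (x.1 ∩ g) (x.2 \ g) := by
      rw [Finset.disjoint_left]
      intro y hy hy'
      exact (Finset.mem_sdiff.1 hy').2 (Finset.mem_inter.1 hy).2
    have hd2 : Disjoint (x.2 ∩ g) (x.1 \ g) := by
      rw [Finset.disjoint_left]
      intro y hy hy'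
      exact (Finset.mem_sdiff.1 hy').2 (Finset.mem_inter.1 hy).2
    have hc1 := Finset.card_union_of_disjoint hd1
    have hc2 := Finset.card_union_of_disjoint hd2
    have he1 := Finset.card_inter_add_card_sdiff x.1 g
    have he2 := Finset.card_inter_add_card_sdiff x.2 g
    have hb1 : (x.1 ∩ g ∪ x.2 \ g).card ≤ (univ : Finset (Fin n)).card :=
      Finset.card_le_card (Finset.subset_univ _)
    have hb2 : (x.2 ∩ g ∪ x.1 \ g).card ≤ (univ : Finset (Fin n)).card :=
      Finset.card_le_card (Finset.subset_univ _)
    have hb3 : x.1.card ≤ (univ : Finset (Fin n)).card :=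
      Finset.card_le_card (Finset.subset_univ _)
    have hb4 : x.2.card ≤ (univ : Finset (Fin n)).card :=
      Finset.card_le_card (Finset.subset_univ _)
    unfold wt
    rw [mul_mul_mul_comm, ← pow_add, ← pow_add,
      mul_mul_mul_comm (p ^ x.1.card), ← pow_add, ← pow_add]
    congr 1
    · congr 1; omega
    · congr 1; omega
  apply Finset.sum_nbij'
    (fun x => (x.1 ∩ g ∪ x.2 \ g, x.2 ∩ g ∪ x.1 \ g))
    (fun x => (x.1 ∩ g ∪ x.2 \ g, x.2 ∩ g ∪ x.1 \ g))
  · intro x _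
    simp [Finset.mem_product, Finset.mem_powerset, Finset.subset_univ]
  · intro x _
    simp [Finset.mem_product, Finset.mem_powerset, Finset.subset_univ]
  · intro x _
    exact Prod.ext_iff.2 ⟨(hinv x).1, (hinv x).2⟩
  · intro x _
    exact Prod.ext_iff.2 ⟨(hinv x).1, (hinv x).2⟩
  · intro x _
    dsimp only
    rw [(hinv x).1, (hinv x).2, hw x]

lemma sgn_compl (g : Finset (Fin n)) (i : Fin n) :
    sgn ((univ : Finset (Fin n)) \ g) i = -(sgn g i) := by
  unfold sgn
  by_cases h : i ∈ g <;> simp [Finset.mem_sdiff, h]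

lemma sym_sign (hp0 : 0 ≤ p) (hp1 : p ≤ 1) (h : Fin n → Finset (Fin n) → ℝ) :
    EQ p univ (fun Q => EQ p univ
        (fun R => ⨆ T : Finset (Fin n), ∑ i, (ind Q i - ind R i) * h i T))
      ≤ 2 * EQ p univ (fun Q => Eg univ
          (fun g => ⨆ T : Finset (Fin n), ∑ i, sgn g i * (ind Q i * h i T))) := by
  set G : Finset (Fin n) → Finset (Fin n) → ℝ :=
    fun Q R => ⨆ T : Finset (Fin n), ∑ i, (ind Q i - ind R i) * h i T with hG
  set Gg : Finset (Fin n) → Finset (Fin n) → Finset (Fin n) → ℝ :=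
    fun g Q R => ⨆ T : Finset (Fin n), ∑ i, sgn g i * (ind Q i - ind R i) * h i T with hGg
  set sup1 : Finset (Fin n) → Finset (Fin n) → ℝ :=
    fun g Q => ⨆ T : Finset (Fin n), ∑ i, sgn g i * (ind Q i * h i T) with hsup1
  set sup2 : Finset (Fin n) → Finset (Fin n) → ℝ :=
    fun g R => ⨆ T : Finset (Fin n), ∑ i, (-(sgn g i)) * (ind R i * h i T) with hsup2
  -- G-expectation is invariant under signing
  have hinv : ∀ g : Finset (Fin n),
      EQ p univ (fun Q => EQ p univ (fun R => G Q R))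
        = EQ p univ (fun Q => EQ p univ (fun R => Gg g Q R)) := by
    intro g
    rw [EQ_pair_swap g (Gg g)]
    apply EQ_congr; intro Q _
    apply EQ_congr; intro R _
    simp only [hG, hGg]
    congr 1; funext T
    apply Finset.sum_congr rfl; intro i _
    have : sgn g i * (ind (Q ∩ g ∪ R \ g) i - ind (R ∩ g ∪ Q \ g) i) = ind Q i - ind R i := by
      by_cases hg : i ∈ g <;> by_cases hQ : i ∈ Q <;> by_cases hR : i ∈ R <;>
        simp [sgn, ind, Finset.mem_union, Finset.mem_inter, Finset.mem_sdiff, hg, hQ, hR]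
    rw [this]
  -- split
  have hsplit : ∀ g Q R : Finset (Fin n), Gg g Q R ≤ sup1 g Q + sup2 g R := by
    intro g Q R
    simp only [hGg, hsup1, hsup2]
    apply csup_le; intro T
    have heq : ∑ i, sgn g i * (ind Q i - ind R i) * h i T
        = (∑ i, sgn g i * (ind Q i * h i T)) + ∑ i, (-(sgn g i)) * (ind R i * h i T) := by
      rw [← Finset.sum_add_distrib]
      apply Finset.sum_congr rfl; intros; ring
    rw [heq]
    exact add_le_add (le_csup (fun T => ∑ i, sgn g i * (ind Q i * h i T)) T)
      (le_csup (fun T => ∑ i, (-(sgn g i)) * (ind R i * h i T)) T)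
  have hEE : ∀ g : Finset (Fin n),
      EQ p univ (fun Q => EQ p univ (fun R => Gg g Q R))
        ≤ EQ p univ (fun Q => sup1 g Q) + EQ p univ (fun R => sup2 g R) := by
    intro g
    have h1 : EQ p univ (fun Q => EQ p univ (fun R => Gg g Q R))
        ≤ EQ p univ (fun Q => sup1 g Q + EQ p univ (fun R => sup2 g R)) := by
      apply EQ_mono hp0 hp1; intro Q _
      have : EQ p univ (fun R => Gg g Q R)
          ≤ EQ p univ (fun R => sup1 g Q + sup2 g R) :=
        EQ_mono hp0 hp1 (fun R _ => hsplit g Q R)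
      rwa [EQ_add, EQ_const] at this
    rwa [EQ_add, EQ_const] at h1
  -- average over g
  calc EQ p univ (fun Q => EQ p univ (fun R => G Q R))
      = Eg univ (fun g => EQ p univ (fun Q => EQ p univ (fun R => Gg g Q R))) := by
        rw [Eg_congr (fun g _ => (hinv g).symm), Eg_const]
    _ ≤ Eg univ (fun g => EQ p univ (fun Q => sup1 g Q) + EQ p univ (fun R => sup2 g R)) :=
        Eg_mono (fun g _ => hEE g)
    _ = Eg univ (fun g => EQ p univ (fun Q => sup1 g Q))
        + Eg univ (fun g => EQ p univ (fun R => sup2 g R)) := Eg_add _ _ _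
    _ = 2 * EQ p univ (fun Q => Eg univ (fun g => sup1 g Q)) := by
        have hc : Eg univ (fun g => EQ p univ (fun R => sup2 g R))
            = Eg univ (fun g => EQ p univ (fun Q => sup1 g Q)) := by
          rw [← Eg_compl univ (fun g => EQ p univ (fun R => sup2 g R))]
          apply Eg_congr; intro g _
          apply EQ_congr; intro R _
          simp only [hsup1, hsup2]
          congr 1; funext T
          apply Finset.sum_congr rfl; intro i _
          rw [sgn_compl]
          ring
        rw [hc, Eg_EQ_comm]
        ring

lemma contr_app (M : Matrix (Fin n) (Fin n) ℝ) (Q : Finset (Fin n)) :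
    Eg univ (fun g => ⨆ T : Finset (Fin n), ∑ i, sgn g i * (ind Q i * max (rsum M i T) 0))
      ≤ Eg univ (fun g => ⨆ T : Finset (Fin n), ∑ i, sgn g i * (ind Q i * rsum M i T)) := by
  have hcontr := contraction (τ := Finset (Fin n)) (univ : Finset (Fin n))
    (fun _ => (0:ℝ)) (fun T i => ind Q i * rsum M i T)
  simp only [zero_add] at hcontr
  have e1 : ∀ g : Finset (Fin n),
      (⨆ T : Finset (Fin n), ∑ i, sgn g i * (ind Q i * max (rsum M i T) 0))
        = ⨆ T : Finset (Fin n), ∑ i, sgn g i * max (ind Q i * rsum M i T) 0 := by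
    intro g
    congr 1; funext T
    apply Finset.sum_congr rfl; intro i _
    rw [ind_mul_max]
  calc Eg univ (fun g => ⨆ T : Finset (Fin n), ∑ i, sgn g i * (ind Q i * max (rsum M i T) 0))
      = Eg univ (fun g => ⨆ T : Finset (Fin n), ∑ i, sgn g i * max (ind Q i * rsum M i T) 0) := by
        apply Eg_congr; intro g _; exact e1 g
    _ ≤ Eg univ (fun g => ⨆ T : Finset (Fin n), ∑ i, sgn g i * (ind Q i * rsum M i T)) := hcontr

lemma rad_bound (M : Matrix (Fin n) (Fin n) ℝ) (Q : Finset (Fin n)) :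
    Eg univ (fun g => ⨆ T : Finset (Fin n), ∑ i, sgn g i * (ind Q i * rsum M i T))
      ≤ ∑ j, Real.sqrt (∑ i ∈ Q, M i j ^ 2) := by
  have hswap : ∀ (g T : Finset (Fin n)), ∑ i, sgn g i * (ind Q i * rsum M i T)
      = ∑ j ∈ T, ∑ i, sgn g i * (ind Q i * M i j) := by
    intro g T
    unfold rsum
    rw [← Finset.sum_comm]
    apply Finset.sum_congr rfl; intro i _
    rw [Finset.mul_sum, Finset.mul_sum]
  calc Eg univ (fun g => ⨆ T : Finset (Fin n), ∑ i, sgn g i * (ind Q i * rsum M i T))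
      ≤ Eg univ (fun g => ∑ j, |∑ i, sgn g i * (ind Q i * M i j)|) := by
        apply Eg_mono; intro g _
        apply csup_le; intro T
        rw [hswap g T]
        calc ∑ j ∈ T, ∑ i, sgn g i * (ind Q i * M i j)
            ≤ ∑ j ∈ T, |∑ i, sgn g i * (ind Q i * M i j)| :=
              Finset.sum_le_sum fun j _ => le_abs_self _
          _ ≤ ∑ j, |∑ i, sgn g i * (ind Q i * M i j)| :=
              Finset.sum_le_sum_of_subset_of_nonneg (Finset.subset_univ T)
                (fun j _ _ => abs_nonneg _)
    _ = ∑ j, Eg univ (fun g => |∑ i, sgn g i * (ind Q i * M i j)|) := Eg_finsum _ _ _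
    _ ≤ ∑ j, Real.sqrt (∑ i ∈ Q, M i j ^ 2) := by
        apply Finset.sum_le_sum; intro j _
        have hk := Eg_abs_le (univ : Finset (Fin n)) (fun i => ind Q i * M i j)
        have he : ∑ i, (ind Q i * M i j) ^ 2 = ∑ i ∈ Q, M i j ^ 2 := by
          rw [← sum_ind Q (fun i => M i j ^ 2)]
          apply Finset.sum_congr rfl; intro i _
          unfold ind
          by_cases h : i ∈ Q <;> simp [h]
        rwa [he] at hk

lemma col_expect (hp0 : 0 ≤ p) (hp1 : p ≤ 1) (M : Matrix (Fin n) (Fin n) ℝ) :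
    EQ p univ (fun Q => ∑ j, Real.sqrt (∑ i ∈ Q, M i j ^ 2))
      ≤ Real.sqrt p * colSum M := by
  rw [EQ_finsum]
  unfold colSum
  rw [Finset.mul_sum]
  apply Finset.sum_le_sum; intro j _
  calc EQ p univ (fun Q => Real.sqrt (∑ i ∈ Q, M i j ^ 2))
      ≤ Real.sqrt (EQ p univ (fun Q => ∑ i ∈ Q, M i j ^ 2)) :=
        EQ_sqrt hp0 hp1 (fun Q _ => Finset.sum_nonneg fun i _ => sq_nonneg _)
    _ = Real.sqrt (p * ∑ i, M i j ^ 2) := by rw [EQ_sum_mem]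
    _ = Real.sqrt p * Real.sqrt (∑ i, M i j ^ 2) := Real.sqrt_mul hp0 _

lemma Psi_bound (hp0 : 0 ≤ p) (hp1 : p ≤ 1) (M : Matrix (Fin n) (Fin n) ℝ) :
    EQ p univ (fun Q => ⨆ T : Finset (Fin n), ∑ i, (ind Q i - p) * max (rsum M i T) 0)
      ≤ 2 * Real.sqrt p * colSum M := by
  calc EQ p univ (fun Q => ⨆ T : Finset (Fin n), ∑ i, (ind Q i - p) * max (rsum M i T) 0)
      ≤ EQ p univ (fun Q => EQ p univ (fun R => ⨆ T : Finset (Fin n),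
          ∑ i, (ind Q i - ind R i) * max (rsum M i T) 0)) :=
        jensen_sym hp0 hp1 _
    _ ≤ 2 * EQ p univ (fun Q => Eg univ (fun g => ⨆ T : Finset (Fin n),
          ∑ i, sgn g i * (ind Q i * max (rsum M i T) 0))) := sym_sign hp0 hp1 _
    _ ≤ 2 * EQ p univ (fun Q => ∑ j, Real.sqrt (∑ i ∈ Q, M i j ^ 2)) := by
        apply mul_le_mul_of_nonneg_left ?_ (by norm_num)
        apply EQ_mono hp0 hp1; intro Q _
        exact (contr_app M Q).trans (rad_bound M Q)
    _ ≤ 2 * (Real.sqrt p * colSum M) := by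
        apply mul_le_mul_of_nonneg_left (col_expect hp0 hp1 M) (by norm_num)
    _ = 2 * Real.sqrt p * colSum M := by ring

end Chain

/-! ### One-sided lemma (rows sampled) and its column version -/
section OSLsec
variable {n : ℕ} {p : ℝ}
open Finset

lemma Phi_bound (hp0 : 0 ≤ p) (hp1 : p ≤ 1) (M : Matrix (Fin n) (Fin n) ℝ) :
    EQ p univ (fun Q => ⨆ T : Finset (Fin n), ∑ i ∈ Q, max (rsum M i T) 0)
      ≤ p * cutNorm M + 2 * Real.sqrt p * colSum M := by
  have hpt : ∀ Q ∈ (univ : Finset (Fin n)).powerset,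
      (⨆ T : Finset (Fin n), ∑ i ∈ Q, max (rsum M i T) 0)
        ≤ (⨆ T : Finset (Fin n), ∑ i, (ind Q i - p) * max (rsum M i T) 0) + p * cutNorm M := by
    intro Q _
    apply csup_le; intro T
    have hdec : ∑ i ∈ Q, max (rsum M i T) 0
        = (∑ i, (ind Q i - p) * max (rsum M i T) 0) + p * ∑ i, max (rsum M i T) 0 := by
      rw [← sum_ind Q (fun i => max (rsum M i T) 0)]
      rw [Finset.mul_sum, ← Finset.sum_add_distrib]
      apply Finset.sum_congr rfl; intros; ring
    rw [hdec]
    exact add_le_add (le_csup (fun T => ∑ i, (ind Q i - p) * max (rsum M i T) 0) T)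
      (mul_le_mul_of_nonneg_left (sumPos_le_cutNorm M T) hp0)
  calc EQ p univ (fun Q => ⨆ T : Finset (Fin n), ∑ i ∈ Q, max (rsum M i T) 0)
      ≤ EQ p univ (fun Q =>
          (⨆ T : Finset (Fin n), ∑ i, (ind Q i - p) * max (rsum M i T) 0) + p * cutNorm M) :=
        EQ_mono hp0 hp1 hpt
    _ = EQ p univ (fun Q =>
          ⨆ T : Finset (Fin n), ∑ i, (ind Q i - p) * max (rsum M i T) 0) + p * cutNorm M := by
        rw [EQ_add, EQ_const]
    _ ≤ 2 * Real.sqrt p * colSum M + p * cutNorm M :=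
        add_le_add_left (Psi_bound hp0 hp1 M) _
    _ = p * cutNorm M + 2 * Real.sqrt p * colSum M := by ring

lemma OSL (hp0 : 0 ≤ p) (hp1 : p ≤ 1) (M : Matrix (Fin n) (Fin n) ℝ) :
    EQ p univ (fun Q => ⨆ pr : Finset (Fin n) × Finset (Fin n), |bsum M (pr.1 ∩ Q) pr.2|)
      ≤ 2 * p * cutNorm M + 4 * Real.sqrt p * colSum M := by
  have hptw : ∀ Q ∈ (univ : Finset (Fin n)).powerset,
      (⨆ pr : Finset (Fin n) × Finset (Fin n), |bsum M (pr.1 ∩ Q) pr.2|)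
        ≤ (⨆ T : Finset (Fin n), ∑ i ∈ Q, max (rsum M i T) 0)
          + ⨆ T : Finset (Fin n), ∑ i ∈ Q, max (rsum (-M) i T) 0 := by
    intro Q _
    apply csup_le; intro pr
    have hb1 : ∀ (N : Matrix (Fin n) (Fin n) ℝ),
        bsum N (pr.1 ∩ Q) pr.2 ≤ ∑ i ∈ Q, max (rsum N i pr.2) 0 := by
      intro N
      calc bsum N (pr.1 ∩ Q) pr.2 = ∑ i ∈ pr.1 ∩ Q, rsum N i pr.2 := rfl
        _ ≤ ∑ i ∈ pr.1 ∩ Q, max (rsum N i pr.2) 0 :=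
            Finset.sum_le_sum fun i _ => le_max_left _ _
        _ ≤ ∑ i ∈ Q, max (rsum N i pr.2) 0 :=
            Finset.sum_le_sum_of_subset_of_nonneg Finset.inter_subset_right
              (fun i _ _ => le_max_right _ _)
    have h1 : bsum M (pr.1 ∩ Q) pr.2 ≤ ∑ i ∈ Q, max (rsum M i pr.2) 0 := hb1 M
    have h2 : -(bsum M (pr.1 ∩ Q) pr.2) ≤ ∑ i ∈ Q, max (rsum (-M) i pr.2) 0 := by
      rw [← bsum_neg]
      exact hb1 (-M)
    have hn1 : (0:ℝ) ≤ ∑ i ∈ Q, max (rsum M i pr.2) 0 :=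
      Finset.sum_nonneg fun i _ => le_max_right _ _
    have hn2 : (0:ℝ) ≤ ∑ i ∈ Q, max (rsum (-M) i pr.2) 0 :=
      Finset.sum_nonneg fun i _ => le_max_right _ _
    have habs : |bsum M (pr.1 ∩ Q) pr.2|
        ≤ (∑ i ∈ Q, max (rsum M i pr.2) 0) + ∑ i ∈ Q, max (rsum (-M) i pr.2) 0 := by
      rcases abs_cases (bsum M (pr.1 ∩ Q) pr.2) with ⟨he, _⟩ | ⟨he, _⟩ <;> rw [he] <;> linarith
    refine habs.trans (add_le_add ?_ ?_)
    · exact le_csup (fun T => ∑ i ∈ Q, max (rsum M i T) 0) pr.2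
    · exact le_csup (fun T => ∑ i ∈ Q, max (rsum (-M) i T) 0) pr.2
  calc EQ p univ (fun Q => ⨆ pr : Finset (Fin n) × Finset (Fin n), |bsum M (pr.1 ∩ Q) pr.2|)
      ≤ EQ p univ (fun Q => (⨆ T : Finset (Fin n), ∑ i ∈ Q, max (rsum M i T) 0)
          + ⨆ T : Finset (Fin n), ∑ i ∈ Q, max (rsum (-M) i T) 0) := EQ_mono hp0 hp1 hptw
    _ = EQ p univ (fun Q => ⨆ T : Finset (Fin n), ∑ i ∈ Q, max (rsum M i T) 0)
        + EQ p univ (fun Q => ⨆ T : Finset (Fin n), ∑ i ∈ Q, max (rsum (-M) i T) 0) :=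
        EQ_add _ _ _
    _ ≤ (p * cutNorm M + 2 * Real.sqrt p * colSum M)
        + (p * cutNorm (-M) + 2 * Real.sqrt p * colSum (-M)) :=
        add_le_add (Phi_bound hp0 hp1 M) (Phi_bound hp0 hp1 (-M))
    _ = 2 * p * cutNorm M + 4 * Real.sqrt p * colSum M := by
        rw [cutNorm_neg, colSum_neg]; ring

lemma OSLT (hp0 : 0 ≤ p) (hp1 : p ≤ 1) (B : Matrix (Fin n) (Fin n) ℝ) :
    EQ p univ (fun Q => ⨆ pr : Finset (Fin n) × Finset (Fin n), |bsum B pr.1 (pr.2 ∩ Q)|)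
      ≤ 2 * p * cutNorm B + 4 * Real.sqrt p * colSum B.transpose := by
  have hsw : ∀ Q ∈ (univ : Finset (Fin n)).powerset,
      (⨆ pr : Finset (Fin n) × Finset (Fin n), |bsum B pr.1 (pr.2 ∩ Q)|)
        = ⨆ pr : Finset (Fin n) × Finset (Fin n), |bsum B.transpose (pr.1 ∩ Q) pr.2| := by
    intro Q _
    apply le_antisymm
    · apply csup_le; intro pr
      have : bsum B pr.1 (pr.2 ∩ Q) = bsum B.transpose (pr.2 ∩ Q) pr.1 :=
        (bsum_transpose B (pr.2 ∩ Q) pr.1).symm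
      rw [this]
      exact le_csup (fun pr : Finset (Fin n) × Finset (Fin n) =>
        |bsum B.transpose (pr.1 ∩ Q) pr.2|) (pr.2, pr.1)
    · apply csup_le; intro pr
      have : bsum B.transpose (pr.1 ∩ Q) pr.2 = bsum B pr.2 (pr.1 ∩ Q) :=
        bsum_transpose B (pr.1 ∩ Q) pr.2
      rw [this]
      exact le_csup (fun pr : Finset (Fin n) × Finset (Fin n) =>
        |bsum B pr.1 (pr.2 ∩ Q)|) (pr.2, pr.1)
  rw [EQ_congr hsw]
  have := OSL hp0 hp1 B.transpose
  rwa [cutNorm_transpose] at this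

/-! ### masking columns -/
def maskC (B : Matrix (Fin n) (Fin n) ℝ) (R : Finset (Fin n)) : Matrix (Fin n) (Fin n) ℝ :=
  Matrix.of fun i j => if j ∈ R then B i j else 0

lemma bsum_maskC (B : Matrix (Fin n) (Fin n) ℝ) (R S T : Finset (Fin n)) :
    bsum (maskC B R) S T = bsum B S (T ∩ R) := by
  unfold bsum maskC
  apply Finset.sum_congr rfl; intro i _
  rw [← Finset.sum_ite_mem]
  rfl

lemma EQ_colSum_maskC (hp0 : 0 ≤ p) (hp1 : p ≤ 1) (B : Matrix (Fin n) (Fin n) ℝ) :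
    EQ p univ (fun R => colSum (maskC B R)) = p * colSum B := by
  have hc : ∀ R : Finset (Fin n), colSum (maskC B R)
      = ∑ j ∈ R, Real.sqrt (∑ i, B i j ^ 2) := by
    intro R
    have hj : ∀ j : Fin n, Real.sqrt (∑ i, maskC B R i j ^ 2)
        = if j ∈ R then Real.sqrt (∑ i, B i j ^ 2) else 0 := by
      intro j
      by_cases hjR : j ∈ R
      · rw [if_pos hjR]
        congr 1
        apply Finset.sum_congr rfl; intro i _
        unfold maskC
        rw [Matrix.of_apply, if_pos hjR]
      · rw [if_neg hjR]
        have : ∑ i, maskC B R i j ^ 2 = 0 := by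
          apply Finset.sum_eq_zero; intro i _
          unfold maskC
          rw [Matrix.of_apply, if_neg hjR]
          norm_num
        rw [this, Real.sqrt_zero]
    unfold colSum
    rw [Finset.sum_congr rfl (fun j _ => hj j), Finset.sum_ite_mem, Finset.univ_inter]
  rw [EQ_congr (fun R _ => hc R), EQ_sum_mem]
  unfold colSum
  rfl

/-! ### decoupling -/
def HH (B : Matrix (Fin n) (Fin n) ℝ) (Q1 Q2 : Finset (Fin n)) : ℝ :=
  ⨆ pr : Finset (Fin n) × Finset (Fin n), |bsum B (pr.1 ∩ Q1) (pr.2 ∩ Q2)|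

lemma HH_mono (B : Matrix (Fin n) (Fin n) ℝ) {Q1 Q2 Q1' Q2' : Finset (Fin n)}
    (h1 : Q1 ⊆ Q1') (h2 : Q2 ⊆ Q2') : HH B Q1 Q2 ≤ HH B Q1' Q2' := by
  apply csup_le; intro pr
  have e1 : pr.1 ∩ Q1 = (pr.1 ∩ Q1) ∩ Q1' :=
    (Finset.inter_eq_left.2 (Finset.inter_subset_right.trans h1)).symm
  have e2 : pr.2 ∩ Q2 = (pr.2 ∩ Q2) ∩ Q2' :=
    (Finset.inter_eq_left.2 (Finset.inter_subset_right.trans h2)).symm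
  rw [show bsum B (pr.1 ∩ Q1) (pr.2 ∩ Q2)
      = bsum B ((pr.1 ∩ Q1) ∩ Q1') ((pr.2 ∩ Q2) ∩ Q2') by rw [← e1, ← e2]]
  exact le_csup (fun pr : Finset (Fin n) × Finset (Fin n) =>
    |bsum B (pr.1 ∩ Q1') (pr.2 ∩ Q2')|) (pr.1 ∩ Q1, pr.2 ∩ Q2)

lemma count_pair {i j : Fin n} (hij : i ≠ j) (c : ℝ) :
    Eg (univ : Finset (Fin n)) (fun I => if i ∈ I ∧ j ∉ I then c else 0) = c / 4 := by
  have hn2 : 2 ≤ n := by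
    by_contra hle
    have h1 := i.isLt
    have h2 := j.isLt
    exact hij (Fin.ext (by omega))
  unfold Eg
  rw [← Finset.sum_filter]
  rw [Finset.sum_const]
  have hcard : ((univ : Finset (Fin n)).powerset.filter
      (fun I => i ∈ I ∧ j ∉ I)).card = 2 ^ (n - 2) := by
    have : ((univ : Finset (Fin n)).powerset.filter (fun I => i ∈ I ∧ j ∉ I)).card
        = (((univ : Finset (Fin n)).erase i).erase j).powerset.card := by
      apply Finset.card_bij' (fun I _ => I.erase i) (fun J _ => insert i J)
      · intro I hI
        rw [Finset.mem_filter] at hI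
        exact Finset.insert_erase hI.2.1
      · intro J hJ
        rw [Finset.mem_powerset] at hJ
        apply Finset.erase_insert
        intro hiJ
        have := hJ hiJ
        rw [Finset.mem_erase, Finset.mem_erase] at this
        exact this.2.1 rfl
      · intro I hI
        rw [Finset.mem_filter] at hI
        rw [Finset.mem_powerset]
        intro x hx
        rw [Finset.mem_erase] at hx
        rw [Finset.mem_erase, Finset.mem_erase]
        exact ⟨fun hxj => hI.2.2 (hxj ▸ hx.2), hx.1, Finset.mem_univ x⟩
      · intro J hJ
        rw [Finset.mem_powerset] at hJ
        rw [Finset.mem_filter]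
        refine ⟨Finset.mem_powerset.2 (Finset.subset_univ _), Finset.mem_insert_self i J, ?_⟩
        intro hj
        rcases Finset.mem_insert.1 hj with h | h
        · exact hij h.symm
        · have := hJ h
          rw [Finset.mem_erase] at this
          exact this.1 rfl
    rw [this, Finset.card_powerset]
    congr 1
    have hm : j ∈ (univ : Finset (Fin n)).erase i :=
      Finset.mem_erase.2 ⟨hij.symm, Finset.mem_univ j⟩
    rw [Finset.card_erase_of_mem hm, Finset.card_erase_of_mem (Finset.mem_univ i),
      Finset.card_univ, Fintype.card_fin]
    omega
  rw [hcard, Finset.card_univ, Fintype.card_fin, nsmul_eq_mul]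
  have hpow : (2:ℝ) ^ n = 2 ^ (n - 2) * 4 := by
    have h := pow_add (2:ℝ) (n-2) 2
    rw [show (n-2)+2 = n by omega] at h
    rw [h]
    norm_num
  rw [hpow]
  push_cast
  have hne : ((2:ℝ) ^ (n-2)) ≠ 0 := by positivity
  field_simp

lemma decouple_bsum (B : Matrix (Fin n) (Fin n) ℝ) (hB : ∀ i, B i i = 0)
    (S T : Finset (Fin n)) :
    bsum B S T = 4 * Eg univ (fun I => bsum B (S ∩ I) (T \ I)) := by
  have hexp : ∀ I : Finset (Fin n), bsum B (S ∩ I) (T \ I)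
      = ∑ i ∈ S, ∑ j ∈ T, (if i ∈ I ∧ j ∉ I then B i j else 0) := by
    intro I
    unfold bsum
    rw [← Finset.filter_mem_eq_inter, Finset.sum_filter]
    apply Finset.sum_congr rfl; intro i _
    by_cases hi : i ∈ I
    · rw [if_pos hi, Finset.sdiff_eq_filter, Finset.sum_filter]
      apply Finset.sum_congr rfl; intro j _
      by_cases hj : j ∈ I <;> simp [hi, hj]
    · rw [if_neg hi]
      symm
      apply Finset.sum_eq_zero
      intro j _
      simp [hi]
  have hEg : Eg (univ : Finset (Fin n)) (fun I => bsum B (S ∩ I) (T \ I))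
      = ∑ i ∈ S, ∑ j ∈ T, B i j / 4 := by
    rw [Eg_congr (fun I _ => hexp I), Eg_finsum]
    apply Finset.sum_congr rfl; intro i _
    rw [Eg_finsum]
    apply Finset.sum_congr rfl; intro j _
    by_cases hij : i = j
    · subst hij
      rw [hB i]
      have : ∀ I ∈ (univ : Finset (Fin n)).powerset,
          (if i ∈ I ∧ i ∉ I then (0:ℝ) else 0) = 0 := by
        intro I _
        simp
      rw [Eg_congr this, Eg_const]
      norm_num
    · exact count_pair hij (B i j)
  rw [hEg]
  unfold bsum
  rw [Finset.mul_sum]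
  refine Finset.sum_congr rfl fun i _ => ?_
  rw [Finset.mul_sum]
  refine Finset.sum_congr rfl fun j _ => ?_
  ring
end OSLsec

/-! ### two-sided decoupled bound and decoupling -/
section Decoup
variable {n : ℕ} {p : ℝ}
open Finset

lemma ED2_bound (hp0 : 0 ≤ p) (hp1 : p ≤ 1) (B : Matrix (Fin n) (Fin n) ℝ) :
    EQ p univ (fun Q2 => EQ p univ (fun Q1 => HH B Q1 Q2))
      ≤ 4 * p ^ 2 * cutNorm B + 8 * (p * Real.sqrt p) * colSum B.transpose
        + 4 * (p * Real.sqrt p) * colSum B := by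
  have hinner : ∀ Q2 ∈ (univ : Finset (Fin n)).powerset,
      EQ p univ (fun Q1 => HH B Q1 Q2)
        ≤ 2 * p * cutNorm (maskC B Q2) + 4 * Real.sqrt p * colSum (maskC B Q2) := by
    intro Q2 _
    have hre : ∀ Q1 ∈ (univ : Finset (Fin n)).powerset, HH B Q1 Q2
        = ⨆ pr : Finset (Fin n) × Finset (Fin n), |bsum (maskC B Q2) (pr.1 ∩ Q1) pr.2| := by
      intro Q1 _
      unfold HH
      congr 1; funext pr
      rw [bsum_maskC]
    rw [EQ_congr hre]
    exact OSL hp0 hp1 (maskC B Q2)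
  have houter : EQ p univ (fun Q2 => EQ p univ (fun Q1 => HH B Q1 Q2))
      ≤ 2 * p * EQ p univ (fun Q2 => cutNorm (maskC B Q2))
        + 4 * Real.sqrt p * EQ p univ (fun Q2 => colSum (maskC B Q2)) := by
    calc EQ p univ (fun Q2 => EQ p univ (fun Q1 => HH B Q1 Q2))
        ≤ EQ p univ (fun Q2 =>
            2 * p * cutNorm (maskC B Q2) + 4 * Real.sqrt p * colSum (maskC B Q2)) :=
          EQ_mono hp0 hp1 hinner
      _ = _ := by rw [EQ_add, EQ_smul, EQ_smul]
  have hcut : EQ p univ (fun Q2 => cutNorm (maskC B Q2))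
      ≤ 2 * p * cutNorm B + 4 * Real.sqrt p * colSum B.transpose := by
    refine le_trans ?_ (OSLT hp0 hp1 B)
    apply EQ_mono hp0 hp1
    intro Q2 _
    apply cutNorm_le
    intro S T
    rw [bsum_maskC]
    exact le_csup (fun pr : Finset (Fin n) × Finset (Fin n) => |bsum B pr.1 (pr.2 ∩ Q2)|) (S, T)
  have hcol : EQ p univ (fun Q2 => colSum (maskC B Q2)) = p * colSum B :=
    EQ_colSum_maskC hp0 hp1 B
  have hsqp : 0 ≤ Real.sqrt p := Real.sqrt_nonneg p
  calc EQ p univ (fun Q2 => EQ p univ (fun Q1 => HH B Q1 Q2))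
      ≤ 2 * p * EQ p univ (fun Q2 => cutNorm (maskC B Q2))
        + 4 * Real.sqrt p * EQ p univ (fun Q2 => colSum (maskC B Q2)) := houter
    _ ≤ 2 * p * (2 * p * cutNorm B + 4 * Real.sqrt p * colSum B.transpose)
        + 4 * Real.sqrt p * (p * colSum B) := by
        refine add_le_add ?_ (le_of_eq (by rw [hcol]))
        exact mul_le_mul_of_nonneg_left hcut (by positivity)
    _ = 4 * p ^ 2 * cutNorm B + 8 * (p * Real.sqrt p) * colSum B.transpose
        + 4 * (p * Real.sqrt p) * colSum B := by ring

lemma decouple (hp0 : 0 ≤ p) (hp1 : p ≤ 1) (B : Matrix (Fin n) (Fin n) ℝ)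
    (hB : ∀ i, B i i = 0) :
    EQ p univ (fun Q => ⨆ pr : Finset (Fin n) × Finset (Fin n),
        |bsum B (pr.1 ∩ Q) (pr.2 ∩ Q)|)
      ≤ 4 * EQ p univ (fun Q2 => EQ p univ (fun Q1 => HH B Q1 Q2)) := by
  have hpt : ∀ Q ∈ (univ : Finset (Fin n)).powerset,
      (⨆ pr : Finset (Fin n) × Finset (Fin n), |bsum B (pr.1 ∩ Q) (pr.2 ∩ Q)|)
        ≤ 4 * Eg univ (fun I => HH B (Q ∩ I) (Q \ I)) := by
    intro Q _
    apply csup_le; intro pr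
    rw [decouple_bsum B hB (pr.1 ∩ Q) (pr.2 ∩ Q), abs_mul, abs_of_nonneg (by norm_num : (0:ℝ) ≤ 4)]
    apply mul_le_mul_of_nonneg_left ?_ (by norm_num : (0:ℝ) ≤ 4)
    refine (abs_Eg_le _ _).trans ?_
    apply Eg_mono
    intro I _
    have e1 : (pr.1 ∩ Q) ∩ I = pr.1 ∩ (Q ∩ I) := Finset.inter_assoc pr.1 Q I
    have e2 : (pr.2 ∩ Q) \ I = pr.2 ∩ (Q \ I) := by
      ext y
      simp only [Finset.mem_sdiff, Finset.mem_inter]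
      tauto
    rw [e1, e2]
    exact le_csup (fun pr : Finset (Fin n) × Finset (Fin n) =>
      |bsum B (pr.1 ∩ (Q ∩ I)) (pr.2 ∩ (Q \ I))|) (pr.1, pr.2)
  have hstep2 : EQ p univ (fun Q => ⨆ pr : Finset (Fin n) × Finset (Fin n),
      |bsum B (pr.1 ∩ Q) (pr.2 ∩ Q)|)
      ≤ 4 * EQ p univ (fun Q => Eg univ (fun I => HH B (Q ∩ I) (Q \ I))) := by
    calc EQ p univ (fun Q => ⨆ pr : Finset (Fin n) × Finset (Fin n),
        |bsum B (pr.1 ∩ Q) (pr.2 ∩ Q)|)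
        ≤ EQ p univ (fun Q => 4 * Eg univ (fun I => HH B (Q ∩ I) (Q \ I))) :=
          EQ_mono hp0 hp1 hpt
      _ = _ := EQ_smul _ _ _
  refine hstep2.trans ?_
  apply mul_le_mul_of_nonneg_left ?_ (by norm_num : (0:ℝ) ≤ 4)
  rw [← Eg_EQ_comm univ univ (fun I Q => HH B (Q ∩ I) (Q \ I))]
  apply Eg_le_const
  intro I _
  -- split Q into its parts inside and outside I
  have hu : (univ : Finset (Fin n)) \ I ∪ I = univ :=
    Finset.sdiff_union_of_subset (Finset.subset_univ I)
  have hdisj : Disjoint ((univ : Finset (Fin n)) \ I) I := Finset.sdiff_disjoint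
  have hsplit : EQ p univ (fun Q => HH B (Q ∩ I) (Q \ I))
      = EQ p (univ \ I) (fun Q2 => EQ p I (fun Q1 => HH B Q1 Q2)) := by
    conv_lhs => rw [← hu]
    rw [EQ_union hdisj]
    apply EQ_congr; intro Q2 hQ2
    apply EQ_congr; intro Q1 hQ1
    have hQ2s := Finset.mem_powerset.1 hQ2
    have hQ1s := Finset.mem_powerset.1 hQ1
    have e1 : (Q2 ∪ Q1) ∩ I = Q1 := by
      ext y
      simp only [Finset.mem_inter, Finset.mem_union]
      constructor
      · rintro ⟨hy1 | hy1, hy2⟩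
        · exact absurd hy2 (Finset.mem_sdiff.1 (hQ2s hy1)).2
        · exact hy1
      · intro hy
        exact ⟨Or.inr hy, hQ1s hy⟩
    have e2 : (Q2 ∪ Q1) \ I = Q2 := by
      ext y
      simp only [Finset.mem_sdiff, Finset.mem_union]
      constructor
      · rintro ⟨hy1 | hy1, hy2⟩
        · exact hy1
        · exact absurd (hQ1s hy1) hy2
      · intro hy
        exact ⟨Or.inl hy, (Finset.mem_sdiff.1 (hQ2s hy)).2⟩
    rw [e1, e2]
  rw [hsplit]
  calc EQ p (univ \ I) (fun Q2 => EQ p I (fun Q1 => HH B Q1 Q2))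
      ≤ EQ p (univ \ I) (fun Q2 => EQ p univ (fun Q1 => HH B Q1 Q2)) := by
        apply EQ_mono hp0 hp1
        intro Q2 _
        exact EQ_extend hp0 hp1 (fun Q1 => HH B Q1 Q2)
          (fun Q R hQR => HH_mono B hQR (Finset.Subset.refl Q2))
    _ ≤ EQ p univ (fun Q2 => EQ p univ (fun Q1 => HH B Q1 Q2)) := by
        apply EQ_extend hp0 hp1
        intro Q R hQR
        apply EQ_mono hp0 hp1
        intro Q1 _
        exact HH_mono B (Finset.Subset.refl Q1) hQR

end Decoup

/-! ### final assembly -/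
section Final
variable {n : ℕ} {p : ℝ}
open Finset

lemma restrict_bsum (A : Matrix (Fin n) (Fin n) ℝ) (Q S T : Finset (Fin n)) :
    bsum (restrict Q A) S T = bsum A (S ∩ Q) (T ∩ Q) := by
  symm
  unfold bsum
  rw [← Finset.filter_mem_eq_inter, Finset.sum_filter]
  apply Finset.sum_congr rfl; intro i _
  by_cases hi : i ∈ Q
  · rw [if_pos hi, ← Finset.sum_ite_mem]
    apply Finset.sum_congr rfl; intro j _
    by_cases hj : j ∈ Q <;> simp [_root_.restrict, Matrix.of_apply, hi, hj]
  · rw [if_neg hi]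
    symm
    apply Finset.sum_eq_zero
    intro j _
    simp [_root_.restrict, Matrix.of_apply, hi]

lemma bsum_split (A : Matrix (Fin n) (Fin n) ℝ) (S T : Finset (Fin n)) :
    bsum A S T = bsum (A - diagPart A) S T + bsum (diagPart A) S T := by
  unfold bsum
  rw [← Finset.sum_add_distrib]
  apply Finset.sum_congr rfl; intro i _
  rw [← Finset.sum_add_distrib]
  apply Finset.sum_congr rfl; intro j _
  rw [Matrix.sub_apply]
  ring

lemma diag_bsum (A : Matrix (Fin n) (Fin n) ℝ) (S T : Finset (Fin n)) :
    bsum (diagPart A) S T = ∑ i ∈ S ∩ T, A i i := by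
  unfold bsum diagPart
  rw [← Finset.sum_ite_mem]
  apply Finset.sum_congr rfl; intro i _
  simp only [Matrix.of_apply]
  rw [Finset.sum_ite_eq T i (fun j => A i j)]

lemma cut_restrict_le (A : Matrix (Fin n) (Fin n) ℝ) (Q : Finset (Fin n)) :
    cutNorm (restrict Q A)
      ≤ (⨆ pr : Finset (Fin n) × Finset (Fin n),
          |bsum (A - diagPart A) (pr.1 ∩ Q) (pr.2 ∩ Q)|) + ∑ i ∈ Q, |A i i| := by
  apply cutNorm_le
  intro S T
  rw [restrict_bsum, bsum_split A (S ∩ Q) (T ∩ Q)]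
  refine (abs_add_le _ _).trans (add_le_add ?_ ?_)
  · exact le_csup (fun pr : Finset (Fin n) × Finset (Fin n) =>
      |bsum (A - diagPart A) (pr.1 ∩ Q) (pr.2 ∩ Q)|) (S, T)
  · rw [diag_bsum]
    refine (Finset.abs_sum_le_sum_abs _ _).trans ?_
    apply Finset.sum_le_sum_of_subset_of_nonneg
    · intro x hx
      exact (Finset.mem_inter.1 (Finset.mem_inter.1 hx).1).2
    · intro i _ _
      exact abs_nonneg _

lemma diag_abs_le (A : Matrix (Fin n) (Fin n) ℝ) :
    ∑ i, |A i i| ≤ 2 * cutNorm (diagPart A) := by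
  set P := (univ : Finset (Fin n)).filter (fun i => 0 ≤ A i i) with hP
  set Pc := (univ : Finset (Fin n)).filter (fun i => ¬ 0 ≤ A i i) with hPc
  have h1 : ∑ i ∈ P, A i i ≤ cutNorm (diagPart A) := by
    have : bsum (diagPart A) P P = ∑ i ∈ P, A i i := by
      rw [diag_bsum, Finset.inter_self]
    rw [← this]
    exact (le_abs_self _).trans (abs_bsum_le_cutNorm _ P P)
  have h2 : -(∑ i ∈ Pc, A i i) ≤ cutNorm (diagPart A) := by
    have : bsum (diagPart A) Pc Pc = ∑ i ∈ Pc, A i i := by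
      rw [diag_bsum, Finset.inter_self]
    rw [← this]
    exact (neg_le_abs _).trans (abs_bsum_le_cutNorm _ Pc Pc)
  have hsum : ∑ i, |A i i| = (∑ i ∈ P, A i i) + -(∑ i ∈ Pc, A i i) := by
    rw [← Finset.sum_filter_add_sum_filter_not univ (fun i => 0 ≤ A i i) (fun i => |A i i|)]
    rw [← hP, ← hPc]
    congr 1
    · apply Finset.sum_congr rfl; intro i hi
      exact abs_of_nonneg (Finset.mem_filter.1 hi).2
    · rw [← Finset.sum_neg_distrib]
      apply Finset.sum_congr rfl; intro i hi
      exact abs_of_neg (lt_of_not_ge (Finset.mem_filter.1 hi).2)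
  rw [hsum]
  linarith

lemma sq_le_of_offdiag (A : Matrix (Fin n) (Fin n) ℝ) (i j : Fin n) :
    ((A - diagPart A) i j) ^ 2 ≤ (A i j) ^ 2 := by
  rw [Matrix.sub_apply]
  by_cases hij : i = j
  · subst hij
    have h1 : diagPart A i i = A i i := if_pos rfl
    rw [h1]
    simpa using sq_nonneg (A i i)
  · have h1 : diagPart A i j = 0 := if_neg hij
    rw [h1, sub_zero]

lemma colSum_offdiag_le (A : Matrix (Fin n) (Fin n) ℝ) :
    colSum (A - diagPart A) ≤ colSum A := by
  unfold colSum
  apply Finset.sum_le_sum; intro j _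
  apply Real.sqrt_le_sqrt
  exact Finset.sum_le_sum fun i _ => sq_le_of_offdiag A i j

lemma transpose_offdiag (A : Matrix (Fin n) (Fin n) ℝ) :
    (A - diagPart A).transpose = A.transpose - diagPart A.transpose := by
  ext i j
  rw [Matrix.transpose_apply, Matrix.sub_apply, Matrix.sub_apply, Matrix.transpose_apply]
  congr 1
  by_cases hij : i = j
  · subst hij
    have h1 : diagPart A i i = A i i := if_pos rfl
    have h2 : diagPart A.transpose i i = A.transpose i i := if_pos rfl
    rw [h1, h2, Matrix.transpose_apply]
  · have h1 : diagPart A j i = 0 := if_neg (fun h => hij h.symm)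
    have h2 : diagPart A.transpose i j = 0 := if_neg hij
    rw [h1, h2]

lemma ESub_eq (q : ℝ) (f : Finset (Fin n) → ℝ) : ESub q f = EQ q univ f := by
  unfold ESub EQ wt
  rw [Finset.powerset_univ]
  apply Finset.sum_congr rfl; intro Q _
  rw [Finset.card_univ, Fintype.card_fin]

end Final

end CND

open CND Finset in
/-- Cut-norm decay: for a random subset `Q` of expected cardinality `q`,
`E‖A|_{Q×Q}‖_C ≤ C[(q/n)²‖A−D(A)‖_C + (q/n)‖D(A)‖_C
  + (q/n)^{3/2}(‖A‖_Col + ‖Aᵀ‖_Col)]`. -/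
theorem cutNorm_decay :
    ∃ C : ℝ, 0 < C ∧
      ∀ (n : ℕ) (A : Matrix (Fin n) (Fin n) ℝ) (q : ℝ),
        0 < q → q ≤ n →
        ESub (q / n) (fun Q => cutNorm (restrict Q A))
          ≤ C * ((q / n) ^ 2 * cutNorm (A - diagPart A)
              + (q / n) * cutNorm (diagPart A)
              + (q / n) ^ ((3 : ℝ) / 2) * (colSum A + colSum A.transpose)) := by
  refine ⟨32, by norm_num, ?_⟩
  intro n A q hq hqn
  have hn : 0 < (n : ℝ) := lt_of_lt_of_le hq hqn
  set p : ℝ := q / n with hpdef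
  have hp0 : 0 ≤ p := div_nonneg hq.le hn.le
  have hppos : 0 < p := div_pos hq hn
  have hp1 : p ≤ 1 := (div_le_one hn).2 hqn
  set B : Matrix (Fin n) (Fin n) ℝ := A - diagPart A with hBdef
  have hB : ∀ i, B i i = 0 := by
    intro i
    rw [hBdef, Matrix.sub_apply]
    have : diagPart A i i = A i i := if_pos rfl
    rw [this, sub_self]
  set X : ℝ := cutNorm B with hX
  set Y : ℝ := cutNorm (diagPart A) with hY
  set CA : ℝ := colSum A with hCA
  set CT : ℝ := colSum A.transpose with hCT
  have hXn : 0 ≤ X := cutNorm_nonneg B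
  have hYn : 0 ≤ Y := cutNorm_nonneg _
  have hCAn : 0 ≤ CA := colSum_nonneg A
  have hCTn : 0 ≤ CT := colSum_nonneg _
  have hsq : 0 ≤ Real.sqrt p := Real.sqrt_nonneg p
  -- pointwise bound and expectation
  have step1 : ESub p (fun Q => cutNorm (restrict Q A))
      ≤ EQ p univ (fun Q => ⨆ pr : Finset (Fin n) × Finset (Fin n),
          |bsum B (pr.1 ∩ Q) (pr.2 ∩ Q)|)
        + EQ p univ (fun Q => ∑ i ∈ Q, |A i i|) := by
    rw [ESub_eq, ← EQ_add]
    apply EQ_mono hp0 hp1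
    intro Q _
    exact cut_restrict_le A Q
  have step2 : EQ p univ (fun Q => ⨆ pr : Finset (Fin n) × Finset (Fin n),
      |bsum B (pr.1 ∩ Q) (pr.2 ∩ Q)|)
      ≤ 4 * (4 * p ^ 2 * cutNorm B + 8 * (p * Real.sqrt p) * colSum B.transpose
        + 4 * (p * Real.sqrt p) * colSum B) := by
    refine (decouple hp0 hp1 B hB).trans ?_
    exact mul_le_mul_of_nonneg_left (ED2_bound hp0 hp1 B) (by norm_num)
  have step3 : EQ p univ (fun Q => ∑ i ∈ Q, |A i i|) ≤ 2 * p * Y := by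
    rw [EQ_sum_mem]
    have := diag_abs_le A
    calc p * ∑ i, |A i i| ≤ p * (2 * cutNorm (diagPart A)) :=
        mul_le_mul_of_nonneg_left this hp0
      _ = 2 * p * Y := by rw [hY]; ring
  have hcolB : colSum B ≤ CA := colSum_offdiag_le A
  have hcolBT : colSum B.transpose ≤ CT := by
    rw [hBdef, transpose_offdiag]
    exact colSum_offdiag_le A.transpose
  have hrpow : p ^ ((3 : ℝ) / 2) = p * Real.sqrt p := by
    rw [show (3 : ℝ) / 2 = 1 + 1 / 2 by norm_num, Real.rpow_add hppos, Real.rpow_one,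
      ← Real.sqrt_eq_rpow]
  calc ESub p (fun Q => cutNorm (restrict Q A))
      ≤ EQ p univ (fun Q => ⨆ pr : Finset (Fin n) × Finset (Fin n),
          |bsum B (pr.1 ∩ Q) (pr.2 ∩ Q)|)
        + EQ p univ (fun Q => ∑ i ∈ Q, |A i i|) := step1
    _ ≤ 4 * (4 * p ^ 2 * cutNorm B + 8 * (p * Real.sqrt p) * colSum B.transpose
        + 4 * (p * Real.sqrt p) * colSum B) + 2 * p * Y := add_le_add step2 step3
    _ ≤ 4 * (4 * p ^ 2 * X + 8 * (p * Real.sqrt p) * CT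
        + 4 * (p * Real.sqrt p) * CA) + 2 * p * Y := by
        have hps : 0 ≤ p * Real.sqrt p := mul_nonneg hp0 hsq
        have t1 : 8 * (p * Real.sqrt p) * colSum B.transpose
            ≤ 8 * (p * Real.sqrt p) * CT :=
          mul_le_mul_of_nonneg_left hcolBT (by positivity)
        have t2 : 4 * (p * Real.sqrt p) * colSum B ≤ 4 * (p * Real.sqrt p) * CA :=
          mul_le_mul_of_nonneg_left hcolB (by positivity)
        have : cutNorm B = X := rfl
        linarith
    _ ≤ 32 * (p ^ 2 * X + p * Y + (p * Real.sqrt p) * (CA + CT)) := by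
        have h1 : 0 ≤ p ^ 2 * X := by positivity
        have h2 : 0 ≤ p * Y := mul_nonneg hp0 hYn
        have h3 : 0 ≤ (p * Real.sqrt p) * CA := by positivity
        nlinarith
    _ = 32 * (p ^ 2 * X + p * Y + p ^ ((3 : ℝ) / 2) * (CA + CT)) := by rw [hrpow]
end
end

section
/- Lower bound for the ∞→1 norm of sign submatrices: for any n×n matrix A with entries ±1 and any subset Q ⊆ {1,…,n}, ‖A|_{Q×Q}‖_{∞→1} ≥ |Q|^{3/2}/√2. -/
open scoped Classical
noncomputable section

/-- ℓ∞ → ℓ₁ operator norm. -/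
def normInfOne {m n : ℕ} (A : Matrix (Fin m) (Fin n) ℝ) : ℝ :=
  sSup {t | ∃ x : Fin n → ℝ, (∀ j, |x j| ≤ 1) ∧ t = ∑ i, |A.mulVec x i|}

lemma L1 (m : ℕ) (hm : 1 ≤ m) : 16 ^ m ≤ 4 * m * m.centralBinom ^ 2 := by
  induction m with
  | zero => omega
  | succ m ih =>
    rcases Nat.eq_or_lt_of_le hm with h | h
    · simp [← h, Nat.centralBinom]
    · have hm1 : 1 ≤ m := by omega
      have ihm := ih hm1
      have h2 := Nat.succ_mul_centralBinom_succ m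
      have key : (m+1) * (4 * (m+1) * (m+1).centralBinom ^ 2)
          = 4 * (2*(2*m+1))^2 * m.centralBinom ^2 := by
        calc (m+1) * (4 * (m+1) * (m+1).centralBinom ^ 2)
            = 4 * ((m+1) * (m+1).centralBinom)^2 := by ring
          _ = 4 * (2*(2*m+1) * m.centralBinom)^2 := by rw [h2]
          _ = 4 * (2*(2*m+1))^2 * m.centralBinom ^2 := by ring
      have h3 : (m+1) * 16 ^ (m+1) ≤ (m+1) * (4 * (m+1) * (m+1).centralBinom ^ 2) := by
        rw [key]
        calc (m+1) * 16 ^ (m+1) = (16 * (m+1)) * 16 ^ m := by ring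
          _ ≤ (16 * (m+1)) * (4 * m * m.centralBinom ^ 2) := Nat.mul_le_mul_left _ ihm
          _ ≤ 4 * (2*(2*m+1))^2 * m.centralBinom ^2 := by nlinarith
      exact Nat.le_of_mul_le_mul_left h3 (by omega)


lemma telesc (k : ℕ) (hk : 1 ≤ k) : ∀ M : ℕ,
    ∑ t ∈ Finset.range (M+1), (k.choose t : ℝ) * ((k:ℝ) - 2*t)
      = k * ((k-1).choose M : ℝ) := by
  intro M
  induction M with
  | zero => simp [Nat.choose_zero_right]
  | succ M ih =>
    rw [Finset.sum_range_succ, ih]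
    have h1 : (k:ℝ) * ((k-1).choose M : ℝ) = (k.choose (M+1) : ℝ) * (M+1) := by
      have := Nat.add_one_mul_choose_eq (k-1) M
      rw [Nat.sub_add_cancel hk] at this
      exact_mod_cast congrArg (Nat.cast : ℕ → ℝ) this
    have h2 : (k:ℝ) * ((k-1).choose (M+1) : ℝ) = ((k:ℝ) - (M+1)) * (k.choose (M+1) : ℝ) := by
      by_cases hMk : M + 1 ≤ k
      · have := Nat.choose_mul_succ_eq (k-1) (M+1)
        rw [Nat.sub_add_cancel hk] at this
        have : ((k-1).choose (M+1) * k : ℝ) = (k.choose (M+1) : ℝ) * ((k:ℝ) - (M+1)) := by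
          rw [show ((k:ℝ) - (M+1)) = ((k - (M+1) : ℕ) : ℝ) by
            push_cast [Nat.cast_sub hMk]; ring]
          exact_mod_cast congrArg (Nat.cast : ℕ → ℝ) this
        linarith [this]
      · have e1 : k.choose (M+1) = 0 := Nat.choose_eq_zero_of_lt (by omega)
        have e2 : (k-1).choose (M+1) = 0 := Nat.choose_eq_zero_of_lt (by omega)
        simp [e1, e2]
    push_cast at h1 h2 ⊢
    nlinarith [h1, h2]

lemma g_ge' (k : ℕ) (hk : 1 ≤ k) :
    2 * k * (((k-1).choose (k/2) : ℕ) : ℝ)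
      ≤ ∑ t ∈ Finset.range (k+1), (k.choose t : ℝ) * |(k:ℝ) - 2*t| := by
  set M := k / 2 with hM
  have hMk : M + 1 ≤ k + 1 := by omega
  have hsplit : ∀ f : ℕ → ℝ,
      ∑ t ∈ Finset.range (k+1), f t
        = ∑ t ∈ Finset.range (M+1), f t + ∑ t ∈ Finset.Ico (M+1) (k+1), f t := by
    intro f
    rw [Finset.range_eq_Ico, ← Finset.sum_Ico_consecutive _ (Nat.zero_le _) hMk, ← Finset.range_eq_Ico]
  have hSk : ∑ t ∈ Finset.range (k+1), (k.choose t : ℝ) * ((k:ℝ) - 2*t) = 0 := by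
    rw [telesc k hk k, Nat.choose_eq_zero_of_lt (by omega)]
    simp
  have hIco : ∑ t ∈ Finset.Ico (M+1) (k+1), (k.choose t : ℝ) * (2*t - (k:ℝ))
      = k * ((k-1).choose M : ℝ) := by
    have h1 := hsplit (fun t => (k.choose t : ℝ) * ((k:ℝ) - 2*t))
    rw [hSk, telesc k hk M] at h1
    have : ∑ t ∈ Finset.Ico (M+1) (k+1), (k.choose t : ℝ) * (2*t - (k:ℝ))
        = - ∑ t ∈ Finset.Ico (M+1) (k+1), (k.choose t : ℝ) * ((k:ℝ) - 2*t) := by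
      rw [← Finset.sum_neg_distrib]
      exact Finset.sum_congr rfl fun t _ => by ring
    rw [this]
    linarith
  rw [hsplit (fun t => (k.choose t : ℝ) * |(k:ℝ) - 2*t|)]
  have hb1 : ∑ t ∈ Finset.range (M+1), (k.choose t : ℝ) * ((k:ℝ) - 2*t)
      ≤ ∑ t ∈ Finset.range (M+1), (k.choose t : ℝ) * |(k:ℝ) - 2*t| :=
    Finset.sum_le_sum fun t _ => by
      have := le_abs_self ((k:ℝ) - 2*t)
      have hc : (0:ℝ) ≤ (k.choose t : ℝ) := Nat.cast_nonneg _
      nlinarith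
  have hb2 : ∑ t ∈ Finset.Ico (M+1) (k+1), (k.choose t : ℝ) * (2*t - (k:ℝ))
      ≤ ∑ t ∈ Finset.Ico (M+1) (k+1), (k.choose t : ℝ) * |(k:ℝ) - 2*t| :=
    Finset.sum_le_sum fun t _ => by
      have := neg_abs_le ((k:ℝ) - 2*t)
      have hc : (0:ℝ) ≤ (k.choose t : ℝ) := Nat.cast_nonneg _
      nlinarith
  rw [telesc k hk M] at hb1
  rw [hIco] at hb2
  linarith

lemma nat_bound (k : ℕ) (hk : 1 ≤ k) :
    4 ^ k * k ≤ 8 * k ^ 2 * ((k-1).choose (k/2)) ^ 2 := by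
  rcases Nat.even_or_odd k with ⟨m, hm⟩ | ⟨m, hm⟩
  · have hm1 : 1 ≤ m := by omega
    subst hm
    obtain ⟨p, rfl⟩ : ∃ p, m = p + 1 := ⟨m-1, by omega⟩
    have hCB : (p+1).centralBinom = 2 * (((p+1) + (p+1) - 1).choose (((p+1)+(p+1))/2)) := by
      have hs : (2*p+1).choose p = (2*p+1).choose (p+1) := by
        rw [← Nat.choose_symm (show p+1 ≤ 2*p+1 by omega), show 2*p+1-(p+1) = p by omega]
      have e1 : (p+1) + (p+1) - 1 = 2*p+1 := by omega
      have e2 : ((p+1)+(p+1))/2 = p+1 := by omega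
      rw [e1, e2]
      calc (p+1).centralBinom = (2*p+1+1).choose (p+1) := by
            rw [Nat.centralBinom, show 2*(p+1) = 2*p+1+1 by omega]
        _ = (2*p+1).choose p + (2*p+1).choose (p+1) := Nat.choose_succ_succ _ _
        _ = 2 * ((2*p+1).choose (p+1)) := by rw [hs]; ring
    set m := p + 1 with hmp
    have := L1 m hm1
    rw [hCB] at this
    set C := (m + m - 1).choose ((m+m)/2)
    have h4 : (4:ℕ)^(m+m) = 16^m := by rw [show m+m = 2*m by omega, pow_mul]; norm_num
    calc 4 ^ (m+m) * (m+m) = (16 ^ m) * (2*m) := by rw [h4]; ring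
      _ ≤ (4 * m * (2*C)^2) * (2*m) := Nat.mul_le_mul_right _ this
      _ = 8 * (m+m)^2 * C^2 := by ring
  · subst hm
    have h2 : (2*m+1)/2 = m := by omega
    have h1 : (2*m+1) - 1 = 2*m := by omega
    rw [h1, h2]
    have key : 16 ^ m ≤ 2 * (2*m+1) * (m.centralBinom)^2 := by
      rcases Nat.eq_zero_or_pos m with h0 | hm1
      · subst h0; decide
      · calc 16 ^ m ≤ 4 * m * m.centralBinom ^ 2 := L1 m hm1
          _ ≤ 2 * (2*m+1) * m.centralBinom ^2 := Nat.mul_le_mul_right _ (by omega)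
    have hCB : (2*m).choose m = m.centralBinom := by rw [Nat.centralBinom, two_mul]
    rw [hCB]
    have h4b : (4:ℕ)^(2*m+1) = 16^m * 4 := by rw [pow_succ, pow_mul]; norm_num
    calc 4 ^ (2*m+1) * (2*m+1) = 16^m * (4*(2*m+1)) := by rw [h4b]; ring
      _ ≤ (2*(2*m+1) * m.centralBinom^2) * (4*(2*m+1)) := Nat.mul_le_mul_right _ key
      _ = 8 * (2*m+1)^2 * m.centralBinom^2 := by ring

lemma binom_bound (k : ℕ) :
    (2:ℝ)^k * Real.sqrt ((k:ℝ)/2) ≤ 2*k*(((k-1).choose (k/2) : ℕ) : ℝ) := by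
  rcases Nat.eq_zero_or_pos k with h0 | hk
  · simp [h0]
  have hC : (0:ℝ) ≤ 2*k*(((k-1).choose (k/2) : ℕ) : ℝ) := by positivity
  have hsq : (4:ℝ)^k * ((k:ℝ)/2) ≤ (2*k*(((k-1).choose (k/2) : ℕ) : ℝ))^2 := by
    have := nat_bound k hk
    have hcast : ((4 ^ k * k : ℕ) : ℝ) ≤ ((8 * k ^ 2 * ((k-1).choose (k/2)) ^ 2 : ℕ) : ℝ) :=
      Nat.cast_le.mpr this
    push_cast at hcast
    nlinarith [hcast]
  calc (2:ℝ)^k * Real.sqrt ((k:ℝ)/2)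
      = Real.sqrt ((4:ℝ)^k * ((k:ℝ)/2)) := by
        rw [Real.sqrt_mul (by positivity), show (4:ℝ)^k = ((2:ℝ)^k)^2 by
            rw [show (4:ℝ) = 2^2 by norm_num, ← pow_mul, ← pow_mul, Nat.mul_comm],
          Real.sqrt_sq (by positivity)]
    _ ≤ Real.sqrt ((2*k*(((k-1).choose (k/2) : ℕ) : ℝ))^2) := Real.sqrt_le_sqrt hsq
    _ = 2*k*(((k-1).choose (k/2) : ℕ) : ℝ) := Real.sqrt_sq hC

lemma row_sum {n : ℕ} (Q : Finset (Fin n)) (a : Fin n → ℝ)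
    (ha : ∀ j ∈ Q, a j = 1 ∨ a j = -1) :
    ∑ T ∈ Q.powerset, |∑ j ∈ Q, a j * (if j ∈ T then (1:ℝ) else -1)|
      = ∑ t ∈ Finset.range (Q.card + 1), (Q.card.choose t : ℝ) * |(Q.card:ℝ) - 2*t| := by
  set k := Q.card with hk
  set F : Finset (Fin n) → Finset (Fin n) :=
    fun T => Q.filter (fun j => a j * (if j ∈ T then (1:ℝ) else -1) = 1) with hF
  -- value of each row sum
  have hval : ∀ T ∈ Q.powerset, ∑ j ∈ Q, a j * (if j ∈ T then (1:ℝ) else -1)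
      = 2 * ((F T).card : ℝ) - k := by
    intro T _
    have hsplit := Finset.sum_filter_add_sum_filter_not Q
      (fun j => a j * (if j ∈ T then (1:ℝ) else -1) = 1)
      (fun j => a j * (if j ∈ T then (1:ℝ) else -1))
    have h1 : ∑ j ∈ Q.filter (fun j => a j * (if j ∈ T then (1:ℝ) else -1) = 1),
        a j * (if j ∈ T then (1:ℝ) else -1) = ((F T).card : ℝ) := by
      rw [Finset.sum_congr rfl (fun j hj => (Finset.mem_filter.mp hj).2)]
      simp [hF]
    have h2 : ∑ j ∈ Q.filter (fun j => ¬ (a j * (if j ∈ T then (1:ℝ) else -1) = 1)),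
        a j * (if j ∈ T then (1:ℝ) else -1)
        = - ((Q.filter (fun j => ¬ (a j * (if j ∈ T then (1:ℝ) else -1) = 1))).card : ℝ) := by
      have h2' : ∀ j ∈ Q.filter (fun j => ¬ (a j * (if j ∈ T then (1:ℝ) else -1) = 1)),
          a j * (if j ∈ T then (1:ℝ) else -1) = -1 := by
        intro j hj
        have hj' := Finset.mem_filter.mp hj
        rcases ha j hj'.1 with h | h
        · by_cases hT : j ∈ T
          · exact absurd (by simp [h, hT] : (a j * if j ∈ T then (1:ℝ) else -1) = 1) hj'.2
          · simp [h, hT]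
        · by_cases hT : j ∈ T
          · simp [h, hT]
          · exact absurd (by simp [h, hT] : (a j * if j ∈ T then (1:ℝ) else -1) = 1) hj'.2
      rw [Finset.sum_congr rfl h2', Finset.sum_const]
      simp
    have hcard : (F T).card
        + (Q.filter (fun j => ¬ (a j * (if j ∈ T then (1:ℝ) else -1) = 1))).card = k :=
      Finset.card_filter_add_card_filter_not _
    rw [h1, h2] at hsplit
    rw [← hsplit]
    have := congrArg (Nat.cast : ℕ → ℝ) hcard
    push_cast at this
    linarith
  -- rewrite sum, then reindex by the involution F
  have hinv : ∀ T ∈ Q.powerset, F (F T) = T := by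
    intro T hT
    have hTQ := Finset.mem_powerset.mp hT
    ext j
    by_cases hjQ : j ∈ Q
    · rcases ha j hjQ with h | h
      · by_cases hT' : j ∈ T <;> simp [hF, hjQ, h, hT'] <;> norm_num
      · by_cases hT' : j ∈ T <;> simp [hF, hjQ, h, hT'] <;> norm_num
    · simp [hF, hjQ]
      exact fun hjT => hjQ (hTQ hjT)
  have hmaps : ∀ T ∈ Q.powerset, F T ∈ Q.powerset := by
    intro T _
    exact Finset.mem_powerset.mpr (Finset.filter_subset _ _)
  calc ∑ T ∈ Q.powerset, |∑ j ∈ Q, a j * (if j ∈ T then (1:ℝ) else -1)|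
      = ∑ T ∈ Q.powerset, |2 * ((F T).card : ℝ) - k| :=
        Finset.sum_congr rfl fun T hT => by rw [hval T hT]
    _ = ∑ T ∈ Q.powerset, |2 * (T.card : ℝ) - k| := by
        refine Finset.sum_nbij' F F hmaps hmaps hinv hinv ?_
        intro T hT
        rfl
    _ = ∑ t ∈ Finset.range (k + 1), (k.choose t : ℝ) * |(k:ℝ) - 2*t| := by
        rw [Finset.sum_powerset Q (fun T => |2 * (T.card : ℝ) - (k:ℝ)|)]
        refine Finset.sum_congr rfl fun t ht => ?_
        rw [show (fun T : Finset (Fin n) => |2 * (T.card : ℝ) - (k:ℝ)|)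
          = (fun T : Finset (Fin n) => (fun s : ℕ => |2 * (s : ℝ) - (k:ℝ)|) T.card) from rfl]
        rw [Finset.sum_powersetCard t Q (fun s : ℕ => |2 * (s : ℝ) - (k:ℝ)|)]
        rw [abs_sub_comm]
        push_cast
        ring_nf
        rw [← hk]

/-- For any `±1` matrix `A` and any `Q ⊆ {1,…,n}`,
`‖A|_{Q×Q}‖_{∞→1} ≥ |Q|^{3/2}/√2`. -/
theorem sign_submatrix_lower {n : ℕ} (A : Matrix (Fin n) (Fin n) ℝ)
    (hA : ∀ i j, A i j = 1 ∨ A i j = -1) (Q : Finset (Fin n)) :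
    (Q.card : ℝ) ^ ((3 : ℝ) / 2) / Real.sqrt 2 ≤ normInfOne (restrict Q A) := by
  set B := restrict Q A with hB
  set S := {t | ∃ x : Fin n → ℝ, (∀ j, |x j| ≤ 1) ∧ t = ∑ i, |B.mulVec x i|} with hS
  have hbdd : BddAbove S := by
    refine ⟨(n:ℝ) * n, ?_⟩
    rintro t ⟨x, hx, rfl⟩
    have hBij : ∀ i j, |B i j| ≤ 1 := by
      intro i j
      rw [hB, restrict]
      by_cases h : i ∈ Q ∧ j ∈ Q
      · rcases hA i j with h' | h' <;> simp [h, h']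
      · simp [h]
    calc ∑ i, |B.mulVec x i| ≤ ∑ i : Fin n, ∑ j : Fin n, (1:ℝ) := by
          refine Finset.sum_le_sum fun i _ => ?_
          calc |B.mulVec x i| ≤ ∑ j, |B i j * x j| := by
                rw [Matrix.mulVec, dotProduct]
                exact Finset.abs_sum_le_sum_abs _ _
            _ ≤ ∑ j : Fin n, (1:ℝ) := Finset.sum_le_sum fun j _ => by
                rw [abs_mul]
                calc |B i j| * |x j| ≤ 1 * 1 :=
                      mul_le_mul (hBij i j) (hx j) (abs_nonneg _) zero_le_one
                  _ = 1 := by norm_num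
      _ = (n:ℝ) * n := by simp [mul_comm]
  set k := Q.card with hk
  rcases Nat.eq_zero_or_pos k with hk0 | hk1
  · have h0 : (0:ℝ) ∈ S := ⟨0, by simp, by simp [Matrix.mulVec]⟩
    have := le_csSup hbdd h0
    rw [hk0]
    show _ ≤ sSup S
    simpa [Real.zero_rpow (by norm_num : ((3:ℝ)/2) ≠ 0)] using this
  -- main case
  have hg : (2:ℝ)^k * Real.sqrt ((k:ℝ)/2)
      ≤ ∑ t ∈ Finset.range (k+1), (k.choose t : ℝ) * |(k:ℝ) - 2*t| :=
    le_trans (binom_bound k) (g_ge' k hk1)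
  have htot : ∑ T ∈ Q.powerset, ∑ i ∈ Q, |∑ j ∈ Q, A i j * (if j ∈ T then (1:ℝ) else -1)|
      = (k:ℝ) * ∑ t ∈ Finset.range (k+1), (k.choose t : ℝ) * |(k:ℝ) - 2*t| := by
    rw [Finset.sum_comm]
    rw [Finset.sum_congr rfl (fun i _ => row_sum Q (A i) (fun j _ => hA i j))]
    rw [Finset.sum_const, nsmul_eq_mul]
  have hexists : ∃ T ∈ Q.powerset,
      (k:ℝ) * Real.sqrt ((k:ℝ)/2) ≤ ∑ i ∈ Q, |∑ j ∈ Q, A i j * (if j ∈ T then (1:ℝ) else -1)| := by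
    by_contra hcon
    push_neg at hcon
    have hlt : ∑ T ∈ Q.powerset, ∑ i ∈ Q, |∑ j ∈ Q, A i j * (if j ∈ T then (1:ℝ) else -1)|
        < ∑ T ∈ Q.powerset, (k:ℝ) * Real.sqrt ((k:ℝ)/2) :=
      Finset.sum_lt_sum_of_nonempty ⟨∅, Finset.empty_mem_powerset Q⟩ hcon
    rw [Finset.sum_const, Finset.card_powerset, nsmul_eq_mul, htot] at hlt
    push_cast at hlt
    have hknn : (0:ℝ) ≤ (k:ℝ) := Nat.cast_nonneg _
    nlinarith [hg, hlt]
  obtain ⟨T, hT, hTle⟩ := hexists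
  set x : Fin n → ℝ := fun j => if j ∈ T then (1:ℝ) else -1 with hx
  have hx1 : ∀ j, |x j| ≤ 1 := by
    intro j; rw [hx]; by_cases h : j ∈ T <;> simp [h]
  have hmem : (∑ i, |B.mulVec x i|) ∈ S := ⟨x, hx1, rfl⟩
  have hrow : ∀ i ∈ Q, B.mulVec x i = ∑ j ∈ Q, A i j * x j := by
    intro i hi
    rw [Matrix.mulVec, dotProduct]
    have hterm : ∀ j, (B i j) * x j = if j ∈ Q then A i j * x j else 0 := fun j => by
      rw [hB, restrict, Matrix.of_apply]
      by_cases hj : j ∈ Q <;> simp [hi, hj]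
    rw [Finset.sum_congr rfl fun j _ => hterm j, Finset.sum_ite_mem, Finset.univ_inter]
  have hged : (k:ℝ) * Real.sqrt ((k:ℝ)/2) ≤ ∑ i, |B.mulVec x i| := by
    refine le_trans ?_ (Finset.sum_le_sum_of_subset_of_nonneg (Finset.subset_univ Q)
      (fun i _ _ => abs_nonneg _))
    calc (k:ℝ) * Real.sqrt ((k:ℝ)/2)
        ≤ ∑ i ∈ Q, |∑ j ∈ Q, A i j * (if j ∈ T then (1:ℝ) else -1)| := hTle
      _ = ∑ i ∈ Q, |B.mulVec x i| :=
        Finset.sum_congr rfl fun i hi => by rw [hrow i hi]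
  have hrw : (k : ℝ) ^ ((3 : ℝ) / 2) / Real.sqrt 2 = (k:ℝ) * Real.sqrt ((k:ℝ)/2) := by
    have hkpos : (0:ℝ) < k := by exact_mod_cast hk1
    rw [show ((3:ℝ)/2) = 1 + 1/2 by norm_num, Real.rpow_add hkpos, Real.rpow_one,
      ← Real.sqrt_eq_rpow, Real.sqrt_div hkpos.le]
    ring
  rw [hrw]
  exact le_trans hged (le_csSup hbdd hmem)
end
end
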